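/- arXiv:1404.7536 — 6 statements merged into one kernel-verified Lean document; each statement's English description precedes it below -/
import Mathlib

section
/- Suppose that for every z ∈ F the stochastic quasi-Fejér inequality E[φ(‖x_{n+1} − z‖) | 𝓧_n] + ϑ_n(z) ≤ (1 + χ_n(z)) φ(‖x_n − z‖) + η_n(z) holds P-a.s. for every n ∈ ℕ. Then for every z ∈ F one has Σ_{n∈ℕ} ϑ_n(z) < ∞ P-almost surely. -/
open MeasureTheory Filter Topology
open scoped RealInnerProductSpace

open scoped ENNReal NNReal

theorem quasiFejer_aux_bounded {Ω : Type*} {m0 : MeasurableSpace Ω} (P : Measure Ω)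
    [IsProbabilityMeasure P] (ℱ : Filtration ℕ m0)
    (f χ ϑ η : ℕ → Ω → ℝ) (c : ℝ)
    (hfnonneg : ∀ n ω, 0 ≤ f n ω)
    (hχnonneg : ∀ n ω, 0 ≤ χ n ω) (hϑnonneg : ∀ n ω, 0 ≤ ϑ n ω)
    (hηnonneg : ∀ n ω, 0 ≤ η n ω)
    (hfmeas : ∀ n, Measurable[ℱ n] (f n))
    (hχmeas : ∀ n, Measurable[ℱ n] (χ n)) (hϑmeas : ∀ n, Measurable[ℱ n] (ϑ n))
    (hηmeas : ∀ n, Measurable[ℱ n] (η n))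
    (hfint : ∀ n, Integrable (f n) P)
    (hbound : ∀ N ω, (∑ k ∈ Finset.range N, (χ k ω + η k ω)) ≤ c)
    (hineq : ∀ᵐ ω ∂P, ∀ n, (P[f (n+1) | ℱ n]) ω + ϑ n ω ≤ (1 + χ n ω) * f n ω + η n ω) :
    ∀ᵐ ω ∂P, Summable fun n => ϑ n ω := by
  classical
  -- replace c by max c 0
  set c' : ℝ := max c 0 with hc'def
  have hc'0 : 0 ≤ c' := le_max_right _ _
  have hbound' : ∀ N ω, (∑ k ∈ Finset.range N, (χ k ω + η k ω)) ≤ c' :=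
    fun N ω => (hbound N ω).trans (le_max_left _ _)
  -- single term bounds
  have hχle : ∀ n ω, χ n ω ≤ c' := by
    intro n ω
    refine le_trans ?_ (hbound' (n+1) ω)
    calc χ n ω ≤ χ n ω + η n ω := by linarith [hηnonneg n ω]
      _ ≤ _ := Finset.single_le_sum (f := fun k => χ k ω + η k ω)
          (fun i _ => add_nonneg (hχnonneg i ω) (hηnonneg i ω)) (Finset.self_mem_range_succ n)
  have hηle : ∀ n ω, η n ω ≤ c' := by
    intro n ω
    refine le_trans ?_ (hbound' (n+1) ω)
    calc η n ω ≤ χ n ω + η n ω := by linarith [hχnonneg n ω]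
      _ ≤ _ := Finset.single_le_sum (f := fun k => χ k ω + η k ω)
          (fun i _ => add_nonneg (hχnonneg i ω) (hηnonneg i ω)) (Finset.self_mem_range_succ n)
  -- products
  set A : ℕ → Ω → ℝ := fun n ω => ∏ k ∈ Finset.range n, (1 + χ k ω) with hAdef
  set p : ℕ → Ω → ℝ := fun n ω => (A n ω)⁻¹ with hpdef
  have hA_pos : ∀ n ω, 0 < A n ω := by
    intro n ω; simp only [hAdef]
    exact Finset.prod_pos fun i _ => by linarith [hχnonneg i ω]
  have hA_one_le : ∀ n ω, 1 ≤ A n ω := by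
    intro n ω; simp only [hAdef]
    calc (1:ℝ) = ∏ k ∈ Finset.range n, 1 := by simp
      _ ≤ ∏ k ∈ Finset.range n, (1 + χ k ω) :=
          Finset.prod_le_prod (fun i _ => zero_le_one) (fun i _ => by linarith [hχnonneg i ω])
  have hA_le : ∀ n ω, A n ω ≤ Real.exp c' := by
    intro n ω; simp only [hAdef]
    calc (∏ k ∈ Finset.range n, (1 + χ k ω)) ≤ ∏ k ∈ Finset.range n, Real.exp (χ k ω) :=
          Finset.prod_le_prod (fun i _ => by linarith [hχnonneg i ω])
            (fun i _ => by rw [add_comm]; exact Real.add_one_le_exp _)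
      _ = Real.exp (∑ k ∈ Finset.range n, χ k ω) := (Real.exp_sum _ _).symm
      _ ≤ Real.exp c' := by
          apply Real.exp_le_exp.2
          refine le_trans ?_ (hbound' n ω)
          exact Finset.sum_le_sum fun i _ => by linarith [hηnonneg i ω]
  have hp_pos : ∀ n ω, 0 < p n ω := fun n ω => inv_pos.2 (hA_pos n ω)
  have hp_le_one : ∀ n ω, p n ω ≤ 1 := fun n ω => inv_le_one_of_one_le₀ (hA_one_le n ω)
  have hp_ge : ∀ n ω, Real.exp (-c') ≤ p n ω := by
    intro n ω
    rw [Real.exp_neg]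
    exact inv_anti₀ (hA_pos n ω) (hA_le n ω)
  have hp_rec : ∀ n ω, p (n+1) ω * (1 + χ n ω) = p n ω := by
    intro n ω
    have h1 : (0:ℝ) < 1 + χ n ω := by linarith [hχnonneg n ω]
    simp only [hpdef, hAdef, Finset.prod_range_succ]
    rw [mul_inv, mul_assoc, inv_mul_cancel₀ h1.ne', mul_one]
  -- measurability
  have hA_meas : ∀ n k, n ≤ k + 1 → Measurable[ℱ k] (A n) := by
    intro n k hnk
    simp only [hAdef]
    apply Finset.measurable_prod
    intro i hi
    have hik : i ≤ k := by
      have := Finset.mem_range.mp hi; omega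
    exact (measurable_const.add ((hχmeas i).mono (ℱ.mono hik) le_rfl))
  have hp_meas : ∀ n k, n ≤ k + 1 → Measurable[ℱ k] (p n) := fun n k h =>
    (hA_meas n k h).inv
  have hη_int : ∀ n, Integrable (η n) P := by
    intro n
    refine Integrable.mono' (integrable_const c') ?_ (ae_of_all _ fun ω => ?_)
    · exact ((hηmeas n).mono (ℱ.le n) le_rfl).aestronglyMeasurable
    · rw [Real.norm_eq_abs, abs_of_nonneg (hηnonneg n ω)]; exact hηle n ω
  -- integrability of ϑ
  have hcondnn : ∀ n, 0 ≤ᵐ[P] P[f (n+1) | ℱ n] := fun n =>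
    condExp_nonneg (ae_of_all _ (hfnonneg (n+1)))
  have hϑ_int : ∀ n, Integrable (ϑ n) P := by
    intro n
    refine Integrable.mono' (((hfint n).const_mul (1 + c')).add (integrable_const c'))
      ((hϑmeas n).mono (ℱ.le n) le_rfl).aestronglyMeasurable ?_
    filter_upwards [hineq, hcondnn n] with ω hω hnn
    simp only [Pi.zero_apply] at hnn
    rw [Real.norm_eq_abs, abs_of_nonneg (hϑnonneg n ω)]
    have h := hω n
    have : ϑ n ω ≤ (1 + χ n ω) * f n ω + η n ω := by linarith
    calc ϑ n ω ≤ (1 + χ n ω) * f n ω + η n ω := this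
      _ ≤ (1 + c') * f n ω + c' := by
          have := mul_le_mul_of_nonneg_right (by linarith [hχle n ω] :
            (1 + χ n ω) ≤ 1 + c') (hfnonneg n ω)
          linarith [hηle n ω]
  -- the processes
  set g : ℕ → Ω → ℝ := fun n => p n * f n with hgdef
  set D : ℕ → Ω → ℝ := fun n ω => (∑ k ∈ Finset.range n, p (k+1) ω * ϑ k ω)
    - ∑ k ∈ Finset.range n, p (k+1) ω * η k ω with hDdef
  set V : ℕ → Ω → ℝ := fun n => g n + D n with hVdef
  have hgval : ∀ n ω, g n ω = p n ω * f n ω := fun n ω => rfl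
  have hVval : ∀ n ω, V n ω = p n ω * f n ω + ((∑ k ∈ Finset.range n, p (k+1) ω * ϑ k ω)
      - ∑ k ∈ Finset.range n, p (k+1) ω * η k ω) := fun n ω => rfl
  have hg_meas : ∀ n, Measurable[ℱ n] (g n) := fun n =>
    (hp_meas n n n.le_succ).mul (hfmeas n)
  have hD_meas : ∀ n, Measurable[ℱ n] (D n) := by
    intro n
    simp only [hDdef]
    apply Measurable.sub
    · apply Finset.measurable_sum
      intro k hk
      have hkn : k + 1 ≤ n + 1 := by have := Finset.mem_range.mp hk; omega
      exact (hp_meas (k+1) n hkn).mul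
        ((hϑmeas k).mono (ℱ.mono (by omega : k ≤ n)) le_rfl)
    · apply Finset.measurable_sum
      intro k hk
      have hkn : k + 1 ≤ n + 1 := by have := Finset.mem_range.mp hk; omega
      exact (hp_meas (k+1) n hkn).mul
        ((hηmeas k).mono (ℱ.mono (by omega : k ≤ n)) le_rfl)
  have hV_meas : ∀ n, Measurable[ℱ n] (V n) := fun n => (hg_meas n).add (hD_meas n)
  -- integrability
  have hg_int : ∀ n, Integrable (g n) P := by
    intro n
    refine Integrable.mono' (hfint n)
      ((hg_meas n).mono (ℱ.le n) le_rfl).aestronglyMeasurable (ae_of_all _ fun ω => ?_)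
    rw [hgval, Real.norm_eq_abs, abs_of_nonneg (mul_nonneg (hp_pos n ω).le (hfnonneg n ω))]
    exact mul_le_of_le_one_left (hfnonneg n ω) (hp_le_one n ω)
  have hpϑ_int : ∀ k, Integrable (fun ω => p (k+1) ω * ϑ k ω) P := by
    intro k
    refine Integrable.mono' (hϑ_int k)
      (((hp_meas (k+1) (k+1) (k+1).le_succ).mono (ℱ.le (k+1)) le_rfl).mul
        ((hϑmeas k).mono (ℱ.le k) le_rfl)).aestronglyMeasurable (ae_of_all _ fun ω => ?_)
    rw [Real.norm_eq_abs, abs_of_nonneg (mul_nonneg (hp_pos _ ω).le (hϑnonneg k ω))]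
    exact mul_le_of_le_one_left (hϑnonneg k ω) (hp_le_one _ ω)
  have hpη_int : ∀ k, Integrable (fun ω => p (k+1) ω * η k ω) P := by
    intro k
    refine Integrable.mono' (hη_int k)
      (((hp_meas (k+1) (k+1) (k+1).le_succ).mono (ℱ.le (k+1)) le_rfl).mul
        ((hηmeas k).mono (ℱ.le k) le_rfl)).aestronglyMeasurable (ae_of_all _ fun ω => ?_)
    rw [Real.norm_eq_abs, abs_of_nonneg (mul_nonneg (hp_pos _ ω).le (hηnonneg k ω))]
    exact mul_le_of_le_one_left (hηnonneg k ω) (hp_le_one _ ω)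
  have hD_int : ∀ n, Integrable (D n) P := by
    intro n
    simp only [hDdef]
    exact (integrable_finset_sum _ fun k _ => hpϑ_int k).sub
      (integrable_finset_sum _ fun k _ => hpη_int k)
  have hV_int : ∀ n, Integrable (V n) P := fun n => (hg_int n).add (hD_int n)
  -- supermartingale step
  have hstep : ∀ n, P[V (n+1) | ℱ n] ≤ᵐ[P] V n := by
    intro n
    have h1 : P[V (n+1) | ℱ n] =ᵐ[P] P[g (n+1) | ℱ n] + P[D (n+1) | ℱ n] :=
      condExp_add (hg_int (n+1)) (hD_int (n+1)) _
    have h2 : P[D (n+1) | ℱ n] = D (n+1) := by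
      refine condExp_of_stronglyMeasurable (ℱ.le n) ?_ (hD_int (n+1))
      refine Measurable.stronglyMeasurable ?_
      simp only [hDdef]
      apply Measurable.sub
      · apply Finset.measurable_sum
        intro k hk
        have hkmem := Finset.mem_range.mp hk
        exact (hp_meas (k+1) n (by omega)).mul
          ((hϑmeas k).mono (ℱ.mono (by omega : k ≤ n)) le_rfl)
      · apply Finset.measurable_sum
        intro k hk
        have hkmem := Finset.mem_range.mp hk
        exact (hp_meas (k+1) n (by omega)).mul
          ((hηmeas k).mono (ℱ.mono (by omega : k ≤ n)) le_rfl)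
    have h3 : P[g (n+1) | ℱ n] =ᵐ[P] p (n+1) * P[f (n+1) | ℱ n] := by
      have := condExp_mul_of_stronglyMeasurable_left
        ((hp_meas (n+1) n le_rfl).stronglyMeasurable)
        (μ := P) (g := f (n+1)) ?_ (hfint (n+1))
      · exact this
      · exact hg_int (n+1)
    filter_upwards [h1, h3, hineq] with ω hω1 hω3 hω
    rw [hω1]
    simp only [Pi.add_apply, h2]
    rw [hω3]
    simp only [Pi.mul_apply]
    -- pointwise arithmetic
    have hE := hω n
    set E : ℝ := (P[f (n+1) | ℱ n]) ω with hEdef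
    have hrec := hp_rec n ω
    have hppos := (hp_pos (n+1) ω).le
    have key : p (n+1) ω * (E + ϑ n ω) ≤ p (n+1) ω * ((1 + χ n ω) * f n ω + η n ω) :=
      mul_le_mul_of_nonneg_left hE hppos
    have hDsucc : D (n+1) ω = D n ω + p (n+1) ω * ϑ n ω - p (n+1) ω * η n ω := by
      simp only [hDdef, Finset.sum_range_succ]; ring
    have hgoal : p (n+1) ω * ((1 + χ n ω) * f n ω + η n ω)
        = p n ω * f n ω + p (n+1) ω * η n ω := by
      rw [← hrec]; ring
    have hVn : V n ω = p n ω * f n ω + D n ω := rfl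
    rw [hDsucc, hVn]
    linarith [key, hgoal]
  -- supermartingale
  have hadp : StronglyAdapted ℱ V := fun n => (hV_meas n).stronglyMeasurable
  have hsuper : Supermartingale V ℱ P := supermartingale_nat hadp hV_int hstep
  -- lower bound and L¹ bound
  have hSη_le : ∀ n ω, (∑ k ∈ Finset.range n, p (k+1) ω * η k ω) ≤ c' := by
    intro n ω
    refine le_trans ?_ (hbound' n ω)
    apply Finset.sum_le_sum
    intro k _
    calc p (k+1) ω * η k ω ≤ η k ω :=
          mul_le_of_le_one_left (hηnonneg k ω) (hp_le_one _ ω)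
      _ ≤ χ k ω + η k ω := by linarith [hχnonneg k ω]
  have hSϑ_nonneg : ∀ n ω, 0 ≤ ∑ k ∈ Finset.range n, p (k+1) ω * ϑ k ω := fun n ω =>
    Finset.sum_nonneg fun k _ => mul_nonneg (hp_pos _ ω).le (hϑnonneg k ω)
  have hVlb : ∀ n ω, -c' ≤ V n ω := by
    intro n ω
    rw [hVval]
    have h1 := mul_nonneg (hp_pos n ω).le (hfnonneg n ω)
    linarith [hSη_le n ω, hSϑ_nonneg n ω]
  have hEVle : ∀ n, ∫ ω, V n ω ∂P ≤ ∫ ω, V 0 ω ∂P := by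
    intro n
    have h := hsuper.condExp_ae_le (Nat.zero_le n)
    calc ∫ ω, V n ω ∂P = ∫ ω, (P[V n|ℱ 0]) ω ∂P :=
          (integral_condExp (ℱ.le 0)).symm
      _ ≤ ∫ ω, V 0 ω ∂P := integral_mono_ae integrable_condExp (hV_int 0) h
  set B : ℝ := ∫ ω, V 0 ω ∂P with hBdef
  have habs : ∀ n ω, |V n ω| ≤ V n ω + 2*c' := by
    intro n ω
    rcases abs_cases (V n ω) with ⟨h, _⟩ | ⟨h, _⟩
    · rw [h]; linarith
    · rw [h]; linarith [hVlb n ω]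
  have hR : ∀ n, ∫ ω, ‖V n ω‖ ∂P ≤ B + 2*c' := by
    intro n
    have h1 : ∫ ω, ‖V n ω‖ ∂P ≤ ∫ ω, (V n ω + 2*c') ∂P := by
      refine integral_mono_ae ((hV_int n).norm) ((hV_int n).add (integrable_const _))
        (ae_of_all _ fun ω => ?_)
      simpa [Real.norm_eq_abs] using habs n ω
    rw [integral_add (hV_int n) (integrable_const _), integral_const] at h1
    simp only [probReal_univ, measure_univ, ENNReal.toReal_one, one_smul, smul_eq_mul, one_mul] at h1
    linarith [hEVle n]
  have hbdd : ∀ n, eLpNorm ((-V) n) 1 P ≤ ((B + 2*c').toNNReal : ℝ≥0∞) := by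
    intro n
    rw [show (-V) n = -(V n) from rfl, eLpNorm_neg, eLpNorm_one_eq_lintegral_enorm,
      ← ofReal_integral_norm_eq_lintegral_enorm (hV_int n)]
    exact le_trans (ENNReal.ofReal_le_ofReal (hR n)) (le_of_eq rfl)
  have hconv := hsuper.neg.exists_ae_tendsto_of_bdd hbdd
  -- conclusion
  filter_upwards [hconv] with ω hc
  obtain ⟨l, hl⟩ := hc
  have hl' : Tendsto (fun n => V n ω) atTop (𝓝 (-l)) := by
    have := hl.neg
    simpa using this
  obtain ⟨M, hM⟩ := hl'.bddAbove_range
  have hVM : ∀ n, V n ω ≤ M := fun n => hM ⟨n, rfl⟩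
  have hsum_le : ∀ N, (∑ k ∈ Finset.range N, p (k+1) ω * ϑ k ω) ≤ M + c' := by
    intro N
    have h := hVM N
    rw [hVval] at h
    have h1 := mul_nonneg (hp_pos N ω).le (hfnonneg N ω)
    linarith [hSη_le N ω]
  have hsummable1 : Summable (fun k => p (k+1) ω * ϑ k ω) :=
    summable_of_sum_range_le (fun k => mul_nonneg (hp_pos _ ω).le (hϑnonneg k ω)) hsum_le
  refine Summable.of_nonneg_of_le (fun k => hϑnonneg k ω) (fun k => ?_)
    (hsummable1.mul_left (Real.exp c'))
  have h1 : Real.exp (-c') * ϑ k ω ≤ p (k+1) ω * ϑ k ω :=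
    mul_le_mul_of_nonneg_right (hp_ge (k+1) ω) (hϑnonneg k ω)
  calc ϑ k ω = Real.exp c' * (Real.exp (-c') * ϑ k ω) := by
        rw [← mul_assoc, ← Real.exp_add]; simp
    _ ≤ Real.exp c' * (p (k+1) ω * ϑ k ω) :=
        mul_le_mul_of_nonneg_left h1 (Real.exp_pos _).le

theorem quasiFejer_aux {Ω : Type*} {m0 : MeasurableSpace Ω} (P : Measure Ω)
    [IsProbabilityMeasure P] (ℱ : Filtration ℕ m0)
    (f χ ϑ η : ℕ → Ω → ℝ)
    (hfnonneg : ∀ n ω, 0 ≤ f n ω)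
    (hχnonneg : ∀ n ω, 0 ≤ χ n ω) (hϑnonneg : ∀ n ω, 0 ≤ ϑ n ω)
    (hηnonneg : ∀ n ω, 0 ≤ η n ω)
    (hfmeas : ∀ n, Measurable[ℱ n] (f n))
    (hχmeas : ∀ n, Measurable[ℱ n] (χ n)) (hϑmeas : ∀ n, Measurable[ℱ n] (ϑ n))
    (hηmeas : ∀ n, Measurable[ℱ n] (η n))
    (hfint : ∀ n, Integrable (f n) P)
    (hχsum : ∀ᵐ ω ∂P, Summable fun n => χ n ω)
    (hηsum : ∀ᵐ ω ∂P, Summable fun n => η n ω)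
    (hineq : ∀ᵐ ω ∂P, ∀ n, (P[f (n+1) | ℱ n]) ω + ϑ n ω ≤ (1 + χ n ω) * f n ω + η n ω) :
    ∀ᵐ ω ∂P, Summable fun n => ϑ n ω := by
  classical
  set e : ℕ → ℕ → Ω → ℝ := fun c n ω =>
    if (∑ k ∈ Finset.range n, (χ k ω + η k ω)) ≤ (c : ℝ) then 1 else 0 with hedef
  have he01 : ∀ c n ω, e c n ω = 0 ∨ e c n ω = 1 := by
    intro c n ω; simp only [hedef]; split_ifs <;> simp
  have he_nonneg : ∀ c n ω, 0 ≤ e c n ω := by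
    intro c n ω; rcases he01 c n ω with h | h <;> rw [h] <;> norm_num
  have he_le_one : ∀ c n ω, e c n ω ≤ 1 := by
    intro c n ω; rcases he01 c n ω with h | h <;> rw [h] <;> norm_num
  have hmono_sum : ∀ (ω : Ω) {a b : ℕ}, a ≤ b →
      (∑ k ∈ Finset.range a, (χ k ω + η k ω)) ≤ ∑ k ∈ Finset.range b, (χ k ω + η k ω) := by
    intro ω a b hab
    exact Finset.sum_le_sum_of_subset_of_nonneg (Finset.range_subset_range.2 hab)
      (fun i _ _ => add_nonneg (hχnonneg i ω) (hηnonneg i ω))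
  have he_anti : ∀ c n ω, e c (n+1) ω ≤ e c n ω := by
    intro c n ω
    simp only [hedef]
    split_ifs with h1 h2
    · norm_num
    · exact absurd (le_trans (hmono_sum ω (Nat.le_succ n)) h1) h2
    · norm_num
    · norm_num
  have he_meas : ∀ c n k, n ≤ k + 1 → Measurable[ℱ k] (e c n) := by
    intro c n k hnk
    simp only [hedef]
    refine Measurable.ite ?_ measurable_const measurable_const
    refine measurableSet_le ?_ measurable_const
    apply Finset.measurable_sum
    intro i hi
    have hik : i ≤ k := by have := Finset.mem_range.mp hi; omega
    exact ((hχmeas i).mono (ℱ.mono hik) le_rfl).add ((hηmeas i).mono (ℱ.mono hik) le_rfl)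
  -- key truncated summability for each c
  have key : ∀ c : ℕ, ∀ᵐ ω ∂P, Summable fun n => e c (n+1) ω * ϑ n ω := by
    intro c
    refine quasiFejer_aux_bounded P ℱ (fun n ω => e c n ω * f n ω)
      (fun n ω => e c (n+1) ω * χ n ω) (fun n ω => e c (n+1) ω * ϑ n ω)
      (fun n ω => e c (n+1) ω * η n ω) (c : ℝ)
      (fun n ω => mul_nonneg (he_nonneg c n ω) (hfnonneg n ω))
      (fun n ω => mul_nonneg (he_nonneg c _ ω) (hχnonneg n ω))
      (fun n ω => mul_nonneg (he_nonneg c _ ω) (hϑnonneg n ω))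
      (fun n ω => mul_nonneg (he_nonneg c _ ω) (hηnonneg n ω))
      (fun n => (he_meas c n n n.le_succ).mul (hfmeas n))
      (fun n => (he_meas c (n+1) n le_rfl).mul (hχmeas n))
      (fun n => (he_meas c (n+1) n le_rfl).mul (hϑmeas n))
      (fun n => (he_meas c (n+1) n le_rfl).mul (hηmeas n))
      ?_ ?_ ?_
    · -- integrability of truncated f
      intro n
      refine Integrable.mono' (hfint n)
        ((((he_meas c n n n.le_succ).mono (ℱ.le n) le_rfl).mul
          ((hfmeas n).mono (ℱ.le n) le_rfl)).aestronglyMeasurable) (ae_of_all _ fun ω => ?_)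
      rw [Real.norm_eq_abs, abs_of_nonneg (mul_nonneg (he_nonneg c n ω) (hfnonneg n ω))]
      exact mul_le_of_le_one_left (hfnonneg n ω) (he_le_one c n ω)
    · -- the partial-sum bound
      intro N ω
      show (∑ k ∈ Finset.range N, (e c (k+1) ω * χ k ω + e c (k+1) ω * η k ω)) ≤ (c:ℝ)
      induction N with
      | zero => simp
      | succ N ih =>
        by_cases hc : (∑ k ∈ Finset.range (N+1), (χ k ω + η k ω)) ≤ (c : ℝ)
        · calc (∑ k ∈ Finset.range (N+1),
                (e c (k+1) ω * χ k ω + e c (k+1) ω * η k ω))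
              ≤ ∑ k ∈ Finset.range (N+1), (χ k ω + η k ω) := by
                apply Finset.sum_le_sum
                intro i _
                rw [← mul_add]
                exact mul_le_of_le_one_left (add_nonneg (hχnonneg i ω) (hηnonneg i ω))
                  (he_le_one c _ ω)
            _ ≤ (c : ℝ) := hc
        · have hzero : e c (N+1) ω = 0 := by simp only [hedef]; rw [if_neg hc]
          rw [Finset.sum_range_succ, hzero]
          simpa using ih
    · -- the conditional-expectation inequality for the truncated system
      have hcond : ∀ n, P[(fun ω => e c (n+1) ω * f (n+1) ω) | ℱ n]
          =ᵐ[P] fun ω => e c (n+1) ω * (P[f (n+1) | ℱ n]) ω := by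
        intro n
        have hint' : Integrable (e c (n+1) * f (n+1)) P := by
          refine Integrable.mono' (hfint (n+1))
            ((((he_meas c (n+1) n le_rfl).mono (ℱ.le n) le_rfl).mul
              ((hfmeas (n+1)).mono (ℱ.le (n+1)) le_rfl)).aestronglyMeasurable)
            (ae_of_all _ fun ω => ?_)
          rw [Pi.mul_apply, Real.norm_eq_abs,
            abs_of_nonneg (mul_nonneg (he_nonneg c _ ω) (hfnonneg _ ω))]
          exact mul_le_of_le_one_left (hfnonneg _ ω) (he_le_one c _ ω)
        exact condExp_mul_of_stronglyMeasurable_left ((he_meas c (n+1) n le_rfl).stronglyMeasurable)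
          hint' (hfint (n+1))
      filter_upwards [hineq, ae_all_iff.2 hcond] with ω hω hcondω
      intro n
      rw [hcondω n]
      rcases he01 c (n+1) ω with h | h
      · rw [h]
        simp only [zero_mul, one_mul, mul_zero, add_zero, zero_add]
        exact mul_nonneg (he_nonneg c n ω) (hfnonneg n ω)
      · have h0 : e c n ω = 1 := by
          rcases he01 c n ω with h0 | h0
          · exfalso
            have := he_anti c n ω
            rw [h, h0] at this
            linarith
          · exact h0
        rw [h, h0]
        simpa using hω n
  -- combine over all c
  filter_upwards [ae_all_iff.2 key, hχsum, hηsum] with ω hkey hχs hηs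
  have hsumm : Summable (fun k => χ k ω + η k ω) := hχs.add hηs
  set T : ℝ := ∑' k, (χ k ω + η k ω) with hTdef
  set c : ℕ := ⌈T⌉₊ with hcdef
  have hone : ∀ n, e c n ω = 1 := by
    intro n
    simp only [hedef]
    rw [if_pos]
    calc (∑ k ∈ Finset.range n, (χ k ω + η k ω)) ≤ T :=
          Summable.sum_le_tsum _ (fun i _ => add_nonneg (hχnonneg i ω) (hηnonneg i ω)) hsumm
      _ ≤ (c : ℝ) := Nat.le_ceil T
  exact (summable_congr (fun n => by rw [hone (n+1), one_mul])).1 (hkey c)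

/-- The σ-algebra σ(x_0, …, x_n) generated by the first n+1 terms of a sequence of
random variables. -/
noncomputable def sigmaFinSeq {Ω H : Type*} [m : MeasurableSpace H]
    (x : ℕ → Ω → H) (n : ℕ) : MeasurableSpace Ω :=
  ⨆ i ∈ Set.Iic n, MeasurableSpace.comap (x i) m

theorem stochastic_quasiFejer_summable_theta
    {H : Type*} [NormedAddCommGroup H] [InnerProductSpace ℝ H] [CompleteSpace H]
    [SecondCountableTopology H] [MeasurableSpace H] [BorelSpace H]
    {Ω : Type*} [MeasurableSpace Ω] (P : Measure Ω) [IsProbabilityMeasure P]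
    (F : Set H) (hFne : F.Nonempty) (hFcl : IsClosed F)
    (φ : ℝ → ℝ) (hφmono : StrictMonoOn φ (Set.Ici (0 : ℝ)))
    (hφnonneg : ∀ t, 0 ≤ t → 0 ≤ φ t) (hφtop : Tendsto φ atTop atTop)
    (x : ℕ → Ω → H) (hxm : ∀ n, Measurable (x n))
    (χ ϑ η : H → ℕ → Ω → ℝ)
    (hχnonneg : ∀ z ∈ F, ∀ n, ∀ ω, 0 ≤ χ z n ω)
    (hϑnonneg : ∀ z ∈ F, ∀ n, ∀ ω, 0 ≤ ϑ z n ω)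
    (hηnonneg : ∀ z ∈ F, ∀ n, ∀ ω, 0 ≤ η z n ω)
    (hχmeas : ∀ z ∈ F, ∀ n, Measurable[sigmaFinSeq x n] (χ z n))
    (hϑmeas : ∀ z ∈ F, ∀ n, Measurable[sigmaFinSeq x n] (ϑ z n))
    (hηmeas : ∀ z ∈ F, ∀ n, Measurable[sigmaFinSeq x n] (η z n))
    (hχsum : ∀ z ∈ F, ∀ᵐ ω ∂P, Summable fun n => χ z n ω)
    (hηsum : ∀ z ∈ F, ∀ᵐ ω ∂P, Summable fun n => η z n ω)
    (hint : ∀ z ∈ F, ∀ n, Integrable (fun ω => φ ‖x n ω - z‖) P)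
    (hineq : ∀ z ∈ F, ∀ᵐ ω ∂P, ∀ n,
      (P[fun ω' => φ ‖x (n + 1) ω' - z‖ | sigmaFinSeq x n]) ω + ϑ z n ω ≤
        (1 + χ z n ω) * φ ‖x n ω - z‖ + η z n ω) :
    ∀ z ∈ F, ∀ᵐ ω ∂P, Summable fun n => ϑ z n ω := by
  intro z hz
  have hmono : Monotone (sigmaFinSeq x) := by
    intro a b hab
    unfold sigmaFinSeq
    exact biSup_mono fun i hi => le_trans hi hab
  have hle : ∀ n, sigmaFinSeq x n ≤ ‹MeasurableSpace Ω› := by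
    intro n
    unfold sigmaFinSeq
    exact iSup₂_le fun i _ => measurable_iff_comap_le.1 (hxm i)
  set ℱ : Filtration ℕ ‹MeasurableSpace Ω› := ⟨sigmaFinSeq x, hmono, hle⟩ with hℱ
  have hxFmeas : ∀ n, Measurable[sigmaFinSeq x n] (x n) := by
    intro n
    have h : MeasurableSpace.comap (x n) ‹MeasurableSpace H› ≤ sigmaFinSeq x n := by
      unfold sigmaFinSeq
      exact le_biSup (fun i => MeasurableSpace.comap (x i) ‹MeasurableSpace H›)
        (Set.mem_Iic.2 le_rfl)
    exact measurable_iff_comap_le.2 h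
  have hψ : Monotone (fun t : ℝ => φ (max t 0)) := fun s t hst =>
    hφmono.monotoneOn (Set.mem_Ici.2 (le_max_right s 0)) (Set.mem_Ici.2 (le_max_right t 0))
      (max_le_max hst le_rfl)
  have hfmeas : ∀ n, Measurable[sigmaFinSeq x n] (fun ω => φ ‖x n ω - z‖) := by
    intro n
    have hg : Measurable (fun v : H => ‖v - z‖) :=
      (continuous_id.sub continuous_const).norm.measurable
    have h1 : Measurable[sigmaFinSeq x n] (fun ω => ‖x n ω - z‖) := hg.comp (hxFmeas n)
    have h2 : (fun ω => φ ‖x n ω - z‖)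
        = (fun t : ℝ => φ (max t 0)) ∘ (fun ω => ‖x n ω - z‖) := by
      funext ω
      simp [Function.comp, max_eq_left (norm_nonneg _)]
    rw [h2]
    exact hψ.measurable.comp h1
  exact quasiFejer_aux P ℱ (fun n ω => φ ‖x n ω - z‖) (χ z) (ϑ z) (η z)
    (fun n ω => hφnonneg _ (norm_nonneg _))
    (hχnonneg z hz) (hϑnonneg z hz) (hηnonneg z hz)
    hfmeas (hχmeas z hz) (hϑmeas z hz) (hηmeas z hz)
    (hint z hz) (hχsum z hz) (hηsum z hz) (hineq z hz)
end

section
/- Suppose that for every z ∈ F the stochastic quasi-Fejér inequality E[φ(‖x_{n+1} − z‖) | 𝓧_n] + ϑ_n(z) ≤ (1 + χ_n(z)) φ(‖x_n − z‖) + η_n(z) holds P-a.s. for every n ∈ ℕ. Then the sequence (x_n)_{n∈ℕ} is bounded P-almost surely, i.e. sup_{n∈ℕ} ‖x_n‖ < ∞ P-a.s. -/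
open MeasureTheory Filter Topology
open scoped RealInnerProductSpace

/-- `p` is a weak sequential cluster point of the sequence `u`. -/
def IsWeakClusterPt {E : Type*} [NormedAddCommGroup E] [InnerProductSpace ℝ E]
    (p : E) (u : ℕ → E) : Prop :=
  ∃ k : ℕ → ℕ, StrictMono k ∧
    ∀ y : E, Filter.Tendsto (fun j => (inner ℝ (u (k j)) y : ℝ)) Filter.atTop
      (nhds (inner ℝ p y : ℝ))

/-- `p` is a strong sequential cluster point of the sequence `u`. -/
def IsStrongClusterPt {E : Type*} [NormedAddCommGroup E] (p : E) (u : ℕ → E) : Prop :=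
  ∃ k : ℕ → ℕ, StrictMono k ∧ Filter.Tendsto (fun j => u (k j)) Filter.atTop (nhds p)

theorem stochastic_quasiFejer_bounded
    {H : Type*} [NormedAddCommGroup H] [InnerProductSpace ℝ H] [CompleteSpace H]
    [SecondCountableTopology H] [MeasurableSpace H] [BorelSpace H]
    {Ω : Type*} [MeasurableSpace Ω] (P : Measure Ω) [IsProbabilityMeasure P]
    (F : Set H) (hFne : F.Nonempty) (hFcl : IsClosed F)
    (φ : ℝ → ℝ) (hφmono : StrictMonoOn φ (Set.Ici (0 : ℝ)))
    (hφnonneg : ∀ t, 0 ≤ t → 0 ≤ φ t) (hφtop : Tendsto φ atTop atTop)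
    (x : ℕ → Ω → H) (hxm : ∀ n, Measurable (x n))
    (χ ϑ η : H → ℕ → Ω → ℝ)
    (hχnonneg : ∀ z ∈ F, ∀ n, ∀ ω, 0 ≤ χ z n ω)
    (hϑnonneg : ∀ z ∈ F, ∀ n, ∀ ω, 0 ≤ ϑ z n ω)
    (hηnonneg : ∀ z ∈ F, ∀ n, ∀ ω, 0 ≤ η z n ω)
    (hχmeas : ∀ z ∈ F, ∀ n, Measurable[sigmaFinSeq x n] (χ z n))
    (hϑmeas : ∀ z ∈ F, ∀ n, Measurable[sigmaFinSeq x n] (ϑ z n))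
    (hηmeas : ∀ z ∈ F, ∀ n, Measurable[sigmaFinSeq x n] (η z n))
    (hχsum : ∀ z ∈ F, ∀ᵐ ω ∂P, Summable fun n => χ z n ω)
    (hηsum : ∀ z ∈ F, ∀ᵐ ω ∂P, Summable fun n => η z n ω)
    (hint : ∀ z ∈ F, ∀ n, Integrable (fun ω => φ ‖x n ω - z‖) P)
    (hineq : ∀ z ∈ F, ∀ᵐ ω ∂P, ∀ n,
      (P[fun ω' => φ ‖x (n + 1) ω' - z‖ | sigmaFinSeq x n]) ω + ϑ z n ω ≤
        (1 + χ z n ω) * φ ‖x n ω - z‖ + η z n ω)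
    :
    ∀ᵐ ω ∂P, ∃ C : ℝ, ∀ n, ‖x n ω‖ ≤ C := by
  classical
  obtain ⟨z, hz⟩ := hFne
  -- the filtration
  set ℱ : Filtration ℕ (inferInstance : MeasurableSpace Ω) :=
    { seq := fun n => sigmaFinSeq x n
      mono' := fun n m hnm => biSup_mono fun i hi => le_trans hi hnm
      le' := fun n => iSup₂_le fun i _ => measurable_iff_comap_le.mp (hxm i) } with hℱ
  have hxF : ∀ i n, i ≤ n → Measurable[ℱ n] (x i) := fun i n h =>
    measurable_iff_comap_le.mpr
      (le_iSup₂_of_le i h le_rfl)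
  -- the monotone extension of φ
  set ψ : ℝ → ℝ := fun t => φ (max t 0) with hψdef
  have hψmono : Monotone ψ := fun s t hst =>
    (hφmono.monotoneOn) (le_max_right s 0) (le_max_right t 0)
      (max_le_max hst le_rfl)
  have hψmeas : Measurable ψ := hψmono.measurable
  -- the main processes
  set Y : ℕ → Ω → ℝ := fun n ω => φ ‖x n ω - z‖ with hYdef
  have hYnonneg : ∀ n ω, 0 ≤ Y n ω := fun n ω => hφnonneg _ (norm_nonneg _)
  have hYψ : ∀ n ω, Y n ω = ψ ‖x n ω - z‖ := by
    intro n ω; simp [hψdef, hYdef, max_eq_left (norm_nonneg (x n ω - z))]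
  set α : ℕ → Ω → ℝ := fun n ω => χ z n ω + η z n ω with hαdef
  have hαnonneg : ∀ n ω, 0 ≤ α n ω := fun n ω =>
    add_nonneg (hχnonneg z hz n ω) (hηnonneg z hz n ω)
  set p : ℕ → Ω → ℝ := fun n ω => ∏ k ∈ Finset.range n, (1 + α k ω) with hpdef
  have hp1 : ∀ n ω, 1 ≤ p n ω := fun n ω => by
    simp only [hpdef]
    calc (1:ℝ) = ∏ _k ∈ Finset.range n, (1:ℝ) := by simp
      _ ≤ ∏ k ∈ Finset.range n, (1 + α k ω) :=
        Finset.prod_le_prod (fun k _ => zero_le_one)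
          (fun k _ => le_add_of_nonneg_right (hαnonneg k ω))
  have hppos : ∀ n ω, 0 < p n ω := fun n ω => lt_of_lt_of_le one_pos (hp1 n ω)
  set Z : ℕ → Ω → ℝ := fun n ω => (p n ω)⁻¹ * (Y n ω + 1) with hZdef
  have hZnonneg : ∀ n ω, 0 ≤ Z n ω := fun n ω =>
    mul_nonneg (inv_nonneg.mpr (hppos n ω).le)
      (add_nonneg (hYnonneg n ω) zero_le_one)
  -- measurability
  have hαF : ∀ k n, k ≤ n → Measurable[ℱ n] (α k) := fun k n hkn =>
    ((hχmeas z hz k).add (hηmeas z hz k)).mono (ℱ.mono hkn) le_rfl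
  have hpF2 : ∀ n m, n ≤ m + 1 → Measurable[ℱ m] (p n) := by
    intro n
    induction n with
    | zero =>
      intro m _
      have : p 0 = fun _ => (1 : ℝ) := by funext ω; simp [hpdef]
      rw [this]; exact measurable_const
    | succ k ih =>
      intro m hm
      have h1 : Measurable[ℱ m] (p k) := ih m (by omega)
      have h2 : Measurable[ℱ m] (α k) := hαF k m (by omega)
      have : p (k + 1) = fun ω => p k ω * (1 + α k ω) := by
        funext ω; simp [hpdef, Finset.prod_range_succ]
      rw [this]
      exact h1.mul (measurable_const.add h2)
  have hpF : ∀ n, Measurable[ℱ n] (p (n + 1)) := fun n => hpF2 (n + 1) n le_rfl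
  have hpF' : ∀ n, Measurable[ℱ n] (p n) := fun n => hpF2 n n (by omega)
  have hYF : ∀ n, Measurable[ℱ n] (Y n) := by
    intro n
    have houter : Measurable fun v : H => ‖v - z‖ := (measurable_id.sub_const z).norm
    have : Measurable[ℱ n] fun ω => ‖x n ω - z‖ := houter.comp (hxF n n le_rfl)
    have h2 : Measurable[ℱ n] fun ω => ψ ‖x n ω - z‖ := hψmeas.comp this
    have : (Y n) = fun ω => ψ ‖x n ω - z‖ := funext fun ω => hYψ n ω
    rw [this]; exact h2
  have hZF : ∀ n, Measurable[ℱ n] (Z n) := fun n =>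
    ((hpF' n).inv).mul ((hYF n).add measurable_const)
  -- integrability
  have hYint : ∀ n, Integrable (Y n) P := fun n => hint z hz n
  have hY1int : ∀ n, Integrable (fun ω => Y n ω + 1) P := fun n =>
    (hYint n).add (integrable_const 1)
  have hZint : ∀ n, Integrable (Z n) P := by
    intro n
    refine (hY1int n).bdd_mul (c := 1) ?_ (Eventually.of_forall fun ω => ?_)
    · exact (((hpF' n).mono (ℱ.le n) le_rfl).inv).aestronglyMeasurable
    · rw [Real.norm_eq_abs, abs_inv, abs_of_pos (hppos n ω)]
      exact inv_le_one_of_one_le₀ (hp1 n ω)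
  -- the supermartingale property
  have hsup : Supermartingale Z ℱ P := by
    refine supermartingale_nat (fun n => ((hZF n).stronglyMeasurable)) hZint ?_
    intro n
    have hc : StronglyMeasurable[ℱ n] fun ω => (p (n + 1) ω)⁻¹ :=
      ((hpF n).inv).stronglyMeasurable
    have hmul : P[Z (n + 1)|ℱ n] =ᵐ[P]
        (fun ω => (p (n + 1) ω)⁻¹) * P[(fun ω => Y (n + 1) ω + 1)|ℱ n] := by
      have : Z (n + 1) = (fun ω => (p (n + 1) ω)⁻¹) * (fun ω => Y (n + 1) ω + 1) := rfl
      rw [this]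
      exact condExp_mul_of_stronglyMeasurable_left hc (this ▸ hZint (n + 1)) (hY1int (n + 1))
    have hadd : P[(fun ω => Y (n + 1) ω + 1)|ℱ n] =ᵐ[P]
        P[Y (n + 1)|ℱ n] + fun _ => 1 := by
      have : (fun ω => Y (n + 1) ω + 1) = Y (n + 1) + fun _ => (1 : ℝ) := rfl
      rw [this]
      refine (condExp_add (hYint (n + 1)) (integrable_const 1) _).trans ?_
      rw [condExp_const (ℱ.le n)]
    filter_upwards [hmul, hadd, hineq z hz] with ω h1 h2 h3
    have hE : (P[Y (n + 1)|ℱ n]) ω ≤ (1 + χ z n ω) * Y n ω + η z n ω := by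
      have h4 : (P[Y (n + 1)|ℱ n]) ω + ϑ z n ω ≤ (1 + χ z n ω) * Y n ω + η z n ω := h3 n
      linarith [hϑnonneg z hz n ω]
    have hE2 : (P[Y (n + 1)|ℱ n]) ω + 1 ≤ (1 + α n ω) * (Y n ω + 1) := by
      have hY := hYnonneg n ω
      have hχ0 := hχnonneg z hz n ω
      have hη0 := hηnonneg z hz n ω
      have hprod : 0 ≤ η z n ω * Y n ω := mul_nonneg hη0 hY
      simp only [hαdef]
      nlinarith [hE]
    calc (P[Z (n + 1)|ℱ n]) ω
        = (p (n + 1) ω)⁻¹ * ((P[Y (n + 1)|ℱ n]) ω + 1) := by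
          rw [h1]; simp [h2]
      _ ≤ (p (n + 1) ω)⁻¹ * ((1 + α n ω) * (Y n ω + 1)) := by
          apply mul_le_mul_of_nonneg_left hE2 (inv_nonneg.mpr (hppos (n + 1) ω).le)
      _ = Z n ω := by
          have hps : p (n + 1) ω = p n ω * (1 + α n ω) := by
            simp only [hpdef]; exact Finset.prod_range_succ _ _
          have h1α : (0:ℝ) < 1 + α n ω := by linarith [hαnonneg n ω]
          have hp0 : p n ω ≠ 0 := (hppos n ω).ne'
          have h1α' : (1 : ℝ) + α n ω ≠ 0 := h1α.ne'
          simp only [hZdef]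
          rw [hps, mul_inv]
          field_simp
  -- L¹ boundedness
  have hR : ∀ n, eLpNorm (Z n) 1 P ≤ ENNReal.ofReal (∫ ω, Z 0 ω ∂P) := by
    intro n
    have hmono : ∫ ω, Z n ω ∂P ≤ ∫ ω, Z 0 ω ∂P := by
      have := hsup.setIntegral_le (Nat.zero_le n) (@MeasurableSet.univ Ω (ℱ 0))
      simpa using this
    have : eLpNorm (Z n) 1 P = ENNReal.ofReal (∫ ω, ‖Z n ω‖ ∂P) := by
      rw [eLpNorm_one_eq_lintegral_enorm,
        ← ofReal_integral_norm_eq_lintegral_enorm (hZint n)]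
    rw [this]
    apply ENNReal.ofReal_le_ofReal
    calc ∫ ω, ‖Z n ω‖ ∂P = ∫ ω, Z n ω ∂P := by
          refine integral_congr_ae (Eventually.of_forall fun ω => ?_)
          show ‖Z n ω‖ = Z n ω
          rw [Real.norm_eq_abs, abs_of_nonneg (hZnonneg n ω)]
      _ ≤ ∫ ω, Z 0 ω ∂P := hmono
  have htend := hsup.neg.ae_tendsto_limitProcess
    (R := (∫ ω, Z 0 ω ∂P).toNNReal)
    (fun n => by simp [eLpNorm_neg]; exact hR n)
  -- conclusion
  filter_upwards [htend, hχsum z hz, hηsum z hz] with ω hω hχs hηs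
  have hαsum : Summable fun n => α n ω := hχs.add hηs
  obtain ⟨c, hc⟩ : ∃ c, Tendsto (fun n => Z n ω) atTop (𝓝 c) := by
    refine ⟨-(ℱ.limitProcess (-Z) P ω), ?_⟩
    have := hω.neg
    simpa using this
  obtain ⟨C, hC⟩ := hc.bddAbove_range
  have hCb : ∀ n, Z n ω ≤ C := fun n => hC ⟨n, rfl⟩
  have hC0 : 0 ≤ C := le_trans (hZnonneg 0 ω) (hCb 0)
  set B : ℝ := Real.exp (∑' k, α k ω) with hBdef
  have hpB : ∀ n, p n ω ≤ B := by
    intro n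
    calc p n ω ≤ ∏ k ∈ Finset.range n, Real.exp (α k ω) := by
          refine Finset.prod_le_prod (fun k _ => by linarith [hαnonneg k ω]) ?_
          intro k _
          have := Real.add_one_le_exp (α k ω)
          linarith
      _ = Real.exp (∑ k ∈ Finset.range n, α k ω) := (Real.exp_sum _ _).symm
      _ ≤ B := Real.exp_le_exp.mpr (Summable.sum_le_tsum _ (fun k _ => hαnonneg k ω) hαsum)
  have hYb : ∀ n, Y n ω ≤ C * B := by
    intro n
    have hZp : Y n ω + 1 = Z n ω * p n ω := by
      have hp0 : p n ω ≠ 0 := (hppos n ω).ne'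
      simp only [hZdef]
      field_simp
    have : Z n ω * p n ω ≤ C * B :=
      mul_le_mul (hCb n) (hpB n) (hppos n ω).le hC0
    linarith [hZp ▸ this]
  -- use that φ tends to infinity
  obtain ⟨T, hT⟩ : ∃ T, ∀ t ≥ T, C * B + 1 ≤ φ t :=
    (hφtop.eventually_ge_atTop (C * B + 1)).exists_forall_of_atTop
  refine ⟨max T 0 + ‖z‖, fun n => ?_⟩
  have hxz : ‖x n ω - z‖ ≤ max T 0 := by
    by_contra h
    push_neg at h
    have h1 : C * B + 1 ≤ φ ‖x n ω - z‖ := hT _ (le_trans (le_max_left T 0) h.le)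
    have h2 : φ ‖x n ω - z‖ ≤ C * B := hYb n
    linarith
  calc ‖x n ω‖ = ‖x n ω - z + z‖ := by rw [sub_add_cancel]
    _ ≤ ‖x n ω - z‖ + ‖z‖ := norm_add_le _ _
    _ ≤ max T 0 + ‖z‖ := by linarith
end

section
/- Suppose that for every z ∈ F the stochastic quasi-Fejér inequality E[φ(‖x_{n+1} − z‖) | 𝓧_n] + ϑ_n(z) ≤ (1 + χ_n(z)) φ(‖x_n − z‖) + η_n(z) holds P-a.s. for every n ∈ ℕ. Then there exists an event Ω̃ ∈ 𝓕 with P(Ω̃) = 1 such that, for every ω ∈ Ω̃ and every z ∈ F, the real sequence (‖x_n(ω) − z‖)_{n∈ℕ} converges. -/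
open MeasureTheory Filter Topology
open scoped RealInnerProductSpace ENNReal NNReal

namespace QuasiFejerAux

variable {Ω : Type*}

/-- `∏_{k<n} (1 + a k)`. -/
noncomputable def Cp (a : ℕ → Ω → ℝ) (n : ℕ) (ω : Ω) : ℝ := ∏ k ∈ Finset.range n, (1 + a k ω)

/-- `∑_{k<n} a k`. -/
noncomputable def Sp (a : ℕ → Ω → ℝ) (n : ℕ) (ω : Ω) : ℝ := ∑ k ∈ Finset.range n, a k ω

/-- `∑_{k<n} b k / Cp a (k+1)`. -/
noncomputable def Ep (a b : ℕ → Ω → ℝ) (n : ℕ) (ω : Ω) : ℝ :=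
  ∑ k ∈ Finset.range n, b k ω / Cp a (k + 1) ω

/-- increment of the compensated process. -/
noncomputable def Dp (Y a b : ℕ → Ω → ℝ) (n : ℕ) (ω : Ω) : ℝ :=
  Y (n + 1) ω / Cp a (n + 1) ω - Y n ω / Cp a n ω - b n ω / Cp a (n + 1) ω

/-- the "not yet stopped at time n" event. -/
def Ap (a b : ℕ → Ω → ℝ) (M : ℝ) (n : ℕ) : Set Ω :=
  {ω | Sp a (n + 1) ω ≤ M ∧ Sp b (n + 1) ω ≤ M}

/-- the stopped compensated process. -/
noncomputable def Up (Y a b : ℕ → Ω → ℝ) (M : ℝ) (n : ℕ) (ω : Ω) : ℝ :=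
  Y 0 ω + ∑ k ∈ Finset.range n, (Ap a b M k).indicator (Dp Y a b k) ω

section Pointwise

variable {Y a b : ℕ → Ω → ℝ} {M : ℝ}

lemma one_le_Cp (ha : ∀ n ω, 0 ≤ a n ω) (n : ℕ) (ω : Ω) : 1 ≤ Cp a n ω := by
  have h : ∀ k ∈ Finset.range n, (1:ℝ) ≤ 1 + a k ω := fun k _ => le_add_of_nonneg_right (ha k ω)
  calc (1:ℝ) = ∏ _k ∈ Finset.range n, 1 := by simp
  _ ≤ Cp a n ω := Finset.prod_le_prod (fun k _ => zero_le_one) h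

lemma Cp_pos (ha : ∀ n ω, 0 ≤ a n ω) (n : ℕ) (ω : Ω) : 0 < Cp a n ω :=
  lt_of_lt_of_le one_pos (one_le_Cp ha n ω)

lemma Cp_succ (n : ℕ) (ω : Ω) : Cp a (n + 1) ω = Cp a n ω * (1 + a n ω) :=
  Finset.prod_range_succ _ n

lemma Cp_mono (ha : ∀ n ω, 0 ≤ a n ω) (n : ℕ) (ω : Ω) : Cp a n ω ≤ Cp a (n + 1) ω := by
  rw [Cp_succ]
  nth_rewrite 1 [← mul_one (Cp a n ω)]
  exact mul_le_mul_of_nonneg_left (le_add_of_nonneg_right (ha n ω)) (Cp_pos ha n ω).le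

lemma Cp_le_exp (ha : ∀ n ω, 0 ≤ a n ω) (n : ℕ) (ω : Ω) : Cp a n ω ≤ Real.exp (Sp a n ω) := by
  rw [Sp, Real.exp_sum]
  refine Finset.prod_le_prod (fun k _ => by linarith [ha k ω]) (fun k _ => ?_)
  have := Real.add_one_le_exp (a k ω)
  linarith

lemma Sp_succ (n : ℕ) (ω : Ω) : Sp a (n + 1) ω = Sp a n ω + a n ω :=
  Finset.sum_range_succ _ n

lemma Sp_nonneg (ha : ∀ n ω, 0 ≤ a n ω) (n : ℕ) (ω : Ω) : 0 ≤ Sp a n ω :=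
  Finset.sum_nonneg fun k _ => ha k ω

lemma Sp_mono (ha : ∀ n ω, 0 ≤ a n ω) (n : ℕ) (ω : Ω) : Sp a n ω ≤ Sp a (n + 1) ω := by
  rw [Sp_succ]; linarith [ha n ω]

lemma le_Sp (ha : ∀ n ω, 0 ≤ a n ω) (n : ℕ) (ω : Ω) : a n ω ≤ Sp a (n + 1) ω :=
  Finset.single_le_sum (fun k _ => ha k ω) (Finset.self_mem_range_succ n)

lemma Ep_succ (n : ℕ) (ω : Ω) : Ep a b (n + 1) ω = Ep a b n ω + b n ω / Cp a (n + 1) ω :=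
  Finset.sum_range_succ _ n

lemma Ep_le_Sp (ha : ∀ n ω, 0 ≤ a n ω) (hb : ∀ n ω, 0 ≤ b n ω) (n : ℕ) (ω : Ω) :
    Ep a b n ω ≤ Sp b n ω :=
  Finset.sum_le_sum fun k _ => div_le_self (hb k ω) (one_le_Cp ha (k + 1) ω)

lemma Ep_nonneg (ha : ∀ n ω, 0 ≤ a n ω) (hb : ∀ n ω, 0 ≤ b n ω) (n : ℕ) (ω : Ω) :
    0 ≤ Ep a b n ω :=
  Finset.sum_nonneg fun k _ => div_nonneg (hb k ω) (Cp_pos ha (k + 1) ω).le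

lemma Ep_mono (ha : ∀ n ω, 0 ≤ a n ω) (hb : ∀ n ω, 0 ≤ b n ω) (n : ℕ) (ω : Ω) :
    Ep a b n ω ≤ Ep a b (n + 1) ω := by
  rw [Ep_succ]
  have h : 0 ≤ b n ω / Cp a (n + 1) ω := div_nonneg (hb n ω) (Cp_pos ha (n + 1) ω).le
  linarith

lemma Up_succ (n : ℕ) (ω : Ω) :
    Up Y a b M (n + 1) ω = Up Y a b M n ω + (Ap a b M n).indicator (Dp Y a b n) ω := by
  rw [Up, Finset.sum_range_succ, Up]; ring

/-- The key pointwise invariant for the stopped process. -/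
lemma Up_invariant (ha : ∀ n ω, 0 ≤ a n ω) (hb : ∀ n ω, 0 ≤ b n ω) (hY : ∀ n ω, 0 ≤ Y n ω)
    (hM : 0 ≤ M) (n : ℕ) (ω : Ω) :
    (-M ≤ Up Y a b M n ω) ∧
      (Sp a n ω ≤ M ∧ Sp b n ω ≤ M →
        Up Y a b M n ω = Y n ω / Cp a n ω - Ep a b n ω) := by
  induction n with
  | zero =>
    constructor
    · simp only [Up, Finset.range_zero, Finset.sum_empty, add_zero]
      linarith [hY 0 ω]
    · intro _
      simp [Up, Cp, Ep]
  | succ n ih =>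
    by_cases hA : ω ∈ Ap a b M n
    · have hSa : Sp a n ω ≤ M := le_trans (Sp_mono ha n ω) hA.1
      have hSb : Sp b n ω ≤ M := le_trans (Sp_mono hb n ω) hA.2
      have heq : Up Y a b M n ω = Y n ω / Cp a n ω - Ep a b n ω := ih.2 ⟨hSa, hSb⟩
      have hstep : Up Y a b M (n + 1) ω = Y (n + 1) ω / Cp a (n + 1) ω - Ep a b (n + 1) ω := by
        rw [Up_succ, Set.indicator_of_mem hA, heq, Dp, Ep_succ]
        ring
      constructor
      · rw [hstep]
        have h1 : 0 ≤ Y (n + 1) ω / Cp a (n + 1) ω :=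
          div_nonneg (hY (n + 1) ω) (Cp_pos ha (n + 1) ω).le
        have h2 : Ep a b (n + 1) ω ≤ Sp b (n + 1) ω := Ep_le_Sp ha hb (n + 1) ω
        linarith [hA.2]
      · intro _; exact hstep
    · constructor
      · rw [Up_succ, Set.indicator_of_notMem hA, add_zero]; exact ih.1
      · intro h; exact absurd h hA

lemma abs_indicator_Dp_le (ha : ∀ n ω, 0 ≤ a n ω) (hb : ∀ n ω, 0 ≤ b n ω)
    (hY : ∀ n ω, 0 ≤ Y n ω) (hM : 0 ≤ M) (n : ℕ) (ω : Ω) :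
    |(Ap a b M n).indicator (Dp Y a b n) ω| ≤ Y (n + 1) ω + Y n ω + M := by
  by_cases hA : ω ∈ Ap a b M n
  · rw [Set.indicator_of_mem hA, Dp]
    have h1 : 0 ≤ Y (n + 1) ω / Cp a (n + 1) ω :=
      div_nonneg (hY (n + 1) ω) (Cp_pos ha (n + 1) ω).le
    have h1' : Y (n + 1) ω / Cp a (n + 1) ω ≤ Y (n + 1) ω :=
      div_le_self (hY (n + 1) ω) (one_le_Cp ha (n + 1) ω)
    have h2 : 0 ≤ Y n ω / Cp a n ω := div_nonneg (hY n ω) (Cp_pos ha n ω).le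
    have h2' : Y n ω / Cp a n ω ≤ Y n ω := div_le_self (hY n ω) (one_le_Cp ha n ω)
    have h3 : 0 ≤ b n ω / Cp a (n + 1) ω := div_nonneg (hb n ω) (Cp_pos ha (n + 1) ω).le
    have h3' : b n ω / Cp a (n + 1) ω ≤ b n ω := div_le_self (hb n ω) (one_le_Cp ha (n + 1) ω)
    have h4 : b n ω ≤ M := le_trans (le_Sp hb n ω) hA.2
    have p1 := hY (n + 1) ω
    have p2 := hY n ω
    rw [abs_le]
    exact ⟨by linarith, by linarith⟩
  · rw [Set.indicator_of_notMem hA]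
    simp only [abs_zero]
    have p1 := hY (n + 1) ω
    have p2 := hY n ω
    linarith

end Pointwise


/-- Deterministic fact: if `φ` is strictly increasing on `[0,∞)` and tends to `∞`, and
`φ (t n)` converges for a nonnegative sequence `t`, then `t` converges. -/
lemma tendsto_of_tendsto_phi {φ : ℝ → ℝ} (hφmono : StrictMonoOn φ (Set.Ici (0 : ℝ)))
    (hφtop : Tendsto φ atTop atTop) {t : ℕ → ℝ} (ht : ∀ n, 0 ≤ t n) {l : ℝ}
    (h : Tendsto (fun n => φ (t n)) atTop (𝓝 l)) :
    ∃ c, Tendsto t atTop (𝓝 c) := by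
  obtain ⟨B, hB⟩ := (tendsto_atTop.1 hφtop (l + 1)).exists_forall_of_atTop
  have hev : ∀ᶠ n in atTop, t n < B := by
    filter_upwards [h.eventually_lt_const (show l < l + 1 by linarith)] with n hn
    by_contra hc
    exact absurd (hB (t n) (not_lt.1 hc)) (by linarith)
  have hbdd_above : IsBoundedUnder (· ≤ ·) atTop t :=
    isBoundedUnder_of_eventually_le (hev.mono fun n hn => hn.le)
  have hbdd_below : IsBoundedUnder (· ≥ ·) atTop t :=
    isBoundedUnder_of_eventually_ge (Eventually.of_forall ht)
  have hL : liminf t atTop ≤ limsup t atTop := liminf_le_limsup hbdd_above hbdd_below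
  have hL0 : 0 ≤ liminf t atTop :=
    le_liminf_of_le hbdd_above.isCoboundedUnder_ge (Eventually.of_forall ht)
  rcases eq_or_lt_of_le hL with heq | hlt
  · exact ⟨limsup t atTop, tendsto_of_liminf_eq_limsup heq rfl hbdd_above hbdd_below⟩
  · exfalso
    obtain ⟨u, hu1, hu2⟩ := exists_between hlt
    obtain ⟨v, hv1, hv2⟩ := exists_between hu2
    have hu0 : (0:ℝ) ≤ u := le_trans hL0 hu1.le
    have hv0 : (0:ℝ) ≤ v := le_trans hu0 hv1.le
    have hfreq1 : ∃ᶠ n in atTop, t n < u :=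
      frequently_lt_of_liminf_lt hbdd_above.isCoboundedUnder_ge hu1
    have hfreq2 : ∃ᶠ n in atTop, v < t n :=
      frequently_lt_of_lt_limsup hbdd_below.isCoboundedUnder_le hv2
    have h1 : l ≤ φ u := by
      have : liminf (fun n => φ (t n)) atTop ≤ φ u :=
        liminf_le_of_frequently_le
          (hfreq1.mono fun n hn => (hφmono (ht n) hu0 hn).le) h.isBoundedUnder_ge
      rwa [h.liminf_eq] at this
    have h2 : φ v ≤ l := by
      have : φ v ≤ limsup (fun n => φ (t n)) atTop :=
        le_limsup_of_frequently_le
          (hfreq2.mono fun n hn => (hφmono hv0 (ht n) hn).le) h.isBoundedUnder_le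
      rwa [h.limsup_eq] at this
    have := hφmono hu0 hv0 hv1
    linarith

section RS

variable [m0 : MeasurableSpace Ω] {P : Measure Ω} [IsProbabilityMeasure P]

/-- Robbins–Siegmund type result: an almost-supermartingale with a.s. summable perturbations
converges a.s. -/
lemma robbinsSiegmund (ℱ : Filtration ℕ m0) {Y a b : ℕ → Ω → ℝ}
    (hYm : ∀ n, Measurable[ℱ n] (Y n)) (hYint : ∀ n, Integrable (Y n) P)
    (hYpos : ∀ n ω, 0 ≤ Y n ω)
    (ham : ∀ n, Measurable[ℱ n] (a n)) (hbm : ∀ n, Measurable[ℱ n] (b n))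
    (hapos : ∀ n ω, 0 ≤ a n ω) (hbpos : ∀ n ω, 0 ≤ b n ω)
    (hasum : ∀ᵐ ω ∂P, Summable fun n => a n ω) (hbsum : ∀ᵐ ω ∂P, Summable fun n => b n ω)
    (hineq : ∀ᵐ ω ∂P, ∀ n, (P[Y (n + 1)|ℱ n]) ω ≤ (1 + a n ω) * Y n ω + b n ω) :
    ∀ᵐ ω ∂P, ∃ l, Tendsto (fun n => Y n ω) atTop (𝓝 l) := by
  -- ambient measurability
  have hYm0 : ∀ n, Measurable (Y n) := fun n => (hYm n).mono (ℱ.le n) le_rfl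
  have ham0 : ∀ n, Measurable (a n) := fun n => (ham n).mono (ℱ.le n) le_rfl
  have hbm0 : ∀ n, Measurable (b n) := fun n => (hbm n).mono (ℱ.le n) le_rfl
  -- measurability of the auxiliary processes w.r.t. the filtration
  have hamle : ∀ k n, k ≤ n → Measurable[ℱ n] (a k) := fun k n hk =>
    (ham k).mono (ℱ.mono hk) le_rfl
  have hbmle : ∀ k n, k ≤ n → Measurable[ℱ n] (b k) := fun k n hk =>
    (hbm k).mono (ℱ.mono hk) le_rfl
  have hSam : ∀ n, Measurable[ℱ n] (Sp a (n + 1)) := fun n =>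
    Finset.measurable_sum _ fun k hk =>
      hamle k n (Nat.lt_succ_iff.1 (Finset.mem_range.1 hk))
  have hSbm : ∀ n, Measurable[ℱ n] (Sp b (n + 1)) := fun n =>
    Finset.measurable_sum _ fun k hk =>
      hbmle k n (Nat.lt_succ_iff.1 (Finset.mem_range.1 hk))
  have hCm : ∀ n, Measurable[ℱ n] (Cp a (n + 1)) := fun n =>
    Finset.measurable_prod _ fun k hk =>
      measurable_const.add (hamle k n (Nat.lt_succ_iff.1 (Finset.mem_range.1 hk)))
  have hCm' : ∀ n, Measurable[ℱ n] (Cp a n) := fun n =>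
    Finset.measurable_prod _ fun k hk =>
      measurable_const.add (hamle k n (Finset.mem_range.1 hk).le)
  -- the core: a.s. convergence of the stopped compensated process, for each cutoff M
  have key : ∀ M : ℕ, ∀ᵐ ω ∂P, ∃ c,
      Tendsto (fun n => Up Y a b (M : ℝ) n ω) atTop (𝓝 c) := by
    intro M
    set Mr : ℝ := (M : ℝ) with hMr
    have hMr0 : (0:ℝ) ≤ Mr := Nat.cast_nonneg M
    have hAm : ∀ n, MeasurableSet[ℱ n] (Ap a b Mr n) := fun n =>
      (measurableSet_le (hSam n) measurable_const).inter
        (measurableSet_le (hSbm n) measurable_const)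
    have hAm0 : ∀ n, MeasurableSet (Ap a b Mr n) := fun n => ℱ.le n _ (hAm n)
    have hDm0 : ∀ n, Measurable (Dp Y a b n) := fun n =>
      (((hYm0 (n+1)).div ((hCm n).mono (ℱ.le n) le_rfl)).sub
        ((hYm0 n).div ((hCm' n).mono (ℱ.le n) le_rfl))).sub
        ((hbm0 n).div ((hCm n).mono (ℱ.le n) le_rfl))
    have hIndm : ∀ n, Measurable[ℱ (n + 1)] ((Ap a b Mr n).indicator (Dp Y a b n)) := by
      intro n
      have hD : Measurable[ℱ (n + 1)] (Dp Y a b n) :=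
        (((hYm (n+1)).div ((hCm n).mono (ℱ.mono n.le_succ) le_rfl)).sub
          (((hYm n).mono (ℱ.mono n.le_succ) le_rfl).div
            ((hCm' n).mono (ℱ.mono n.le_succ) le_rfl))).sub
          (((hbm n).mono (ℱ.mono n.le_succ) le_rfl).div
            ((hCm n).mono (ℱ.mono n.le_succ) le_rfl))
      exact hD.indicator ((ℱ.mono n.le_succ) _ (hAm n))
    have hUm : ∀ n, Measurable[ℱ n] (Up Y a b Mr n) := by
      intro n
      apply Measurable.add ((hYm 0).mono (ℱ.mono (Nat.zero_le n)) le_rfl)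
      apply Finset.measurable_sum
      intro k hk
      exact (hIndm k).mono (ℱ.mono (Finset.mem_range.1 hk)) le_rfl
    have hIndInt : ∀ n, Integrable ((Ap a b Mr n).indicator (Dp Y a b n)) P := by
      intro n
      refine Integrable.mono' (((hYint (n+1)).add (hYint n)).add (integrable_const Mr))
        ((hDm0 n).indicator (hAm0 n)).aestronglyMeasurable (ae_of_all _ fun ω => ?_)
      simpa [Real.norm_eq_abs] using
        abs_indicator_Dp_le hapos hbpos hYpos hMr0 n ω
    have hUint : ∀ n, Integrable (Up Y a b Mr n) P := by
      intro n
      exact (hYint 0).add (integrable_finset_sum _ fun k _ => hIndInt k)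
    -- supermartingale property
    have hsuper : Supermartingale (Up Y a b Mr) ℱ P := by
      refine supermartingale_nat (fun n => (hUm n).stronglyMeasurable) hUint fun n => ?_
      set g : Ω → ℝ := (Ap a b Mr n).indicator fun ω => (Cp a (n + 1) ω)⁻¹ with hgdef
      set h : Ω → ℝ :=
        (Ap a b Mr n).indicator fun ω => Y n ω / Cp a n ω + b n ω / Cp a (n + 1) ω with hhdef
      have hg0 : ∀ ω, 0 ≤ g ω := fun ω => Set.indicator_nonneg
        (fun ω _ => inv_nonneg.2 (Cp_pos hapos (n+1) ω).le) ω
      have hg1 : ∀ ω, g ω ≤ 1 := by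
        intro ω
        by_cases hω : ω ∈ Ap a b Mr n
        · rw [hgdef, Set.indicator_of_mem hω]
          exact inv_le_one_of_one_le₀ (one_le_Cp hapos (n+1) ω)
        · rw [hgdef, Set.indicator_of_notMem hω]; exact zero_le_one
      have hgm : Measurable[ℱ n] g := ((hCm n).inv).indicator (hAm n)
      have hgm0 : Measurable g := hgm.mono (ℱ.le n) le_rfl
      have hhm : Measurable[ℱ n] h :=
        (((hYm n).div (hCm' n)).add ((hbm n).div (hCm n))).indicator (hAm n)
      have hhm0 : Measurable h := hhm.mono (ℱ.le n) le_rfl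
      have hind_eq : (Ap a b Mr n).indicator (Dp Y a b n) = g * Y (n + 1) - h := by
        funext ω
        by_cases hω : ω ∈ Ap a b Mr n
        · simp only [Set.indicator_of_mem hω, hgdef, hhdef, Pi.sub_apply, Pi.mul_apply,
            Set.indicator_of_mem hω, Dp]
          rw [inv_mul_eq_div]
          ring
        · simp [Set.indicator_of_notMem hω, hgdef, hhdef]
      have hgY_int : Integrable (g * Y (n + 1)) P := by
        refine Integrable.mono' (hYint (n+1))
          (hgm0.mul (hYm0 (n+1))).aestronglyMeasurable (ae_of_all _ fun ω => ?_)
        simp only [Pi.mul_apply, Real.norm_eq_abs, abs_mul,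
          abs_of_nonneg (hg0 ω), abs_of_nonneg (hYpos (n+1) ω)]
        calc g ω * Y (n+1) ω ≤ 1 * Y (n+1) ω :=
              mul_le_mul_of_nonneg_right (hg1 ω) (hYpos (n+1) ω)
        _ = Y (n+1) ω := one_mul _
      have hh_int : Integrable h P := by
        refine Integrable.mono' ((hYint n).add (integrable_const Mr))
          hhm0.aestronglyMeasurable (ae_of_all _ fun ω => ?_)
        by_cases hω : ω ∈ Ap a b Mr n
        · rw [hhdef, Real.norm_eq_abs, Set.indicator_of_mem hω]
          have h1 : 0 ≤ Y n ω / Cp a n ω := div_nonneg (hYpos n ω) (Cp_pos hapos n ω).le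
          have h1' : Y n ω / Cp a n ω ≤ Y n ω := div_le_self (hYpos n ω) (one_le_Cp hapos n ω)
          have h2 : 0 ≤ b n ω / Cp a (n+1) ω :=
            div_nonneg (hbpos n ω) (Cp_pos hapos (n+1) ω).le
          have h2' : b n ω / Cp a (n+1) ω ≤ b n ω :=
            div_le_self (hbpos n ω) (one_le_Cp hapos (n+1) ω)
          have h3 : b n ω ≤ Mr := le_trans (le_Sp hbpos n ω) hω.2
          rw [abs_of_nonneg (by linarith)]
          simp only [Pi.add_apply]
          linarith
        · rw [hhdef, Real.norm_eq_abs, Set.indicator_of_notMem hω]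
          simp only [abs_zero, Pi.add_apply]
          linarith [hYpos n ω]
      have hcondg : P[g * Y (n + 1)|ℱ n] =ᵐ[P] g * P[Y (n + 1)|ℱ n] :=
        condExp_mul_of_stronglyMeasurable_left hgm.stronglyMeasurable hgY_int (hYint (n+1))
      have hcondh : P[h|ℱ n] = h :=
        condExp_of_stronglyMeasurable (ℱ.le n) hhm.stronglyMeasurable hh_int
      have hind_cond : P[(Ap a b Mr n).indicator (Dp Y a b n)|ℱ n] ≤ᵐ[P] 0 := by
        rw [hind_eq]
        have hsub : P[g * Y (n + 1) - h|ℱ n] =ᵐ[P] P[g * Y (n + 1)|ℱ n] - P[h|ℱ n] :=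
          condExp_sub hgY_int hh_int _
        filter_upwards [hsub, hcondg, hineq] with ω h1 h2 h3
        have hkey : g ω * ((1 + a n ω) * Y n ω + b n ω) = h ω := by
          by_cases hω : ω ∈ Ap a b Mr n
          · rw [hgdef, hhdef]
            simp only [Set.indicator_of_mem hω]
            rw [Cp_succ]
            have hc : Cp a n ω ≠ 0 := (Cp_pos hapos n ω).ne'
            have hc2 : (1 : ℝ) + a n ω ≠ 0 := by
              have := hapos n ω; intro hcon; linarith
            field_simp
          · rw [hgdef, hhdef]
            simp [Set.indicator_of_notMem hω]
        have hle : g ω * (P[Y (n + 1)|ℱ n]) ω ≤ g ω * ((1 + a n ω) * Y n ω + b n ω) :=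
          mul_le_mul_of_nonneg_left (h3 n) (hg0 ω)
        have : (P[g * Y (n + 1) - h|ℱ n]) ω =
            g ω * (P[Y (n + 1)|ℱ n]) ω - h ω := by
          rw [h1]
          simp only [Pi.sub_apply, hcondh]
          rw [h2]
          simp
        rw [this]
        simp only [Pi.zero_apply]
        linarith
      -- assemble
      have hUsucc : Up Y a b Mr (n + 1) =
          Up Y a b Mr n + (Ap a b Mr n).indicator (Dp Y a b n) :=
        funext fun ω => Up_succ n ω
      rw [hUsucc]
      have hadd : P[Up Y a b Mr n + (Ap a b Mr n).indicator (Dp Y a b n)|ℱ n] =ᵐ[P]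
          P[Up Y a b Mr n|ℱ n] + P[(Ap a b Mr n).indicator (Dp Y a b n)|ℱ n] :=
        condExp_add (hUint n) (hIndInt n) _
      have hUcond : P[Up Y a b Mr n|ℱ n] = Up Y a b Mr n :=
        condExp_of_stronglyMeasurable (ℱ.le n) (hUm n).stronglyMeasurable (hUint n)
      filter_upwards [hadd, hind_cond] with ω h1 h2
      rw [h1]
      simp only [Pi.add_apply, hUcond]
      have := h2
      simp only [Pi.zero_apply] at this
      linarith
    -- L¹ bound
    have hlow : ∀ n ω, -Mr ≤ Up Y a b Mr n ω := fun n ω =>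
      (Up_invariant hapos hbpos hYpos hMr0 n ω).1
    have hU0 : Up Y a b Mr 0 = Y 0 := by
      funext ω; simp [Up]
    have hint_le : ∀ n, ∫ ω, Up Y a b Mr n ω ∂P ≤ ∫ ω, Y 0 ω ∂P := by
      intro n
      have := hsuper.setIntegral_le (Nat.zero_le n) (MeasurableSet.univ (α := Ω))
      rw [setIntegral_univ, setIntegral_univ, hU0] at this
      exact this
    set B : ℝ := ∫ ω, Y 0 ω ∂P + 2 * Mr with hBdef
    have hB0 : 0 ≤ B := by
      have : 0 ≤ ∫ ω, Y 0 ω ∂P := integral_nonneg (hYpos 0)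
      rw [hBdef]; linarith
    have hR : ∀ n, eLpNorm (Up Y a b Mr n) 1 P ≤ ENNReal.ofReal B := by
      intro n
      rw [eLpNorm_one_eq_lintegral_enorm]
      have hptw : ∀ ω, (‖Up Y a b Mr n ω‖₊ : ℝ≥0∞) ≤
          ENNReal.ofReal (Up Y a b Mr n ω + 2 * Mr) := by
        intro ω
        rw [← enorm_eq_nnnorm, Real.enorm_eq_ofReal_abs]
        apply ENNReal.ofReal_le_ofReal
        rw [abs_le]
        constructor <;> linarith [hlow n ω]
      calc ∫⁻ ω, (‖Up Y a b Mr n ω‖₊ : ℝ≥0∞) ∂P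
          ≤ ∫⁻ ω, ENNReal.ofReal (Up Y a b Mr n ω + 2 * Mr) ∂P :=
            lintegral_mono hptw
        _ = ENNReal.ofReal (∫ ω, (Up Y a b Mr n ω + 2 * Mr) ∂P) :=
            (ofReal_integral_eq_lintegral_ofReal ((hUint n).add (integrable_const _))
              (ae_of_all _ fun ω => by simpa using by linarith [hlow n ω])).symm
        _ ≤ ENNReal.ofReal B := by
            apply ENNReal.ofReal_le_ofReal
            rw [integral_add (hUint n) (integrable_const _), integral_const]
            simp only [measure_univ, probReal_univ, ENNReal.toReal_one, smul_eq_mul, one_mul]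
            rw [hBdef]
            linarith [hint_le n]
    have hbddn : ∀ n, eLpNorm ((-Up Y a b Mr) n) 1 P ≤ (B.toNNReal : ℝ≥0∞) := by
      intro n
      have hne : (-Up Y a b Mr) n = -(Up Y a b Mr n) := rfl
      rw [hne, eLpNorm_neg]
      exact le_trans (hR n) (le_of_eq rfl)
    have hconv := (hsuper.neg).exists_ae_tendsto_of_bdd hbddn
    filter_upwards [hconv] with ω hc
    obtain ⟨c, hc⟩ := hc
    refine ⟨-c, ?_⟩
    have := hc.neg
    simp only [Pi.neg_apply, neg_neg] at this
    exact this
  -- combine the cutoffs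
  have hall : ∀ᵐ ω ∂P, ∀ M : ℕ, ∃ c,
      Tendsto (fun n => Up Y a b (M : ℝ) n ω) atTop (𝓝 c) := ae_all_iff.2 key
  filter_upwards [hall, hasum, hbsum] with ω hU hsa hsb
  obtain ⟨M, hM⟩ := exists_nat_ge (max (∑' n, a n ω) (∑' n, b n ω))
  have hSa : ∀ n, Sp a n ω ≤ (M : ℝ) := fun n =>
    le_trans (hsa.sum_le_tsum _ (fun k _ => hapos k ω))
      (le_trans (le_max_left _ _) hM)
  have hSb : ∀ n, Sp b n ω ≤ (M : ℝ) := fun n =>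
    le_trans (hsb.sum_le_tsum _ (fun k _ => hbpos k ω))
      (le_trans (le_max_right _ _) hM)
  have hMr0 : (0:ℝ) ≤ (M : ℝ) := Nat.cast_nonneg M
  have hUeq : ∀ n, Up Y a b (M : ℝ) n ω = Y n ω / Cp a n ω - Ep a b n ω := fun n =>
    (Up_invariant hapos hbpos hYpos hMr0 n ω).2 ⟨hSa n, hSb n⟩
  obtain ⟨c, hc⟩ := hU M
  have hCmono : Monotone fun n => Cp a n ω :=
    monotone_nat_of_le_succ fun n => Cp_mono hapos n ω
  have hCbdd : BddAbove (Set.range fun n => Cp a n ω) := by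
    refine ⟨Real.exp (M : ℝ), ?_⟩
    rintro x ⟨n, rfl⟩
    exact le_trans (Cp_le_exp hapos n ω) (Real.exp_le_exp.2 (hSa n))
  have hCt := tendsto_atTop_ciSup hCmono hCbdd
  have hEmono : Monotone fun n => Ep a b n ω :=
    monotone_nat_of_le_succ fun n => Ep_mono hapos hbpos n ω
  have hEbdd : BddAbove (Set.range fun n => Ep a b n ω) := by
    refine ⟨(M : ℝ), ?_⟩
    rintro x ⟨n, rfl⟩
    exact le_trans (Ep_le_Sp hapos hbpos n ω) (hSb n)
  have hEt := tendsto_atTop_ciSup hEmono hEbdd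
  refine ⟨(c + ⨆ n, Ep a b n ω) * ⨆ n, Cp a n ω, ?_⟩
  have htend := (hc.add hEt).mul hCt
  refine htend.congr fun n => ?_
  rw [hUeq n]
  have hCne : Cp a n ω ≠ 0 := (Cp_pos hapos n ω).ne'
  field_simp
  ring
end RS

end QuasiFejerAux

open QuasiFejerAux in
theorem stochastic_quasiFejer_dist_converges
    {H : Type*} [NormedAddCommGroup H] [InnerProductSpace ℝ H] [CompleteSpace H]
    [SecondCountableTopology H] [MeasurableSpace H] [BorelSpace H]
    {Ω : Type*} [MeasurableSpace Ω] (P : Measure Ω) [IsProbabilityMeasure P]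
    (F : Set H) (hFne : F.Nonempty) (hFcl : IsClosed F)
    (φ : ℝ → ℝ) (hφmono : StrictMonoOn φ (Set.Ici (0 : ℝ)))
    (hφnonneg : ∀ t, 0 ≤ t → 0 ≤ φ t) (hφtop : Tendsto φ atTop atTop)
    (x : ℕ → Ω → H) (hxm : ∀ n, Measurable (x n))
    (χ ϑ η : H → ℕ → Ω → ℝ)
    (hχnonneg : ∀ z ∈ F, ∀ n, ∀ ω, 0 ≤ χ z n ω)
    (hϑnonneg : ∀ z ∈ F, ∀ n, ∀ ω, 0 ≤ ϑ z n ω)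
    (hηnonneg : ∀ z ∈ F, ∀ n, ∀ ω, 0 ≤ η z n ω)
    (hχmeas : ∀ z ∈ F, ∀ n, Measurable[sigmaFinSeq x n] (χ z n))
    (hϑmeas : ∀ z ∈ F, ∀ n, Measurable[sigmaFinSeq x n] (ϑ z n))
    (hηmeas : ∀ z ∈ F, ∀ n, Measurable[sigmaFinSeq x n] (η z n))
    (hχsum : ∀ z ∈ F, ∀ᵐ ω ∂P, Summable fun n => χ z n ω)
    (hηsum : ∀ z ∈ F, ∀ᵐ ω ∂P, Summable fun n => η z n ω)
    (hint : ∀ z ∈ F, ∀ n, Integrable (fun ω => φ ‖x n ω - z‖) P)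
    (hineq : ∀ z ∈ F, ∀ᵐ ω ∂P, ∀ n,
      (P[fun ω' => φ ‖x (n + 1) ω' - z‖ | sigmaFinSeq x n]) ω + ϑ z n ω ≤
        (1 + χ z n ω) * φ ‖x n ω - z‖ + η z n ω)
    :
    ∃ Ωt : Set Ω, MeasurableSet Ωt ∧ P Ωt = 1 ∧
      ∀ ω ∈ Ωt, ∀ z ∈ F, ∃ l : ℝ,
        Tendsto (fun n => ‖x n ω - z‖) atTop (𝓝 l) := by
  classical
  -- the natural filtration
  let ℱ : Filtration ℕ (inferInstance : MeasurableSpace Ω) :=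
    { seq := sigmaFinSeq x
      mono' := fun i j hij => by
        refine iSup₂_le fun k hk => ?_
        exact le_iSup₂_of_le k (le_trans hk hij) le_rfl
      le' := fun i => by
        refine iSup₂_le fun k _ => ?_
        rintro s ⟨t, ht, rfl⟩
        exact hxm k ht }
  -- measurability of φ ∘ ‖· - z‖ w.r.t. the filtration
  have hψmono : Monotone fun t : ℝ => φ (t ⊔ 0) := fun s t hst =>
    hφmono.monotoneOn (Set.mem_Ici.2 le_sup_right) (Set.mem_Ici.2 le_sup_right)
      (sup_le_sup_right hst 0)
  have hψmeas : Measurable fun t : ℝ => φ (t ⊔ 0) := hψmono.measurable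
  have hxFm : ∀ n, Measurable[sigmaFinSeq x n] (x n) := by
    intro n
    have hle : MeasurableSpace.comap (x n) (inferInstance : MeasurableSpace H) ≤
        sigmaFinSeq x n :=
      le_iSup₂ (f := fun i (_ : i ∈ Set.Iic n) =>
        MeasurableSpace.comap (x i) (inferInstance : MeasurableSpace H)) n
        (Set.mem_Iic.2 le_rfl)
    exact fun s hs => hle _ ⟨s, hs, rfl⟩
  have hYm : ∀ z : H, ∀ n, Measurable[sigmaFinSeq x n] fun ω => φ ‖x n ω - z‖ := by
    intro z n
    have h1 : Measurable[sigmaFinSeq x n] fun ω => x n ω - z :=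
      (hxFm n).sub measurable_const
    have h2 : Measurable[sigmaFinSeq x n] fun ω => ‖x n ω - z‖ :=
      measurable_norm.comp h1
    have heq : (fun ω => φ ‖x n ω - z‖) =
        (fun t : ℝ => φ (t ⊔ 0)) ∘ fun ω => ‖x n ω - z‖ := by
      funext ω
      simp only [Function.comp_apply]
      rw [sup_eq_left.2 (norm_nonneg _)]
    rw [heq]
    exact hψmeas.comp h2
  -- a.s. convergence of φ(‖x n - z‖) for each fixed z ∈ F
  have hφconv : ∀ z ∈ F, ∀ᵐ ω ∂P, ∃ l,
      Tendsto (fun n => φ ‖x n ω - z‖) atTop (𝓝 l) := by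
    intro z hz
    refine robbinsSiegmund ℱ (Y := fun n ω => φ ‖x n ω - z‖) (a := χ z) (b := η z)
      (fun n => hYm z n) (hint z hz) (fun n ω => hφnonneg _ (norm_nonneg _))
      (hχmeas z hz) (hηmeas z hz) (fun n ω => hχnonneg z hz n ω)
      (fun n ω => hηnonneg z hz n ω) (hχsum z hz) (hηsum z hz) ?_
    filter_upwards [hineq z hz] with ω hω
    intro n
    exact le_trans (le_add_of_nonneg_right (hϑnonneg z hz n ω)) (hω n)
  -- countable dense subset of F
  obtain ⟨s, hsc, hsd⟩ := TopologicalSpace.exists_countable_dense (↥F)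
  set D : Set H := Subtype.val '' s with hDdef
  have hDsub : D ⊆ F := by
    rintro z ⟨y, _, rfl⟩
    exact y.2
  have hDc : D.Countable := hsc.image _
  have happrox : ∀ z ∈ F, ∀ ε > (0:ℝ), ∃ z' ∈ D, dist z z' < ε := by
    intro z hz ε hε
    obtain ⟨y, hy, hyd⟩ := hsd.exists_dist_lt (⟨z, hz⟩ : ↥F) hε
    exact ⟨(y : H), ⟨y, hy, rfl⟩, by rwa [Subtype.dist_eq] at hyd⟩
  -- the almost sure event
  have hae : ∀ᵐ ω ∂P, ∀ z ∈ D, ∃ l,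
      Tendsto (fun n => φ ‖x n ω - z‖) atTop (𝓝 l) :=
    (ae_ball_iff hDc).2 fun z hz => hφconv z (hDsub hz)
  set s0 : Set Ω := {ω | ∀ z ∈ D, ∃ l, Tendsto (fun n => φ ‖x n ω - z‖) atTop (𝓝 l)}
    with hs0def
  have hs0c : P s0ᶜ = 0 := by
    rw [ae_iff] at hae
    convert hae using 2
    rfl
  refine ⟨(toMeasurable P s0ᶜ)ᶜ, (measurableSet_toMeasurable P _).compl, ?_, ?_⟩
  · rw [measure_compl (measurableSet_toMeasurable P _) (measure_ne_top P _),
      measure_toMeasurable, hs0c, measure_univ]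
    simp
  · intro ω hω z hz
    have hωs0 : ω ∈ s0 := by
      by_contra hc
      exact hω (subset_toMeasurable P _ hc)
    -- convergence for points of D
    have hDconv : ∀ z' ∈ D, ∃ l, Tendsto (fun n => ‖x n ω - z'‖) atTop (𝓝 l) := by
      intro z' hz'
      obtain ⟨l, hl⟩ := hωs0 z' hz'
      exact tendsto_of_tendsto_phi hφmono hφtop (fun n => norm_nonneg _) hl
    -- Cauchy sequence for arbitrary z ∈ F
    have hcauchy : CauchySeq fun n => ‖x n ω - z‖ := by
      rw [Metric.cauchySeq_iff]
      intro ε hε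
      obtain ⟨z', hz'D, hz'close⟩ := happrox z hz (ε / 8) (by linarith)
      obtain ⟨l, hl⟩ := hDconv z' hz'D
      have hC : CauchySeq fun n => ‖x n ω - z'‖ := hl.cauchySeq
      rw [Metric.cauchySeq_iff] at hC
      obtain ⟨N, hN⟩ := hC (ε / 2) (by linarith)
      refine ⟨N, fun m hm n hn => ?_⟩
      have h1 := hN m hm n hn
      have key : ∀ k, |‖x k ω - z‖ - ‖x k ω - z'‖| ≤ dist z z' := by
        intro k
        have h2 := abs_norm_sub_norm_le (x k ω - z) (x k ω - z')
        have h3 : x k ω - z - (x k ω - z') = z' - z := by abel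
        rw [h3] at h2
        rw [norm_sub_rev z' z] at h2
        rw [dist_eq_norm]
        exact h2
      rw [Real.dist_eq] at h1 ⊢
      have hk1 := key m
      have hk2 := key n
      have hdecomp : ‖x m ω - z‖ - ‖x n ω - z‖ =
          (‖x m ω - z‖ - ‖x m ω - z'‖) + (‖x m ω - z'‖ - ‖x n ω - z'‖) +
            (‖x n ω - z'‖ - ‖x n ω - z‖) := by ring
      rw [hdecomp]
      calc |(‖x m ω - z‖ - ‖x m ω - z'‖) + (‖x m ω - z'‖ - ‖x n ω - z'‖) +
            (‖x n ω - z'‖ - ‖x n ω - z‖)|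
          ≤ |‖x m ω - z‖ - ‖x m ω - z'‖| + |‖x m ω - z'‖ - ‖x n ω - z'‖| +
            |‖x n ω - z'‖ - ‖x n ω - z‖| := abs_add_three _ _ _
        _ < ε := by
            rw [abs_sub_comm (‖x n ω - z'‖)] at *
            linarith [hk1, hk2, h1, hz'close]
    exact cauchySeq_tendsto_of_complete hcauchy
end

section
/- Suppose that for every z ∈ F the stochastic quasi-Fejér inequality E[φ(‖x_{n+1} − z‖) | 𝓧_n] + ϑ_n(z) ≤ (1 + χ_n(z)) φ(‖x_n − z‖) + η_n(z) holds P-a.s. for every n ∈ ℕ, and that P-almost surely every weak sequential cluster point of (x_n)_{n∈ℕ} belongs to F. Then (x_n)_{n∈ℕ} converges weakly P-almost surely to an F-valued random variable, i.e. there exists a measurable x: Ω → H with x(ω) ∈ F for P-a.e. ω and x_n(ω) ⇀ x(ω) weakly for P-a.e. ω. -/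
open MeasureTheory Filter Topology
open scoped RealInnerProductSpace

set_option linter.unusedSectionVars false
set_option maxHeartbeats 1000000

section Helpers


lemma exists_tendsto_of_phi (φ : ℝ → ℝ) (hφmono : StrictMonoOn φ (Set.Ici 0))
    (hφtop : Tendsto φ atTop atTop) (t : ℕ → ℝ) (ht : ∀ n, 0 ≤ t n) {L : ℝ}
    (hL : Tendsto (fun n => φ (t n)) atTop (𝓝 L)) : ∃ a, Tendsto t atTop (𝓝 a) := by
  obtain ⟨T, hT⟩ : ∃ T : ℝ, ∀ s ≥ T, φ s ≥ L + 1 := (hφtop.eventually_ge_atTop (L+1)).exists_forall_of_atTop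
  have hub : ∀ᶠ n in atTop, t n ≤ T := by
    filter_upwards [hL.eventually (eventually_lt_nhds (by linarith : L < L + 1))] with n hn
    by_contra h
    exact absurd (hT _ (le_of_not_ge h)) (not_le.2 hn)
  have hbdd : IsBoundedUnder (· ≤ ·) atTop t := ⟨T, eventually_map.2 hub⟩
  have hbdd' : IsBoundedUnder (· ≥ ·) atTop t := ⟨0, eventually_map.2 (Eventually.of_forall fun n => ht n)⟩
  have hcobdd : IsCoboundedUnder (· ≥ ·) atTop t := hbdd.isCoboundedUnder_ge
  have hcobdd' : IsCoboundedUnder (· ≤ ·) atTop t := hbdd'.isCoboundedUnder_le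
  set a := liminf t atTop with ha
  set b := limsup t atTop with hb
  have hab : a ≤ b := liminf_le_limsup hbdd hbdd'
  have ha0 : 0 ≤ a := le_liminf_of_le hcobdd (Eventually.of_forall fun n => ht n)
  rcases eq_or_lt_of_le hab with h | h
  · exact ⟨a, tendsto_of_liminf_eq_limsup rfl h.symm hbdd hbdd'⟩
  · exfalso
    obtain ⟨s, hs1, hs2⟩ := exists_between h
    obtain ⟨r, hr1, hr2⟩ := exists_between hs2
    have h1 : ∃ᶠ n in atTop, t n < s := frequently_lt_of_liminf_lt hcobdd hs1
    have h2 : ∃ᶠ n in atTop, r < t n := frequently_lt_of_lt_limsup hcobdd' hr2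
    have hs0 : (0:ℝ) ≤ s := le_trans ha0 hs1.le
    have hr0 : (0:ℝ) ≤ r := le_trans hs0 hr1.le
    have hLs : L ≤ φ s := by
      by_contra hc
      have hev : ∀ᶠ n in atTop, φ s < φ (t n) := hL.eventually (eventually_gt_nhds (not_le.1 hc))
      obtain ⟨n, hn1, hn2⟩ := (h1.and_eventually hev).exists
      exact absurd (hφmono (ht n) hs0 hn1) (not_lt.2 hn2.le)
    have hrL : φ r ≤ L := by
      by_contra hc
      have hev : ∀ᶠ n in atTop, φ (t n) < φ r := hL.eventually (eventually_lt_nhds (not_le.1 hc))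
      obtain ⟨n, hn1, hn2⟩ := (h2.and_eventually hev).exists
      exact absurd (hφmono hr0 (ht n) hn1) (not_lt.2 hn2.le)
    have : φ s < φ r := hφmono hs0 hr0 hr1
    linarith

variable {H : Type*} [NormedAddCommGroup H] [InnerProductSpace ℝ H] [CompleteSpace H]
  [SecondCountableTopology H] [MeasurableSpace H] [BorelSpace H]
  {Ω : Type*} [m0 : MeasurableSpace Ω]


lemma weak_limit_of_dense_conv (c : ℕ → H) (hc : DenseRange c) (u : ℕ → H) (C : ℝ)
    (hb : ∀ n, ‖u n‖ ≤ C)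
    (hconv : ∀ i, ∃ L, Tendsto (fun n => (inner ℝ (u n) (c i) : ℝ)) atTop (𝓝 L)) :
    ∃ p : H, ∀ y : H, Tendsto (fun n => (inner ℝ (u n) y : ℝ)) atTop (𝓝 (inner ℝ p y : ℝ)) := by
  have hC0 : 0 ≤ C := (norm_nonneg _).trans (hb 0)
  have hall : ∀ y : H, ∃ L, Tendsto (fun n => (inner ℝ (u n) y : ℝ)) atTop (𝓝 L) := by
    intro y
    apply cauchySeq_tendsto_of_complete
    rw [Metric.cauchySeq_iff]
    intro ε hε
    obtain ⟨i, hi⟩ := Metric.denseRange_iff.1 hc y (ε/(4*(C+1)))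
      (by positivity)
    obtain ⟨L, hL⟩ := hconv i
    obtain ⟨N, hN⟩ := Metric.cauchySeq_iff.1 hL.cauchySeq (ε/2) (by positivity)
    refine ⟨N, fun m hm n hn => ?_⟩
    have key : ∀ j, |(inner ℝ (u j) y : ℝ) - inner ℝ (u j) (c i)| ≤ C * (ε/(4*(C+1))) := by
      intro j
      rw [← inner_sub_right]
      refine (abs_real_inner_le_norm _ _).trans ?_
      have h1 : ‖y - c i‖ ≤ ε/(4*(C+1)) := by
        rw [← dist_eq_norm]; exact hi.le
      have := hb j
      nlinarith [norm_nonneg (y - c i)]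
    have hCe : C * (ε/(4*(C+1))) < ε/4 := by
      rw [mul_div_assoc']
      rw [div_lt_div_iff₀ (by positivity) (by norm_num)]
      nlinarith
    have h2 := hN m hm n hn
    rw [Real.dist_eq] at h2 ⊢
    have e1 := key m
    have e2 := key n
    have : (inner ℝ (u m) y : ℝ) - inner ℝ (u n) y =
        ((inner ℝ (u m) y : ℝ) - inner ℝ (u m) (c i)) + ((inner ℝ (u m) (c i) : ℝ) - inner ℝ (u n) (c i))
        + ((inner ℝ (u n) (c i) : ℝ) - inner ℝ (u n) y) := by ring
    rw [this]
    calc |_| ≤ |(inner ℝ (u m) y : ℝ) - inner ℝ (u m) (c i)| + |(inner ℝ (u m) (c i) : ℝ) - inner ℝ (u n) (c i)|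
        + |(inner ℝ (u n) (c i) : ℝ) - inner ℝ (u n) y| := by
          exact (abs_add_three _ _ _)
      _ < ε := by
          have e2' : |(inner ℝ (u n) (c i) : ℝ) - inner ℝ (u n) y| ≤ C * (ε/(4*(C+1))) := by
            rw [abs_sub_comm]; exact e2
          linarith
  choose f hf using hall
  have hadd : ∀ y z : H, f (y + z) = f y + f z := fun y z =>
    tendsto_nhds_unique (hf (y+z)) (by simpa [inner_add_right] using (hf y).add (hf z))
  have hsmul : ∀ (a : ℝ) (y : H), f (a • y) = a * f y := fun a y =>
    tendsto_nhds_unique (hf (a • y)) (by simpa [real_inner_smul_right] using (hf y).const_mul a)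
  have hbound : ∀ y, ‖f y‖ ≤ C * ‖y‖ := by
    intro y
    rw [Real.norm_eq_abs]
    refine le_of_tendsto (hf y).abs (Eventually.of_forall fun n => ?_)
    exact (abs_real_inner_le_norm _ _).trans (mul_le_mul_of_nonneg_right (hb n) (norm_nonneg _))
  let g : H →L[ℝ] ℝ := LinearMap.mkContinuous
    { toFun := f, map_add' := hadd, map_smul' := hsmul } C hbound
  refine ⟨(InnerProductSpace.toDual ℝ H).symm g, fun y => ?_⟩
  have : (inner ℝ ((InnerProductSpace.toDual ℝ H).symm g) y : ℝ) = g y :=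
    InnerProductSpace.toDual_symm_apply
  rw [this]
  exact hf y

lemma exists_weak_cluster (c : ℕ → H) (hc : DenseRange c) (u : ℕ → H) (C : ℝ)
    (hb : ∀ n, ‖u n‖ ≤ C) :
    ∃ p : H, ∃ k : ℕ → ℕ, StrictMono k ∧
      ∀ y : H, Tendsto (fun j => (inner ℝ (u (k j)) y : ℝ)) atTop (𝓝 (inner ℝ p y : ℝ)) := by
  set S : Set (ℕ → ℝ) := Set.univ.pi (fun i => Set.Icc (-(C*‖c i‖)) (C*‖c i‖)) with hSdef
  have hS : IsCompact S := isCompact_univ_pi fun i => isCompact_Icc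
  have hmem : ∀ n, (fun i => (inner ℝ (u n) (c i) : ℝ)) ∈ S := by
    intro n
    rw [hSdef, Set.mem_univ_pi]
    intro i
    rw [Set.mem_Icc, ← abs_le]
    exact (abs_real_inner_le_norm _ _).trans (mul_le_mul_of_nonneg_right (hb n) (norm_nonneg _))
  obtain ⟨s, -, k, hk, hks⟩ := hS.tendsto_subseq hmem
  have hco : ∀ i, Tendsto (fun j => (inner ℝ (u (k j)) (c i) : ℝ)) atTop (𝓝 (s i)) :=
    fun i => (tendsto_pi_nhds.1 hks i)
  obtain ⟨p, hp⟩ := weak_limit_of_dense_conv c hc (u ∘ k) C (fun j => hb _)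
    (fun i => ⟨s i, hco i⟩)
  exact ⟨p, k, hk, hp⟩


lemma norm_eq_ciSup_inner (d : ℕ → H) (hd1 : ∀ i, ‖d i‖ ≤ 1)
    (hdd : ∀ w : H, ‖w‖ ≤ 1 → ∀ ε > 0, ∃ i, ‖w - d i‖ < ε) (v : H) :
    ‖v‖ = ⨆ i, (inner ℝ v (d i) : ℝ) := by
  have hbdd : BddAbove (Set.range fun i => (inner ℝ v (d i) : ℝ)) := by
    refine ⟨‖v‖, ?_⟩
    rintro - ⟨i, rfl⟩
    calc (inner ℝ v (d i) : ℝ) ≤ |(inner ℝ v (d i) : ℝ)| := le_abs_self _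
      _ ≤ ‖v‖ * ‖d i‖ := abs_real_inner_le_norm _ _
      _ ≤ ‖v‖ * 1 := mul_le_mul_of_nonneg_left (hd1 i) (norm_nonneg v)
      _ = ‖v‖ := mul_one _
  refine le_antisymm ?_ (ciSup_le fun i => ?_)
  · refine le_of_forall_pos_lt_add fun ε hε => ?_
    rcases eq_or_ne v 0 with rfl | hv
    · obtain ⟨i, hi⟩ := hdd 0 (by simp) 1 one_pos
      calc ‖(0:H)‖ = inner ℝ (0:H) (d i) := by simp
        _ ≤ ⨆ j, (inner ℝ (0:H) (d j) : ℝ) := le_ciSup hbdd i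
        _ < _ + ε := lt_add_of_pos_right _ hε
    · have hvn : (0:ℝ) < ‖v‖ := norm_pos_iff.2 hv
      obtain ⟨i, hi⟩ := hdd (‖v‖⁻¹ • v) (by rw [norm_smul, norm_inv, norm_norm, inv_mul_cancel₀ hvn.ne']) (ε / ‖v‖) (by positivity)
      have h1 : (inner ℝ v (‖v‖⁻¹ • v) : ℝ) = ‖v‖ := by
        rw [real_inner_smul_right, real_inner_self_eq_norm_sq]
        field_simp
      have h2 : (inner ℝ v (d i) : ℝ) > ‖v‖ - ε := by
        have : (inner ℝ v (d i) : ℝ) = inner ℝ v (‖v‖⁻¹ • v) - inner ℝ v (‖v‖⁻¹ • v - d i) := by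
          rw [inner_sub_right]; ring
        rw [this, h1]
        have : (inner ℝ v (‖v‖⁻¹ • v - d i) : ℝ) < ε := by
          calc (inner ℝ v (‖v‖⁻¹ • v - d i) : ℝ) ≤ |(inner ℝ v (‖v‖⁻¹ • v - d i) : ℝ)| := le_abs_self _
            _ ≤ ‖v‖ * ‖‖v‖⁻¹ • v - d i‖ := abs_real_inner_le_norm _ _
            _ < ‖v‖ * (ε / ‖v‖) := by
                exact mul_lt_mul_of_pos_left (hi) hvn
            _ = ε := by field_simp
        linarith
      calc ‖v‖ < inner ℝ v (d i) + ε := by linarith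
        _ ≤ _ + ε := by gcongr; exact le_ciSup hbdd i
  · calc (inner ℝ v (d i) : ℝ) ≤ |(inner ℝ v (d i) : ℝ)| := le_abs_self _
      _ ≤ ‖v‖ * ‖d i‖ := abs_real_inner_le_norm _ _
      _ ≤ ‖v‖ * 1 := mul_le_mul_of_nonneg_left (hd1 i) (norm_nonneg v)
      _ = ‖v‖ := mul_one _

lemma measurable_of_inner_measurable (f : Ω → H)
    (h : ∀ y : H, Measurable fun ω => (inner ℝ (f ω) y : ℝ)) : Measurable f := by
  haveI : Nonempty H := ⟨0⟩
  -- a dense sequence in the closed unit ball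
  haveI : TopologicalSpace.SeparableSpace (Metric.closedBall (0:H) 1) := by infer_instance
  haveI : Nonempty (Metric.closedBall (0:H) 1) := ⟨⟨0, by simp⟩⟩
  set d : ℕ → H := fun i => (TopologicalSpace.denseSeq (Metric.closedBall (0:H) 1) i : H) with hd
  have hd1 : ∀ i, ‖d i‖ ≤ 1 := fun i => by
    have := (TopologicalSpace.denseSeq (Metric.closedBall (0:H) 1) i).2
    rw [Metric.mem_closedBall, dist_eq_norm, sub_zero] at this
    exact this
  have hdd : ∀ w : H, ‖w‖ ≤ 1 → ∀ ε > 0, ∃ i, ‖w - d i‖ < ε := by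
    intro w hw ε hε
    have hwmem : w ∈ Metric.closedBall (0:H) 1 := by simp [dist_eq_norm, hw]
    have := TopologicalSpace.denseRange_denseSeq (Metric.closedBall (0:H) 1)
    obtain ⟨i, hi⟩ := Metric.denseRange_iff.1 this ⟨w, hwmem⟩ ε hε
    refine ⟨i, ?_⟩
    rw [Subtype.dist_eq, dist_eq_norm] at hi
    exact hi
  -- norm measurability
  have hnorm : ∀ c : H, Measurable fun ω => ‖f ω - c‖ := by
    intro c
    have : (fun ω => ‖f ω - c‖) = fun ω => ⨆ i, (inner ℝ (f ω - c) (d i) : ℝ) := by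
      ext ω; exact norm_eq_ciSup_inner d hd1 hdd _
    rw [this]
    refine Measurable.iSup fun i => ?_
    have : (fun ω => (inner ℝ (f ω - c) (d i) : ℝ)) =
        fun ω => (inner ℝ (f ω) (d i) : ℝ) - inner ℝ c (d i) := by
      ext ω; rw [inner_sub_left]
    rw [this]
    exact (h (d i)).sub measurable_const
  -- nearest point approximation
  set c' : ℕ → H := TopologicalSpace.denseSeq H with hc'
  have hex : ∀ k : ℕ, ∀ ω, ∃ i, ‖f ω - c' i‖ < 1/(k+1) := by
    intro k ω
    obtain ⟨i, hi⟩ := Metric.denseRange_iff.1 (TopologicalSpace.denseRange_denseSeq H) (f ω)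
      (1/(k+1)) (by positivity)
    exact ⟨i, by rwa [dist_eq_norm] at hi⟩
  classical
  set g : ℕ → Ω → H := fun k ω => c' (Nat.find (hex k ω)) with hg
  have hgm : ∀ k, Measurable (g k) := by
    intro k
    have : Measurable fun ω => Nat.find (hex k ω) := by
      refine measurable_find _ fun i => ?_
      exact measurableSet_lt (hnorm (c' i)) measurable_const
    exact measurable_from_top.comp this
  have hgt : ∀ ω, Tendsto (fun k => g k ω) atTop (𝓝 (f ω)) := by
    intro ω
    rw [tendsto_iff_dist_tendsto_zero]
    refine squeeze_zero (fun k => dist_nonneg) (fun k => ?_) tendsto_one_div_add_atTop_nhds_zero_nat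
    rw [dist_comm, dist_eq_norm]
    exact (Nat.find_spec (hex k ω)).le
  exact measurable_of_tendsto_metrizable hgm (tendsto_pi_nhds.2 hgt)

lemma sigmaFinSeq_le (x : ℕ → Ω → H) (hxm : ∀ n, Measurable (x n)) (n : ℕ) :
    sigmaFinSeq x n ≤ m0 :=
  iSup_le fun i => iSup_le fun _ => (hxm i).comap_le

lemma sigmaFinSeq_mono (x : ℕ → Ω → H) : Monotone (sigmaFinSeq x) := fun a b hab =>
  iSup_le fun i => iSup_le fun hi =>
    le_iSup₂ (f := fun i (_ : i ∈ Set.Iic b) => MeasurableSpace.comap (x i) ‹MeasurableSpace H›)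
      i (le_trans hi hab)

lemma measurable_x_sigmaFinSeq (x : ℕ → Ω → H) {i n : ℕ} (hin : i ≤ n) :
    Measurable[sigmaFinSeq x n] (x i) := by
  rw [measurable_iff_comap_le]
  exact le_iSup₂ (f := fun i (_ : i ∈ Set.Iic n) => MeasurableSpace.comap (x i) ‹MeasurableSpace H›)
    i (Set.mem_Iic.2 hin)

lemma robbins_siegmund_convergence (P : Measure Ω) [IsProbabilityMeasure P]
    (x : ℕ → Ω → H) (hxm : ∀ n, Measurable (x n))
    (ψ : ℝ → ℝ) (hψm : Monotone ψ) (hψnonneg : ∀ t, 0 ≤ ψ t)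
    (χn ηn : ℕ → Ω → ℝ)
    (hχnonneg : ∀ n ω, 0 ≤ χn n ω) (hηnonneg : ∀ n ω, 0 ≤ ηn n ω)
    (hχmeas : ∀ n, Measurable[sigmaFinSeq x n] (χn n))
    (hηmeas : ∀ n, Measurable[sigmaFinSeq x n] (ηn n))
    (hχsum : ∀ᵐ ω ∂P, Summable fun n => χn n ω)
    (hηsum : ∀ᵐ ω ∂P, Summable fun n => ηn n ω)
    (z : H)
    (hint : ∀ n, Integrable (fun ω => ψ ‖x n ω - z‖) P)
    (hineq : ∀ᵐ ω ∂P, ∀ n, (P[fun ω' => ψ ‖x (n+1) ω' - z‖ | sigmaFinSeq x n]) ω ≤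
        (1 + χn n ω) * ψ ‖x n ω - z‖ + ηn n ω) :
    ∀ᵐ ω ∂P, ∃ L, Tendsto (fun n => ψ ‖x n ω - z‖) atTop (𝓝 L) := by
  have hle : ∀ n, sigmaFinSeq x n ≤ m0 := sigmaFinSeq_le x hxm
  have hmono : Monotone (sigmaFinSeq x) := sigmaFinSeq_mono x
  have hψmeas : Measurable ψ := hψm.measurable
  set Y : ℕ → Ω → ℝ := fun n ω => ψ ‖x n ω - z‖ with hYdef
  have hYmeasF : ∀ n, Measurable[sigmaFinSeq x n] (Y n) := by
    intro n
    letI : MeasurableSpace Ω := sigmaFinSeq x n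
    have h1 : Measurable[sigmaFinSeq x n] (x n) := measurable_x_sigmaFinSeq x le_rfl
    exact hψmeas.comp (h1.sub measurable_const).norm
  have hYmeas : ∀ n, Measurable (Y n) := fun n => (hYmeasF n).mono (hle n) le_rfl
  have hYnn : ∀ n ω, 0 ≤ Y n ω := fun n ω => hψnonneg _
  have key : ∀ M : ℕ, ∀ᵐ ω ∂P,
      (∀ n, (∑ k ∈ Finset.range (n+1), χn k ω) ≤ M ∧ (∑ k ∈ Finset.range (n+1), ηn k ω) ≤ M) →
      ∃ L, Tendsto (fun n => Y n ω) atTop (𝓝 L) := by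
    intro M
    set α : ℕ → Ω → ℝ := fun n ω => ∏ k ∈ Finset.range n, (1 + χn k ω) with hαdef
    have hαrec : ∀ n ω, α (n+1) ω = α n ω * (1 + χn n ω) := fun n ω => Finset.prod_range_succ _ _
    have hα1 : ∀ n ω, 1 ≤ α n ω := by
      intro n ω
      induction n with
      | zero => simp [hαdef]
      | succ n ih => rw [hαrec]; nlinarith [hχnonneg n ω]
    have hαpos : ∀ n ω, 0 < α n ω := fun n ω => lt_of_lt_of_le one_pos (hα1 n ω)
    have hαmeasF : ∀ m n, m ≤ n + 1 → Measurable[sigmaFinSeq x n] (α m) := by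
      intro m n hmn
      letI : MeasurableSpace Ω := sigmaFinSeq x n
      apply Finset.measurable_prod
      intro k hk
      have hk' : k ≤ n := by have := Finset.mem_range.1 hk; omega
      exact measurable_const.add ((hχmeas k).mono (hmono hk') le_rfl)
    set B : ℕ → Set Ω := fun n => {ω | (∑ k ∈ Finset.range (n+1), χn k ω) ≤ M ∧
      (∑ k ∈ Finset.range (n+1), ηn k ω) ≤ M} with hBdef
    have hχFn : ∀ k n, k ≤ n → Measurable[sigmaFinSeq x n] (χn k) :=
      fun k n h => (hχmeas k).mono (hmono h) le_rfl
    have hηFn : ∀ k n, k ≤ n → Measurable[sigmaFinSeq x n] (ηn k) :=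
      fun k n h => (hηmeas k).mono (hmono h) le_rfl
    have hBmeas : ∀ n, MeasurableSet[sigmaFinSeq x n] (B n) := by
      intro n
      letI : MeasurableSpace Ω := sigmaFinSeq x n
      have h1 : MeasurableSet[sigmaFinSeq x n] {ω | (∑ k ∈ Finset.range (n+1), χn k ω) ≤ M} := by
        refine measurableSet_le ?_ measurable_const
        exact Finset.measurable_sum _ fun k hk => hχFn k n (by have := Finset.mem_range.1 hk; omega)
      have h2 : MeasurableSet[sigmaFinSeq x n] {ω | (∑ k ∈ Finset.range (n+1), ηn k ω) ≤ M} := by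
        refine measurableSet_le ?_ measurable_const
        exact Finset.measurable_sum _ fun k hk => hηFn k n (by have := Finset.mem_range.1 hk; omega)
      exact (h1.inter h2)
    have hBanti : ∀ m n, m ≤ n → B n ⊆ B m := by
      intro m n hmn ω hω
      obtain ⟨h1, h2⟩ := hω
      constructor
      · refine le_trans (Finset.sum_le_sum_of_subset_of_nonneg
          (Finset.range_subset_range.2 (by omega)) fun k _ _ => hχnonneg k ω) h1
      · refine le_trans (Finset.sum_le_sum_of_subset_of_nonneg
          (Finset.range_subset_range.2 (by omega)) fun k _ _ => hηnonneg k ω) h2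
    set T : ℕ → Ω → ℝ := fun n ω => ∑ k ∈ Finset.range n, ηn k ω / α (k+1) ω with hTdef
    set W : ℕ → Ω → ℝ := fun n ω => Y n ω / α n ω + M - T n ω with hWdef
    set V : ℕ → Ω → ℝ := fun n ω => W 0 ω +
      ∑ k ∈ Finset.range n, (B k).indicator (fun ω' => W (k+1) ω' - W k ω') ω with hVdef
    have hVrec : ∀ n ω, V (n+1) ω = V n ω + (B n).indicator (fun ω' => W (n+1) ω' - W n ω') ω := by
      intro n ω
      simp only [hVdef]
      rw [Finset.sum_range_succ]
      ring
    have hinv : ∀ n ω, ∃ m, m ≤ n ∧ V n ω = W m ω ∧ (∀ k, k < m → ω ∈ B k) ∧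
        (m = n ∨ ω ∉ B m) := by
      intro n
      induction n with
      | zero =>
        intro ω
        refine ⟨0, le_rfl, by simp [hVdef], fun k hk => absurd hk (Nat.not_lt_zero k), Or.inl rfl⟩
      | succ n ih =>
        intro ω
        obtain ⟨m, hmn, hVW, hmem, hlast⟩ := ih ω
        rcases hlast with rfl | hnot
        · by_cases hBn : ω ∈ B m
          · refine ⟨m+1, by omega, ?_, ?_, Or.inl rfl⟩
            · rw [hVrec, Set.indicator_of_mem hBn, hVW]; ring
            · intro k hk
              rcases Nat.lt_succ_iff_lt_or_eq.1 hk with h | h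
              · exact hmem k h
              · subst h; exact hBn
          · exact ⟨m, by omega, by rw [hVrec, Set.indicator_of_notMem hBn, hVW]; ring,
              hmem, Or.inr hBn⟩
        · have hBn : ω ∉ B n := fun hc => hnot (hBanti m n (by omega) hc)
          exact ⟨m, by omega, by rw [hVrec, Set.indicator_of_notMem hBn, hVW]; ring,
            hmem, Or.inr hnot⟩
    have hTnn : ∀ n ω, 0 ≤ T n ω :=
      fun n ω => Finset.sum_nonneg fun k _ => div_nonneg (hηnonneg k ω) (hαpos (k+1) ω).le
    have hTle : ∀ n ω, (∀ k, k < n → ω ∈ B k) → T n ω ≤ M := by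
      intro n ω hmem
      cases n with
      | zero => simp [hTdef]
      | succ n =>
        have h1 : T (n+1) ω ≤ ∑ k ∈ Finset.range (n+1), ηn k ω :=
          Finset.sum_le_sum fun k _ => div_le_self (hηnonneg k ω) (hα1 (k+1) ω)
        exact h1.trans (hmem n (Nat.lt_succ_self n)).2
    have hWbounds : ∀ n ω, (∀ k, k < n → ω ∈ B k) → 0 ≤ W n ω ∧ W n ω ≤ Y n ω + M := by
      intro n ω hmem
      have h1 : 0 ≤ Y n ω / α n ω := div_nonneg (hYnn n ω) (hαpos n ω).le
      have h2 : Y n ω / α n ω ≤ Y n ω := div_le_self (hYnn n ω) (hα1 n ω)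
      have h3 := hTnn n ω
      have h4 := hTle n ω hmem
      constructor
      · simp only [hWdef]; linarith
      · simp only [hWdef]; linarith
    have hVnn : ∀ n ω, 0 ≤ V n ω := by
      intro n ω
      obtain ⟨m, hmn, hVW, hmem, -⟩ := hinv n ω
      rw [hVW]; exact (hWbounds m ω hmem).1
    have hVle : ∀ n ω, V n ω ≤ M + ∑ j ∈ Finset.range (n+1), Y j ω := by
      intro n ω
      obtain ⟨m, hmn, hVW, hmem, -⟩ := hinv n ω
      rw [hVW]
      have h1 := (hWbounds m ω hmem).2
      have h2 : Y m ω ≤ ∑ j ∈ Finset.range (n+1), Y j ω :=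
        Finset.single_le_sum (fun j _ => hYnn j ω) (Finset.mem_range.2 (by omega))
      linarith
    have hWmeasF : ∀ m n, m ≤ n → Measurable[sigmaFinSeq x n] (W m) := by
      intro m n hmn
      letI : MeasurableSpace Ω := sigmaFinSeq x n
      have h1 : Measurable[sigmaFinSeq x n] (Y m) := (hYmeasF m).mono (hmono hmn) le_rfl
      have h2 := hαmeasF m n (by omega)
      have hTm : Measurable[sigmaFinSeq x n] (T m) := by
        apply Finset.measurable_sum
        intro k hk
        have hk' : k < m := Finset.mem_range.1 hk
        exact (hηFn k n (by omega)).div (hαmeasF (k+1) n (by omega))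
      exact ((h1.div h2).add measurable_const).sub hTm
    have hVmeasF : ∀ n, Measurable[sigmaFinSeq x n] (V n) := by
      intro n
      letI : MeasurableSpace Ω := sigmaFinSeq x n
      apply Measurable.add
      · exact hWmeasF 0 n (Nat.zero_le n)
      apply Finset.measurable_sum
      intro k hk
      have hk' : k < n := Finset.mem_range.1 hk
      exact Measurable.indicator
        ((hWmeasF (k+1) n (by omega)).sub (hWmeasF k n hk'.le))
        (hmono hk'.le _ (hBmeas k))
    have hVint : ∀ n, Integrable (V n) P := by
      intro n
      have hg : Integrable (fun ω => (M:ℝ) + ∑ j ∈ Finset.range (n+1), Y j ω) P :=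
        (integrable_const _).add (integrable_finset_sum _ fun j _ => hint j)
      refine hg.mono' ((hVmeasF n).mono (hle n) le_rfl).aestronglyMeasurable ?_
      refine Eventually.of_forall fun ω => ?_
      rw [Real.norm_eq_abs, abs_of_nonneg (hVnn n ω)]
      exact hVle n ω
    have hstep : ∀ n, P[V (n+1) | sigmaFinSeq x n] ≤ᵐ[P] V n := by
      intro n
      set I : Ω → ℝ := (B n).indicator (fun ω => (α (n+1) ω)⁻¹) with hIdef
      have hInn : ∀ ω, 0 ≤ I ω := fun ω =>
        Set.indicator_nonneg (fun ω' _ => inv_nonneg.2 (hαpos (n+1) ω').le) ω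
      have hIle1 : ∀ ω, I ω ≤ 1 := by
        intro ω
        by_cases h : ω ∈ B n
        · rw [hIdef, Set.indicator_of_mem h]
          exact inv_le_one_of_one_le₀ (hα1 (n+1) ω)
        · rw [hIdef, Set.indicator_of_notMem h]; norm_num
      have hImeasF : Measurable[sigmaFinSeq x n] I := by
        letI : MeasurableSpace Ω := sigmaFinSeq x n
        exact ((hαmeasF (n+1) n le_rfl).inv).indicator (hBmeas n)
      set f2 : Ω → ℝ := (B n).indicator (fun ω => Y n ω / α n ω) with hf2def
      set f3 : Ω → ℝ := (B n).indicator (fun ω => ηn n ω / α (n+1) ω) with hf3def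
      have hf2meas : Measurable[sigmaFinSeq x n] f2 := by
        letI : MeasurableSpace Ω := sigmaFinSeq x n
        exact ((hYmeasF n).div (hαmeasF n n (by omega))).indicator (hBmeas n)
      have hf3meas : Measurable[sigmaFinSeq x n] f3 := by
        letI : MeasurableSpace Ω := sigmaFinSeq x n
        exact ((hηFn n n le_rfl).div (hαmeasF (n+1) n le_rfl)).indicator (hBmeas n)
      have hdecomp : V (n+1) = V n + (I * Y (n+1) - f2 - f3) := by
        funext ω
        have hkey2 : (B n).indicator (fun ω' => W (n+1) ω' - W n ω') ω
            = I ω * Y (n+1) ω - f2 ω - f3 ω := by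
          by_cases h : ω ∈ B n
          · rw [hIdef, hf2def, hf3def, Set.indicator_of_mem h, Set.indicator_of_mem h,
              Set.indicator_of_mem h, Set.indicator_of_mem h]
            simp only [hWdef, hTdef, Finset.sum_range_succ]
            ring
          · rw [hIdef, hf2def, hf3def, Set.indicator_of_notMem h, Set.indicator_of_notMem h,
              Set.indicator_of_notMem h, Set.indicator_of_notMem h]
            ring
        simp only [Pi.add_apply, Pi.sub_apply, Pi.mul_apply]
        rw [hVrec, hkey2]
      have hf1int : Integrable (I * Y (n+1)) P := by
        refine (hint (n+1)).mono'
          ((hImeasF.mono (hle n) le_rfl).mul (hYmeas (n+1))).aestronglyMeasurable ?_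
        refine Eventually.of_forall fun ω => ?_
        rw [Pi.mul_apply, Real.norm_eq_abs, abs_of_nonneg (mul_nonneg (hInn ω) (hYnn _ ω))]
        calc I ω * Y (n+1) ω ≤ 1 * Y (n+1) ω :=
            mul_le_mul_of_nonneg_right (hIle1 ω) (hYnn _ ω)
          _ = Y (n+1) ω := one_mul _
      have hf2int : Integrable f2 P := by
        refine (hint n).mono' ((hf2meas.mono (hle n) le_rfl)).aestronglyMeasurable ?_
        refine Eventually.of_forall fun ω => ?_
        rw [Real.norm_eq_abs]
        by_cases h : ω ∈ B n
        · rw [hf2def, Set.indicator_of_mem h,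
            abs_of_nonneg (div_nonneg (hYnn n ω) (hαpos n ω).le)]
          exact div_le_self (hYnn n ω) (hα1 n ω)
        · rw [hf2def, Set.indicator_of_notMem h]
          simpa using hYnn n ω
      have hf3int : Integrable f3 P := by
        refine (integrable_const ((M:ℝ))).mono'
          ((hf3meas.mono (hle n) le_rfl)).aestronglyMeasurable ?_
        refine Eventually.of_forall fun ω => ?_
        rw [Real.norm_eq_abs]
        by_cases h : ω ∈ B n
        · rw [hf3def, Set.indicator_of_mem h,
            abs_of_nonneg (div_nonneg (hηnonneg n ω) (hαpos (n+1) ω).le)]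
          calc ηn n ω / α (n+1) ω ≤ ηn n ω := div_le_self (hηnonneg n ω) (hα1 (n+1) ω)
            _ ≤ ∑ k ∈ Finset.range (n+1), ηn k ω :=
              Finset.single_le_sum (fun k _ => hηnonneg k ω) (Finset.mem_range.2 (by omega))
            _ ≤ M := h.2
        · rw [hf3def, Set.indicator_of_notMem h]
          simp
      have hrest_int : Integrable (I * Y (n+1) - f2 - f3) P := (hf1int.sub hf2int).sub hf3int
      have eA := condExp_add (μ := P) (m := sigmaFinSeq x n) (hVint n) hrest_int
      have eBC := condExp_sub (μ := P) (m := sigmaFinSeq x n) (hf1int.sub hf2int) hf3int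
      have eC := condExp_sub (μ := P) (m := sigmaFinSeq x n) hf1int hf2int
      have e0 : P[V n | sigmaFinSeq x n] = V n :=
        condExp_of_stronglyMeasurable (hle n) (hVmeasF n).stronglyMeasurable (hVint n)
      have e2 : P[f2 | sigmaFinSeq x n] = f2 :=
        condExp_of_stronglyMeasurable (hle n) hf2meas.stronglyMeasurable hf2int
      have e3 : P[f3 | sigmaFinSeq x n] = f3 :=
        condExp_of_stronglyMeasurable (hle n) hf3meas.stronglyMeasurable hf3int
      have e1 : P[I * Y (n+1) | sigmaFinSeq x n] =ᵐ[P] I * P[Y (n+1) | sigmaFinSeq x n] :=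
        condExp_mul_of_stronglyMeasurable_left hImeasF.stronglyMeasurable hf1int
          (show Integrable (Y (n+1)) P from hint (n+1))
      have hineq_ae : ∀ᵐ ω ∂P, (P[Y (n+1) | sigmaFinSeq x n]) ω ≤
          (1 + χn n ω) * Y n ω + ηn n ω := by
        filter_upwards [hineq] with ω hω using hω n
      have hmain : P[V (n+1) | sigmaFinSeq x n] =ᵐ[P]
          fun ω => V n ω + (I ω * (P[Y (n+1) | sigmaFinSeq x n]) ω - f2 ω - f3 ω) := by
        rw [hdecomp]
        filter_upwards [eA, eBC, eC, e1] with ω hA hBC hC h1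
        rw [hA, Pi.add_apply, e0, hBC, Pi.sub_apply, hC, Pi.sub_apply, h1, e2, e3, Pi.mul_apply]
      filter_upwards [hmain, hineq_ae] with ω hm hi
      rw [hm]
      by_cases h : ω ∈ B n
      · have hI : I ω = (α (n+1) ω)⁻¹ := by rw [hIdef]; exact Set.indicator_of_mem h _
        have hf2' : f2 ω = Y n ω / α n ω := by rw [hf2def]; exact Set.indicator_of_mem h _
        have hf3' : f3 ω = ηn n ω / α (n+1) ω := by rw [hf3def]; exact Set.indicator_of_mem h _
        have hb : I ω * (P[Y (n+1)|sigmaFinSeq x n]) ω ≤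
            I ω * ((1 + χn n ω) * Y n ω + ηn n ω) := mul_le_mul_of_nonneg_left hi (hInn ω)
        have hput : (α (n+1) ω)⁻¹ * ((1 + χn n ω) * Y n ω + ηn n ω)
            = Y n ω / α n ω + ηn n ω / α (n+1) ω := by
          have h1 : α n ω ≠ 0 := (hαpos n ω).ne'
          have h2 : (1 : ℝ) + χn n ω ≠ 0 := by have := hχnonneg n ω; intro hc; linarith
          rw [hαrec]
          field_simp
        rw [hI, hput] at hb
        rw [hI, hf2', hf3']
        rw [← hI]
        rw [hI]
        linarith
      · have hI : I ω = 0 := by rw [hIdef]; exact Set.indicator_of_notMem h _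
        have hf2' : f2 ω = 0 := by rw [hf2def]; exact Set.indicator_of_notMem h _
        have hf3' : f3 ω = 0 := by rw [hf3def]; exact Set.indicator_of_notMem h _
        rw [hI, hf2', hf3']
        simp
    set 𝓕 : Filtration ℕ m0 := ⟨fun n => sigmaFinSeq x n, hmono, hle⟩ with h𝓕
    have hadp : StronglyAdapted 𝓕 V := fun n => (hVmeasF n).stronglyMeasurable
    have hsuper : Supermartingale V 𝓕 P := supermartingale_nat hadp hVint fun n => hstep n
    have hIbd : ∀ n, ∫ ω, V n ω ∂P ≤ ∫ ω, V 0 ω ∂P := by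
      intro n
      induction n with
      | zero => exact le_rfl
      | succ n ih =>
        have h1 : ∫ ω, (P[V (n+1)|sigmaFinSeq x n]) ω ∂P = ∫ ω, V (n+1) ω ∂P :=
          integral_condExp (hle n)
        have h2 : ∫ ω, (P[V (n+1)|sigmaFinSeq x n]) ω ∂P ≤ ∫ ω, V n ω ∂P :=
          integral_mono_ae integrable_condExp (hVint n) (hstep n)
        linarith
    have hbdd : ∀ n, eLpNorm (V n) 1 P ≤ ENNReal.ofReal (∫ ω, V 0 ω ∂P) := by
      intro n
      rw [eLpNorm_one_eq_lintegral_enorm, ← ofReal_integral_norm_eq_lintegral_enorm (hVint n)]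
      apply ENNReal.ofReal_le_ofReal
      calc ∫ ω, ‖V n ω‖ ∂P = ∫ ω, V n ω ∂P := by
            refine integral_congr_ae (Eventually.of_forall fun ω => ?_)
            exact Real.norm_of_nonneg (hVnn n ω)
        _ ≤ _ := hIbd n
    have hconv := hsuper.neg.ae_tendsto_limitProcess (R := (∫ ω, V 0 ω ∂P).toNNReal)
      (fun n => by
        have hne : (-V) n = -(V n) := rfl
        rw [hne, eLpNorm_neg]; exact hbdd n)
    filter_upwards [hconv] with ω hω hBall
    have hmemB : ∀ k, ω ∈ B k := fun k => ⟨(hBall k).1, (hBall k).2⟩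
    have hVWeq : ∀ n, V n ω = W n ω := by
      intro n
      obtain ⟨m, hmn, hVW2, hmem, hlast⟩ := hinv n ω
      rcases hlast with rfl | hnot
      · exact hVW2
      · exact absurd (hmemB m) hnot
    have hWlim : Tendsto (fun n => W n ω) atTop (𝓝 (-(𝓕.limitProcess (-V) P ω))) := by
      have h2 : Tendsto (fun n => -((-V) n ω)) atTop (𝓝 (-(𝓕.limitProcess (-V) P ω))) := hω.neg
      simp only [Pi.neg_apply, neg_neg] at h2
      exact Tendsto.congr (fun n => hVWeq n) h2
    have hexpbd : BddAbove (Set.range fun n => α n ω) := by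
      refine ⟨Real.exp M, ?_⟩
      rintro - ⟨n, rfl⟩
      have h1 : α n ω ≤ Real.exp (∑ k ∈ Finset.range n, χn k ω) := by
        rw [Real.exp_sum]
        refine Finset.prod_le_prod (fun k _ => by linarith [hχnonneg k ω]) (fun k _ => ?_)
        have := Real.add_one_le_exp (χn k ω)
        linarith
      refine h1.trans (Real.exp_le_exp.2 ?_)
      calc ∑ k ∈ Finset.range n, χn k ω ≤ ∑ k ∈ Finset.range (n+1), χn k ω :=
          Finset.sum_le_sum_of_subset_of_nonneg (Finset.range_subset_range.2 (by omega))
            fun k _ _ => hχnonneg k ω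
        _ ≤ M := (hmemB n).1
    have hαmono : Monotone fun n => α n ω := by
      apply monotone_nat_of_le_succ
      intro n
      rw [hαrec]
      nlinarith [hχnonneg n ω, hαpos n ω]
    have hαlim : Tendsto (fun n => α n ω) atTop (𝓝 (⨆ n, α n ω)) :=
      tendsto_atTop_ciSup hαmono hexpbd
    have hTmono : Monotone fun n => T n ω := by
      apply monotone_nat_of_le_succ
      intro n
      simp only [hTdef, Finset.sum_range_succ]
      have := div_nonneg (hηnonneg n ω) (hαpos (n+1) ω).le
      linarith
    have hTbdd : BddAbove (Set.range fun n => T n ω) := by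
      refine ⟨M, ?_⟩
      rintro - ⟨n, rfl⟩
      exact hTle n ω fun k _ => hmemB k
    have hTlim : Tendsto (fun n => T n ω) atTop (𝓝 (⨆ n, T n ω)) :=
      tendsto_atTop_ciSup hTmono hTbdd
    refine ⟨((-(𝓕.limitProcess (-V) P ω)) - M + ⨆ n, T n ω) * ⨆ n, α n ω, ?_⟩
    have hYeq : ∀ n, Y n ω = (W n ω - M + T n ω) * α n ω := by
      intro n
      simp only [hWdef]
      rw [show Y n ω / α n ω + (M:ℝ) - T n ω - M + T n ω = Y n ω / α n ω from by ring,
        div_mul_cancel₀ _ (hαpos n ω).ne']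
    have hfin : Tendsto (fun n => (W n ω - M + T n ω) * α n ω) atTop
        (𝓝 (((-(𝓕.limitProcess (-V) P ω)) - M + ⨆ n, T n ω) * ⨆ n, α n ω)) :=
      ((hWlim.sub tendsto_const_nhds).add hTlim).mul hαlim
    exact Tendsto.congr (fun n => (hYeq n).symm) hfin
  have hkeyall : ∀ᵐ ω ∂P, ∀ M : ℕ,
      ((∀ n, (∑ k ∈ Finset.range (n+1), χn k ω) ≤ M ∧ (∑ k ∈ Finset.range (n+1), ηn k ω) ≤ M) →
      ∃ L, Tendsto (fun n => Y n ω) atTop (𝓝 L)) := ae_all_iff.2 key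
  filter_upwards [hχsum, hηsum, hkeyall] with ω hχs hηs hkey
  refine hkey (⌈∑' n, χn n ω⌉₊ + ⌈∑' n, ηn n ω⌉₊) fun n => ?_
  have hχt : (0:ℝ) ≤ ∑' k, ηn k ω := tsum_nonneg fun k => hηnonneg k ω
  constructor
  · calc ∑ k ∈ Finset.range (n+1), χn k ω ≤ ∑' k, χn k ω :=
        Summable.sum_le_tsum _ (fun k _ => hχnonneg k ω) hχs
      _ ≤ (⌈∑' k, χn k ω⌉₊ : ℝ) := Nat.le_ceil _
      _ ≤ _ := by exact_mod_cast Nat.le_add_right _ _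
  · calc ∑ k ∈ Finset.range (n+1), ηn k ω ≤ ∑' k, ηn k ω :=
        Summable.sum_le_tsum _ (fun k _ => hηnonneg k ω) hηs
      _ ≤ (⌈∑' k, ηn k ω⌉₊ : ℝ) := Nat.le_ceil _
      _ ≤ _ := by exact_mod_cast Nat.le_add_left _ _

lemma exists_strictMono_comp {ns : ℕ → ℕ} (hns : Tendsto ns atTop atTop) :
    ∃ ms : ℕ → ℕ, StrictMono ms ∧ StrictMono (ns ∘ ms) := by
  have hgex : ∀ (i N : ℕ), ∃ j, i < j ∧ N < ns j := by
    intro i N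
    obtain ⟨m, hm⟩ := (hns.eventually_gt_atTop N).exists_forall_of_atTop
    exact ⟨max (i+1) m, by omega, hm _ (le_max_right _ _)⟩
  choose g hg1 hg2 using hgex
  set ms : ℕ → ℕ := fun n => Nat.rec 0 (fun _ prev => g prev (ns prev)) n with hms
  have hrec : ∀ n, ms (n+1) = g (ms n) (ns (ms n)) := fun n => rfl
  have h1 : StrictMono ms := strictMono_nat_of_lt_succ fun n => by
    rw [hrec]; exact hg1 _ _
  have h2 : StrictMono (ns ∘ ms) := strictMono_nat_of_lt_succ fun n => by
    show ns (ms n) < ns (ms (n+1))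
    rw [hrec]; exact hg2 _ _
  exact ⟨ms, h1, h2⟩

lemma quasi_fejer_endgame (F : Set H) (D : Set H) (hDF : D ⊆ F) (hDd : F ⊆ closure D)
    (hDne : D.Nonempty) (u : ℕ → H)
    (h1 : ∀ z ∈ D, ∃ L, Tendsto (fun n => ‖u n - z‖) atTop (𝓝 L))
    (h2 : ∀ p : H, IsWeakClusterPt p u → p ∈ F) :
    ∃ p ∈ F, ∀ y : H, Tendsto (fun n => (inner ℝ (u n) y : ℝ)) atTop (𝓝 (inner ℝ p y : ℝ)) := by
  haveI : Nonempty H := ⟨0⟩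
  obtain ⟨z₀, hz₀⟩ := hDne
  obtain ⟨L₀, hL₀⟩ := h1 z₀ hz₀
  obtain ⟨C₀, hC₀⟩ : ∃ C₀, ∀ n, ‖u n - z₀‖ ≤ C₀ := by
    obtain ⟨C₀, hC₀⟩ := hL₀.bddAbove_range
    exact ⟨C₀, fun n => hC₀ ⟨n, rfl⟩⟩
  have hub : ∀ n, ‖u n‖ ≤ C₀ + ‖z₀‖ := by
    intro n
    calc ‖u n‖ = ‖u n - z₀ + z₀‖ := by congr 1; abel
      _ ≤ ‖u n - z₀‖ + ‖z₀‖ := norm_add_le _ _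
      _ ≤ C₀ + ‖z₀‖ := by linarith [hC₀ n]
  -- norm convergence extends to all of F
  have hconv_all : ∀ p ∈ F, ∃ L, Tendsto (fun n => ‖u n - p‖) atTop (𝓝 L) := by
    intro p hp
    apply cauchySeq_tendsto_of_complete
    rw [Metric.cauchySeq_iff]
    intro ε hε
    obtain ⟨z, hzD, hzp⟩ := Metric.mem_closure_iff.1 (hDd hp) (ε/4) (by positivity)
    obtain ⟨L, hL⟩ := h1 z hzD
    obtain ⟨N, hN⟩ := Metric.cauchySeq_iff.1 hL.cauchySeq (ε/4) (by positivity)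
    refine ⟨N, fun m hm n hn => ?_⟩
    have key : ∀ j, |‖u j - p‖ - ‖u j - z‖| ≤ ‖z - p‖ := by
      intro j
      have := abs_norm_sub_norm_le (u j - p) (u j - z)
      have he : (u j - p) - (u j - z) = z - p := by abel
      rw [he] at this
      exact this
    have hNmn := hN m hm n hn
    rw [Real.dist_eq] at hNmn ⊢
    have e1 := key m
    have e2 := key n
    have hzp' : ‖z - p‖ < ε/4 := by
      rw [← dist_eq_norm]
      rw [dist_comm]
      exact hzp
    have hsplit : ‖u m - p‖ - ‖u n - p‖ =
        (‖u m - p‖ - ‖u m - z‖) + (‖u m - z‖ - ‖u n - z‖) + (‖u n - z‖ - ‖u n - p‖) := by ring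
    rw [hsplit]
    have := abs_add_three (‖u m - p‖ - ‖u m - z‖) (‖u m - z‖ - ‖u n - z‖)
      (‖u n - z‖ - ‖u n - p‖)
    have e2' : |‖u n - z‖ - ‖u n - p‖| ≤ ‖z - p‖ := by rw [abs_sub_comm]; exact e2
    calc |_| ≤ _ := this
      _ < ε := by linarith
  -- existence of a weak cluster point
  set c : ℕ → H := TopologicalSpace.denseSeq H with hc
  have hcd : DenseRange c := TopologicalSpace.denseRange_denseSeq H
  obtain ⟨p, k, hk, hpy⟩ := exists_weak_cluster c hcd u (C₀ + ‖z₀‖) hub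
  have hpF : p ∈ F := h2 p ⟨k, hk, hpy⟩
  -- uniqueness of weak cluster points
  have huniq : ∀ q q' : H, IsWeakClusterPt q u → IsWeakClusterPt q' u → q = q' := by
    intro q q' hq hq'
    have hqF := h2 q hq
    have hq'F := h2 q' hq'
    obtain ⟨Lq, hLq⟩ := hconv_all q hqF
    obtain ⟨Lq', hLq'⟩ := hconv_all q' hq'F
    have hid : ∀ n, (inner ℝ (u n) (q - q') : ℝ) =
        (‖u n - q'‖ * ‖u n - q'‖ - ‖u n - q‖ * ‖u n - q‖ + ‖q‖^2 - ‖q'‖^2)/2 := by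
      intro n
      have e1 : ‖u n - q'‖^2 = ‖u n‖^2 - 2*(inner ℝ (u n) q' : ℝ) + ‖q'‖^2 := norm_sub_sq_real _ _
      have e2 : ‖u n - q‖^2 = ‖u n‖^2 - 2*(inner ℝ (u n) q : ℝ) + ‖q‖^2 := norm_sub_sq_real _ _
      rw [inner_sub_right]
      nlinarith [e1, e2]
    have hfull : Tendsto (fun n => (inner ℝ (u n) (q - q') : ℝ)) atTop
        (𝓝 ((Lq' * Lq' - Lq * Lq + ‖q‖^2 - ‖q'‖^2)/2)) := by
      have := ((((hLq'.mul hLq').sub (hLq.mul hLq)).add_const (‖q‖^2)).sub_const (‖q'‖^2)).div_const 2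
      refine Tendsto.congr (fun n => ?_) this
      rw [hid n]
    obtain ⟨kq, hkq, hkqy⟩ := hq
    obtain ⟨kq', hkq', hkqy'⟩ := hq'
    have hsub1 : Tendsto (fun j => (inner ℝ (u (kq j)) (q - q') : ℝ)) atTop
        (𝓝 ((Lq' * Lq' - Lq * Lq + ‖q‖^2 - ‖q'‖^2)/2)) :=
      hfull.comp hkq.tendsto_atTop
    have hsub2 : Tendsto (fun j => (inner ℝ (u (kq' j)) (q - q') : ℝ)) atTop
        (𝓝 ((Lq' * Lq' - Lq * Lq + ‖q‖^2 - ‖q'‖^2)/2)) :=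
      hfull.comp hkq'.tendsto_atTop
    have hq1 : (inner ℝ q (q - q') : ℝ) = (Lq' * Lq' - Lq * Lq + ‖q‖^2 - ‖q'‖^2)/2 :=
      tendsto_nhds_unique (hkqy (q - q')) hsub1
    have hq2 : (inner ℝ q' (q - q') : ℝ) = (Lq' * Lq' - Lq * Lq + ‖q‖^2 - ‖q'‖^2)/2 :=
      tendsto_nhds_unique (hkqy' (q - q')) hsub2
    have : (inner ℝ (q - q') (q - q') : ℝ) = 0 := by
      rw [inner_sub_left, hq1, hq2, sub_self]
    have hz : q - q' = 0 := inner_self_eq_zero.1 this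
    exact sub_eq_zero.1 hz
  refine ⟨p, hpF, fun y => ?_⟩
  apply tendsto_of_subseq_tendsto
  intro ns hns
  obtain ⟨ms₀, hms₀, hcomp⟩ := exists_strictMono_comp hns
  obtain ⟨p', k', hk', hpy'⟩ := exists_weak_cluster c hcd (fun j => u (ns (ms₀ j)))
    (C₀ + ‖z₀‖) (fun j => hub _)
  have hp'cl : IsWeakClusterPt p' u := by
    refine ⟨(ns ∘ ms₀) ∘ k', hcomp.comp hk', fun y' => ?_⟩
    exact hpy' y'
  have hp'p : p' = p := huniq p' p hp'cl ⟨k, hk, hpy⟩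
  exact ⟨ms₀ ∘ k', by rw [← hp'p]; exact hpy' y⟩

end Helpers

theorem stochastic_quasiFejer_weak_convergence
    {H : Type*} [NormedAddCommGroup H] [InnerProductSpace ℝ H] [CompleteSpace H]
    [SecondCountableTopology H] [MeasurableSpace H] [BorelSpace H]
    {Ω : Type*} [MeasurableSpace Ω] (P : Measure Ω) [IsProbabilityMeasure P]
    (F : Set H) (hFne : F.Nonempty) (hFcl : IsClosed F)
    (φ : ℝ → ℝ) (hφmono : StrictMonoOn φ (Set.Ici (0 : ℝ)))
    (hφnonneg : ∀ t, 0 ≤ t → 0 ≤ φ t) (hφtop : Tendsto φ atTop atTop)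
    (x : ℕ → Ω → H) (hxm : ∀ n, Measurable (x n))
    (χ ϑ η : H → ℕ → Ω → ℝ)
    (hχnonneg : ∀ z ∈ F, ∀ n, ∀ ω, 0 ≤ χ z n ω)
    (hϑnonneg : ∀ z ∈ F, ∀ n, ∀ ω, 0 ≤ ϑ z n ω)
    (hηnonneg : ∀ z ∈ F, ∀ n, ∀ ω, 0 ≤ η z n ω)
    (hχmeas : ∀ z ∈ F, ∀ n, Measurable[sigmaFinSeq x n] (χ z n))
    (hϑmeas : ∀ z ∈ F, ∀ n, Measurable[sigmaFinSeq x n] (ϑ z n))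
    (hηmeas : ∀ z ∈ F, ∀ n, Measurable[sigmaFinSeq x n] (η z n))
    (hχsum : ∀ z ∈ F, ∀ᵐ ω ∂P, Summable fun n => χ z n ω)
    (hηsum : ∀ z ∈ F, ∀ᵐ ω ∂P, Summable fun n => η z n ω)
    (hint : ∀ z ∈ F, ∀ n, Integrable (fun ω => φ ‖x n ω - z‖) P)
    (hineq : ∀ z ∈ F, ∀ᵐ ω ∂P, ∀ n,
      (P[fun ω' => φ ‖x (n + 1) ω' - z‖ | sigmaFinSeq x n]) ω + ϑ z n ω ≤
        (1 + χ z n ω) * φ ‖x n ω - z‖ + η z n ω)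
    (hweak : ∀ᵐ ω ∂P, ∀ p : H, IsWeakClusterPt p (fun n => x n ω) → p ∈ F) :
    ∃ xlim : Ω → H, Measurable xlim ∧ (∀ᵐ ω ∂P, xlim ω ∈ F) ∧
      ∀ᵐ ω ∂P, ∀ y : H,
        Tendsto (fun n => (inner ℝ (x n ω) y : ℝ)) atTop (𝓝 (inner ℝ (xlim ω) y : ℝ)) := by
  classical
  haveI : Nonempty H := ⟨0⟩
  -- a monotone extension of φ
  set ψ : ℝ → ℝ := fun t => φ (max t 0) with hψdef
  have hψφ : ∀ w : H, ψ ‖w‖ = φ ‖w‖ := fun w => by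
    rw [hψdef]; simp [max_eq_left (norm_nonneg w)]
  have hψm : Monotone ψ := fun s t hst =>
    hφmono.monotoneOn (Set.mem_Ici.2 (le_max_right s 0)) (Set.mem_Ici.2 (le_max_right t 0))
      (max_le_max hst le_rfl)
  have hψnonneg : ∀ t, 0 ≤ ψ t := fun t => hφnonneg _ (le_max_right t 0)
  -- a countable dense subset of F
  haveI hFne' : Nonempty ↥F := hFne.to_subtype
  obtain ⟨s, hsc, hsd⟩ := TopologicalSpace.exists_countable_dense ↥F
  have hsne : s.Nonempty := hsd.nonempty
  obtain ⟨e, he⟩ := (hsc.image Subtype.val).exists_eq_range (hsne.image _)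
  set D : Set H := Set.range e with hD
  have hDF : D ⊆ F := by
    rw [← he]
    rintro - ⟨⟨a, ha⟩, -, rfl⟩
    exact ha
  have hDd : F ⊆ closure D := by
    intro p hp
    rw [← he]
    have h1 : (⟨p, hp⟩ : ↥F) ∈ closure s := hsd _
    exact map_mem_closure continuous_subtype_val h1 fun a ha => Set.mem_image_of_mem _ ha
  have heF : ∀ i, e i ∈ F := fun i => hDF ⟨i, rfl⟩
  -- norm convergence towards each point of D
  have hnorm : ∀ i : ℕ, ∀ᵐ ω ∂P, ∃ a, Tendsto (fun n => ‖x n ω - e i‖) atTop (𝓝 a) := by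
    intro i
    set z := e i with hz
    have hzF := heF i
    have hintz : ∀ n, Integrable (fun ω => ψ ‖x n ω - z‖) P := by
      intro n
      have h1 : (fun ω => ψ ‖x n ω - z‖) = fun ω => φ ‖x n ω - z‖ := funext fun ω => hψφ _
      rw [h1]; exact hint z hzF n
    have hineqz : ∀ᵐ ω ∂P, ∀ n, (P[fun ω' => ψ ‖x (n+1) ω' - z‖ | sigmaFinSeq x n]) ω ≤
        (1 + χ z n ω) * ψ ‖x n ω - z‖ + η z n ω := by
      filter_upwards [hineq z hzF] with ω hω n
      have h1 : (fun ω' => ψ ‖x (n+1) ω' - z‖) = fun ω' => φ ‖x (n+1) ω' - z‖ :=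
        funext fun ω' => hψφ _
      rw [h1, hψφ]
      have h2 := hω n
      have h3 := hϑnonneg z hzF n ω
      linarith
    have hconv := robbins_siegmund_convergence P x hxm ψ hψm hψnonneg (χ z) (η z)
      (fun n ω => hχnonneg z hzF n ω) (fun n ω => hηnonneg z hzF n ω)
      (hχmeas z hzF) (hηmeas z hzF) (hχsum z hzF) (hηsum z hzF) z hintz hineqz
    filter_upwards [hconv] with ω hω
    obtain ⟨L, hL⟩ := hω
    have hL' : Tendsto (fun n => φ ‖x n ω - z‖) atTop (𝓝 L) :=
      Tendsto.congr (fun n => hψφ _) hL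
    exact exists_tendsto_of_phi φ hφmono hφtop _ (fun n => norm_nonneg _) hL'
  have hnormall : ∀ᵐ ω ∂P, ∀ i, ∃ a, Tendsto (fun n => ‖x n ω - e i‖) atTop (𝓝 a) :=
    ae_all_iff.2 hnorm
  -- the measurable "good" set
  set c : ℕ → H := TopologicalSpace.denseSeq H with hc
  have hcd : DenseRange c := TopologicalSpace.denseRange_denseSeq H
  set G : Set Ω := {ω | (∃ C : ℕ, ∀ n, ‖x n ω‖ ≤ C) ∧
    ∀ i, ∃ L, Tendsto (fun n => (inner ℝ (x n ω) (c i) : ℝ)) atTop (𝓝 L)} with hG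
  have hGmeas : MeasurableSet G := by
    rw [hG, Set.setOf_and]
    apply MeasurableSet.inter
    · rw [Set.setOf_exists]
      refine MeasurableSet.iUnion fun C => ?_
      rw [Set.setOf_forall]
      exact MeasurableSet.iInter fun n => measurableSet_le (hxm n).norm measurable_const
    · rw [Set.setOf_forall]
      refine MeasurableSet.iInter fun i => ?_
      exact measurableSet_exists_tendsto fun n =>
        ((hxm n).stronglyMeasurable.inner stronglyMeasurable_const).measurable
  have hGp : ∀ ω, ω ∈ G → ∃ p : H,
      ∀ y, Tendsto (fun n => (inner ℝ (x n ω) y : ℝ)) atTop (𝓝 (inner ℝ p y : ℝ)) := by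
    intro ω hω
    obtain ⟨⟨C, hC⟩, hconv⟩ := hω
    exact weak_limit_of_dense_conv c hcd (fun n => x n ω) C hC hconv
  set xlim : Ω → H := fun ω => if h : ω ∈ G then (hGp ω h).choose else 0 with hxlim
  have hweakmeas : ∀ y : H, Measurable fun ω => (inner ℝ (xlim ω) y : ℝ) := by
    intro y
    have heq : (fun ω => (inner ℝ (xlim ω) y : ℝ)) =
        G.piecewise (fun ω => liminf (fun n => (inner ℝ (x n ω) y : ℝ)) atTop)
          (fun _ => (0:ℝ)) := by
      funext ω
      by_cases h : ω ∈ G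
      · rw [Set.piecewise_eq_of_mem _ _ _ h]
        have hch : xlim ω = (hGp ω h).choose := by rw [hxlim]; exact dif_pos h
        rw [hch]
        exact ((hGp ω h).choose_spec y).liminf_eq.symm
      · rw [Set.piecewise_eq_of_notMem _ _ _ h]
        have hch : xlim ω = 0 := by rw [hxlim]; exact dif_neg h
        rw [hch, inner_zero_left]
    rw [heq]
    exact Measurable.piecewise hGmeas
      (Measurable.liminf fun n =>
        ((hxm n).stronglyMeasurable.inner stronglyMeasurable_const).measurable)
      measurable_const
  have hae : ∀ᵐ ω ∂P, xlim ω ∈ F ∧ ∀ y : H,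
      Tendsto (fun n => (inner ℝ (x n ω) y : ℝ)) atTop (𝓝 (inner ℝ (xlim ω) y : ℝ)) := by
    filter_upwards [hweak, hnormall] with ω hw hn
    have hDne : D.Nonempty := ⟨e 0, 0, rfl⟩
    have h1 : ∀ z ∈ D, ∃ L, Tendsto (fun n => ‖x n ω - z‖) atTop (𝓝 L) := by
      rintro z ⟨i, rfl⟩
      exact hn i
    obtain ⟨p, hpF, hpy⟩ := quasi_fejer_endgame F D hDF hDd hDne (fun n => x n ω) h1 hw
    have hωG : ω ∈ G := by
      constructor
      · obtain ⟨a, ha⟩ := hn 0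
        obtain ⟨C₀, hC₀⟩ := ha.bddAbove_range
        refine ⟨⌈C₀ + ‖e 0‖⌉₊, fun n => ?_⟩
        have h2 : ‖x n ω - e 0‖ ≤ C₀ := hC₀ ⟨n, rfl⟩
        calc ‖x n ω‖ = ‖x n ω - e 0 + e 0‖ := by congr 1; abel
          _ ≤ ‖x n ω - e 0‖ + ‖e 0‖ := norm_add_le _ _
          _ ≤ C₀ + ‖e 0‖ := by linarith
          _ ≤ ⌈C₀ + ‖e 0‖⌉₊ := Nat.le_ceil _
      · exact fun i => ⟨inner ℝ p (c i), hpy (c i)⟩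
    have hxp : xlim ω = p := by
      have hch : xlim ω = (hGp ω hωG).choose := by rw [hxlim]; exact dif_pos hωG
      rw [hch]
      refine ext_inner_right ℝ fun v => ?_
      exact tendsto_nhds_unique ((hGp ω hωG).choose_spec v) (hpy v)
    rw [hxp]
    exact ⟨hpF, hpy⟩
  exact ⟨xlim, measurable_of_inner_measurable xlim hweakmeas,
    hae.mono fun ω h => h.1, hae.mono fun ω h => h.2⟩
end

section
/- Suppose that for every z ∈ F the stochastic quasi-Fejér inequality E[φ(‖x_{n+1} − z‖) | 𝓧_n] + ϑ_n(z) ≤ (1 + χ_n(z)) φ(‖x_n − z‖) + η_n(z) holds P-a.s. for every n ∈ ℕ, and that P-almost surely (x_n)_{n∈ℕ} has a strong sequential cluster point belonging to F. Then (x_n)_{n∈ℕ} converges strongly (in norm) P-almost surely to an F-valued random variable. -/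
open MeasureTheory Filter Topology
open scoped RealInnerProductSpace
open scoped NNReal ENNReal

/-- Robbins–Siegmund-type almost-supermartingale convergence (without the `ϑ` term). -/
lemma robbins_siegmund_lite {Ω : Type*} [m0 : MeasurableSpace Ω] (P : Measure Ω)
    [IsProbabilityMeasure P] (ℱ : Filtration ℕ m0)
    (V χ η : ℕ → Ω → ℝ)
    (hVadp : ∀ n, StronglyMeasurable[ℱ n] (V n))
    (hVint : ∀ n, Integrable (V n) P)
    (hVnn : ∀ n ω, 0 ≤ V n ω)
    (hχad : ∀ n, Measurable[ℱ n] (χ n)) (hχnn : ∀ n ω, 0 ≤ χ n ω)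
    (hηad : ∀ n, Measurable[ℱ n] (η n)) (hηnn : ∀ n ω, 0 ≤ η n ω)
    (hχsum : ∀ᵐ ω ∂P, Summable fun n => χ n ω)
    (hηsum : ∀ᵐ ω ∂P, Summable fun n => η n ω)
    (hineq : ∀ᵐ ω ∂P, ∀ n, (P[V (n+1) | ℱ n]) ω ≤ (1 + χ n ω) * V n ω + η n ω) :
    ∀ᵐ ω ∂P, ∃ c, Tendsto (fun n => V n ω) atTop (𝓝 c) := by
  classical
  -- the compounded factor
  set A : ℕ → Ω → ℝ := fun n ω => ∏ k ∈ Finset.range n, (1 + χ k ω) with hA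
  have hA1 : ∀ n ω, 1 ≤ A n ω := by
    intro n ω
    show (1:ℝ) ≤ ∏ k ∈ Finset.range n, (1 + χ k ω)
    calc (1:ℝ) = ∏ _k ∈ Finset.range n, 1 := by simp
      _ ≤ ∏ k ∈ Finset.range n, (1 + χ k ω) :=
        Finset.prod_le_prod (by simp) (fun k _ => by linarith [hχnn k ω])
  have hApos : ∀ n ω, 0 < A n ω := fun n ω => lt_of_lt_of_le one_pos (hA1 n ω)
  have hAsucc : ∀ n ω, A (n+1) ω = A n ω * (1 + χ n ω) := by
    intro n ω; simp [hA, Finset.prod_range_succ]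
  have hAmeas : ∀ n m, m ≤ n + 1 → Measurable[ℱ n] (A m) := by
    intro n m hm
    apply Finset.measurable_prod
    intro k hk
    have hk' : k ≤ n := by
      have := Finset.mem_range.1 hk; omega
    exact (measurable_const.add (hχad k)).mono (ℱ.mono hk') le_rfl
  -- W, e, S
  set W : ℕ → Ω → ℝ := fun n ω => V n ω / A n ω with hW
  set e : ℕ → Ω → ℝ := fun n ω => η n ω / A (n+1) ω with he
  set S : ℕ → Ω → ℝ := fun n ω => ∑ k ∈ Finset.range n, e k ω with hS
  have hWnn : ∀ n ω, 0 ≤ W n ω := fun n ω => div_nonneg (hVnn n ω) (hApos n ω).le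
  have hWleV : ∀ n ω, W n ω ≤ V n ω := fun n ω =>
    div_le_self (hVnn n ω) (hA1 n ω)
  have hWadp : ∀ n, StronglyMeasurable[ℱ n] (W n) := by
    intro n
    exact ((hVadp n).measurable.div (hAmeas n n (by omega))).stronglyMeasurable
  have hWint : ∀ n, Integrable (W n) P := by
    intro n
    refine (hVint n).mono' (((hWadp n).mono (ℱ.le n)).aestronglyMeasurable) ?_
    exact Eventually.of_forall fun ω => by
      rw [Real.norm_eq_abs, abs_of_nonneg (hWnn n ω)]; exact hWleV n ω
  have henn : ∀ n ω, 0 ≤ e n ω := fun n ω => div_nonneg (hηnn n ω) (hApos _ ω).le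
  have heleη : ∀ n ω, e n ω ≤ η n ω := fun n ω => div_le_self (hηnn n ω) (hA1 _ ω)
  have headp : ∀ n, Measurable[ℱ n] (e n) :=
    fun n => (hηad n).div (hAmeas n (n+1) le_rfl)
  have hSnn : ∀ n ω, 0 ≤ S n ω := fun n ω =>
    Finset.sum_nonneg fun k _ => henn k ω
  have hSsucc : ∀ n ω, S (n+1) ω = S n ω + e n ω := by
    intro n ω; simp [hS, Finset.sum_range_succ]
  have hSmono : ∀ {i j : ℕ}, i ≤ j → ∀ ω, S i ω ≤ S j ω := by
    intro i j hij ω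
    exact Finset.sum_le_sum_of_subset_of_nonneg
      (Finset.range_subset_range.2 hij) (fun k _ _ => henn k ω)
  have hSadp : ∀ n, Measurable[ℱ n] (S (n+1)) := by
    intro n
    apply Finset.measurable_sum
    intro k hk
    have hk' : k ≤ n := by have := Finset.mem_range.1 hk; omega
    exact (headp k).mono (ℱ.mono hk') le_rfl
  -- the key conditional-expectation estimate
  have hS0 : ∀ ω, S 0 ω = 0 := fun ω => by simp [hS]
  have hann : ∀ n ω, 0 < 1 + χ n ω := fun n ω => by linarith [hχnn n ω]
  have hcond : ∀ n, (P[W (n+1) | ℱ n]) ≤ᵐ[P] fun ω => W n ω + e n ω := by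
    intro n
    have hg : StronglyMeasurable[ℱ n] (fun ω => (A (n+1) ω)⁻¹) :=
      ((hAmeas n (n+1) le_rfl).inv).stronglyMeasurable
    have hprod : (fun ω => (A (n+1) ω)⁻¹) * V (n+1) = W (n+1) := by
      funext ω
      show (A (n+1) ω)⁻¹ * V (n+1) ω = V (n+1) ω / A (n+1) ω
      rw [div_eq_inv_mul]
    have hint1 : Integrable ((fun ω => (A (n+1) ω)⁻¹) * V (n+1)) P := by
      rw [hprod]; exact hWint (n+1)
    have hpull := condExp_mul_of_stronglyMeasurable_left hg hint1 (hVint (n+1))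
    rw [hprod] at hpull
    filter_upwards [hpull, hineq] with ω hω hineqω
    have h1 := hineqω n
    have hgnn : (0:ℝ) ≤ (A (n+1) ω)⁻¹ := inv_nonneg.2 (hApos _ ω).le
    calc (P[W (n+1)|ℱ n]) ω = (A (n+1) ω)⁻¹ * (P[V (n+1)|ℱ n]) ω := hω
      _ ≤ (A (n+1) ω)⁻¹ * ((1 + χ n ω) * V n ω + η n ω) :=
          mul_le_mul_of_nonneg_left h1 hgnn
      _ = W n ω + e n ω := by
          show (A (n+1) ω)⁻¹ * ((1 + χ n ω) * V n ω + η n ω)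
            = V n ω / A n ω + η n ω / A (n+1) ω
          rw [hAsucc n ω]
          have h0 : A n ω ≠ 0 := (hApos n ω).ne'
          have h1' : (1 + χ n ω) ≠ 0 := (hann n ω).ne'
          field_simp
  -- for each integer bound a, a stopped supermartingale
  have hZ : ∀ a : ℕ, ∀ᵐ ω ∂P,
      (∀ n, S (n+1) ω ≤ (a : ℝ)) → ∃ c, Tendsto (fun n => W n ω - S n ω) atTop (𝓝 c) := by
    intro a
    have hacast : (0:ℝ) ≤ (a:ℝ) := Nat.cast_nonneg a
    set G : ℕ → Set Ω := fun n => {ω | ∀ k ≤ n, S (k+1) ω ≤ (a:ℝ)} with hG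
    have hGmeas : ∀ n, MeasurableSet[ℱ n] (G n) := by
      intro n
      have hGeq : G n = ⋂ (k : ℕ) (_ : k ≤ n), {ω | S (k+1) ω ≤ (a:ℝ)} := by
        ext ω; simp [hG]
      rw [hGeq]
      refine MeasurableSet.iInter fun k => MeasurableSet.iInter fun hk => ?_
      exact measurableSet_le ((hSadp k).mono (ℱ.mono hk) le_rfl) measurable_const
    have hGanti : ∀ {i j : ℕ}, i ≤ j → G j ⊆ G i := fun hij ω hω k hk => hω k (hk.trans hij)
    have heG : ∀ n ω, ω ∈ G n → e n ω ≤ (a:ℝ) := by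
      intro n ω hω
      have h1 : S (n+1) ω ≤ (a:ℝ) := hω n le_rfl
      have h2 : 0 ≤ S n ω := hSnn n ω
      have h3 : S (n+1) ω = S n ω + e n ω := hSsucc n ω
      linarith
    set T : ℕ → Ω → ℝ := fun n => (G n).indicator (fun ω => W (n+1) ω - W n ω - e n ω) with hT
    set Z : ℕ → Ω → ℝ := fun n ω => W 0 ω + ∑ k ∈ Finset.range n, T k ω with hZdef
    have hZsucc : ∀ n ω, Z (n+1) ω = Z n ω + T n ω := by
      intro n ω
      show W 0 ω + ∑ k ∈ Finset.range (n+1), T k ω = _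
      rw [Finset.sum_range_succ, ← add_assoc]
    have hZ0 : ∀ ω, Z 0 ω = W 0 ω := fun ω => by simp [hZdef]
    have hTbound : ∀ n ω, |T n ω| ≤ W (n+1) ω + W n ω + (a:ℝ) := by
      intro n ω
      by_cases h : ω ∈ G n
      · rw [hT]
        simp only [Set.indicator_of_mem h]
        rw [abs_le]
        constructor
        · have := heG n ω h
          have := hWnn (n+1) ω; have := hWnn n ω; have := henn n ω
          linarith
        · have := hWnn (n+1) ω; have := hWnn n ω; have := henn n ω
          linarith
      · rw [hT]
        simp only [Set.indicator_of_notMem h, abs_zero]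
        have := hWnn (n+1) ω; have := hWnn n ω
        linarith
    have hTadp : ∀ n, StronglyMeasurable[ℱ (n+1)] (T n) := by
      intro n
      refine StronglyMeasurable.indicator ?_ ((ℱ.mono (Nat.le_succ n)) _ (hGmeas n))
      exact ((hWadp (n+1)).sub ((hWadp n).mono (ℱ.mono (Nat.le_succ n)))).sub
        (((headp n).mono (ℱ.mono (Nat.le_succ n)) le_rfl).stronglyMeasurable)
    have hTint : ∀ n, Integrable (T n) P := by
      intro n
      refine Integrable.mono' (((hWint (n+1)).add (hWint n)).add (integrable_const (a:ℝ)))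
        (((hTadp n).mono (ℱ.le (n+1))).aestronglyMeasurable) ?_
      exact Eventually.of_forall fun ω => by
        rw [Real.norm_eq_abs]
        simpa using hTbound n ω
    have hZadp : StronglyAdapted ℱ Z := by
      intro n
      refine StronglyMeasurable.add ((hWadp 0).mono (ℱ.mono (Nat.zero_le n))) ?_
      refine Finset.stronglyMeasurable_fun_sum _ fun k hk => ?_
      have hk' : k + 1 ≤ n := Finset.mem_range.1 hk
      exact (hTadp k).mono (ℱ.mono hk')
    have hZint : ∀ n, Integrable (Z n) P := by
      intro n
      exact (hWint 0).add (integrable_finset_sum _ fun k _ => hTint k)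
    set I : ℕ → Ω → ℝ := fun n => (G n).indicator (fun _ => (1:ℝ)) with hI
    have hInn : ∀ n ω, 0 ≤ I n ω := fun n ω => Set.indicator_nonneg (fun _ _ => zero_le_one) ω
    have hISM : ∀ n, StronglyMeasurable[ℱ n] (I n) :=
      fun n => stronglyMeasurable_const.indicator (hGmeas n)
    have hTsplit : ∀ n, T n = I n * W (n+1) - I n * (fun ω => W n ω + e n ω) := by
      intro n
      funext ω
      by_cases h : ω ∈ G n
      · simp only [hT, hI, Pi.sub_apply, Pi.mul_apply, Set.indicator_of_mem h]
        ring
      · simp only [hT, hI, Pi.sub_apply, Pi.mul_apply, Set.indicator_of_notMem h]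
        ring
    have hIW : ∀ n, Integrable (I n * W (n+1)) P := by
      intro n
      refine Integrable.mono' (hWint (n+1))
        ((((hISM n).mono (ℱ.le n)).mul ((hWadp (n+1)).mono (ℱ.le (n+1)))).aestronglyMeasurable) ?_
      refine Eventually.of_forall fun ω => ?_
      rw [Real.norm_eq_abs, Pi.mul_apply]
      by_cases h : ω ∈ G n
      · simp only [hI, Set.indicator_of_mem h]
        rw [abs_of_nonneg (by simpa using hWnn (n+1) ω)]
        simpa using le_refl (W (n+1) ω)
      · simp only [hI, Set.indicator_of_notMem h]
        rw [zero_mul, abs_zero]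
        exact hWnn (n+1) ω
    have hIWe : ∀ n, Integrable (I n * (fun ω => W n ω + e n ω)) P := by
      intro n
      refine Integrable.mono' ((hWint n).add (integrable_const (a:ℝ)))
        ((((hISM n).mono (ℱ.le n)).mul
          (((hWadp n).mono (ℱ.le n)).add
            (((headp n).mono (ℱ.le n) le_rfl).stronglyMeasurable))).aestronglyMeasurable) ?_
      refine Eventually.of_forall fun ω => ?_
      rw [Real.norm_eq_abs, Pi.mul_apply]
      by_cases h : ω ∈ G n
      · simp only [hI, Set.indicator_of_mem h, one_mul]
        rw [abs_of_nonneg (add_nonneg (hWnn n ω) (henn n ω))]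
        have := heG n ω h
        simp only [Pi.add_apply]
        linarith
      · simp only [hI, Set.indicator_of_notMem h, zero_mul, abs_zero]
        have := hWnn n ω
        simp only [Pi.add_apply]
        linarith
    -- supermartingale property
    have hsuperineq : ∀ n, (P[Z (n+1) | ℱ n]) ≤ᵐ[P] Z n := by
      intro n
      have hZfun : Z (n+1) = Z n + T n := funext fun ω => hZsucc n ω
      have h1 : (P[Z (n+1) | ℱ n]) =ᵐ[P] (P[Z n | ℱ n]) + (P[T n | ℱ n]) := by
        rw [hZfun]; exact condExp_add (hZint n) (hTint n) _
      have h2 : (P[Z n | ℱ n]) = Z n :=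
        condExp_of_stronglyMeasurable (ℱ.le n) (hZadp n) (hZint n)
      have h3 : (P[T n | ℱ n]) =ᵐ[P]
          (P[I n * W (n+1) | ℱ n]) - (P[I n * (fun ω => W n ω + e n ω) | ℱ n]) := by
        rw [hTsplit n]; exact condExp_sub (hIW n) (hIWe n) _
      have h4 : (P[I n * W (n+1) | ℱ n]) =ᵐ[P] I n * (P[W (n+1) | ℱ n]) :=
        condExp_mul_of_stronglyMeasurable_left (hISM n) (hIW n) (hWint (n+1))
      have h5 : (P[I n * (fun ω => W n ω + e n ω) | ℱ n]) = I n * (fun ω => W n ω + e n ω) :=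
        condExp_of_stronglyMeasurable (ℱ.le n)
          ((hISM n).mul ((hWadp n).add ((headp n).stronglyMeasurable))) (hIWe n)
      filter_upwards [h1, h3, h4, hcond n] with ω hω1 hω3 hω4 hω5
      rw [hω1, h2]
      have : (P[T n | ℱ n]) ω ≤ 0 := by
        rw [hω3]
        simp only [Pi.sub_apply, Pi.mul_apply]
        rw [hω4, h5]
        simp only [Pi.mul_apply]
        have := mul_le_mul_of_nonneg_left hω5 (hInn n ω)
        linarith
      simp only [Pi.add_apply]
      linarith
    have hsuper : Supermartingale Z ℱ P := supermartingale_nat hZadp hZint hsuperineq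
    -- pathwise identification of the stopped process
    have hZstop : ∀ n ω, ω ∈ G n → Z (n+1) ω = W (n+1) ω - S (n+1) ω := by
      intro n
      induction n with
      | zero =>
        intro ω hω
        rw [hZsucc, hZ0]
        rw [hT]
        simp only [Set.indicator_of_mem hω]
        have h1 : S 1 ω = S 0 ω + e 0 ω := hSsucc 0 ω
        rw [hS0 ω] at h1
        rw [h1]
        ring
      | succ m ih =>
        intro ω hω
        have hωm : ω ∈ G m := hGanti (Nat.le_succ m) hω
        rw [hZsucc, ih ω hωm]
        rw [hT]
        simp only [Set.indicator_of_mem hω]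
        rw [hSsucc (m+1) ω]
        ring
    have hZrep : ∀ n ω, ∃ m, Z n ω = W m ω - S m ω ∧ S m ω ≤ (a:ℝ) := by
      intro n
      induction n with
      | zero =>
        intro ω
        refine ⟨0, ?_, by rw [hS0 ω]; exact hacast⟩
        rw [hZ0, hS0]; ring
      | succ m ih =>
        intro ω
        by_cases h : ω ∈ G m
        · exact ⟨m+1, hZstop m ω h, h m le_rfl⟩
        · obtain ⟨j, h1, h2⟩ := ih ω
          refine ⟨j, ?_, h2⟩
          rw [hZsucc, hT]
          simp only [Set.indicator_of_notMem h]
          rw [add_zero, h1]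
    have hZlb : ∀ n ω, -(a:ℝ) ≤ Z n ω := by
      intro n ω
      obtain ⟨m, h1, h2⟩ := hZrep n ω
      rw [h1]
      have := hWnn m ω
      linarith
    -- L¹ bound
    have hZabs : ∀ n ω, |Z n ω| ≤ Z n ω + 2*(a:ℝ) := by
      intro n ω
      rcases abs_cases (Z n ω) with ⟨h1, _⟩ | ⟨h1, h2⟩
      · rw [h1]; linarith
      · rw [h1]; have := hZlb n ω; linarith
    have hintmono : ∀ n, ∫ ω, Z n ω ∂P ≤ ∫ ω, Z 0 ω ∂P := by
      intro n
      have h1 : ∫ ω, Z n ω ∂P = ∫ ω, (P[Z n | ℱ 0]) ω ∂P :=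
        (integral_condExp (ℱ.le 0)).symm
      rw [h1]
      exact integral_mono_ae integrable_condExp (hZint 0) (hsuper.2.1 0 n (Nat.zero_le n))
    set R : ℝ≥0 := (∫ ω, Z 0 ω ∂P + 2*(a:ℝ)).toNNReal with hR
    have hbdd : ∀ n, eLpNorm ((-Z) n) 1 P ≤ (R : ℝ≥0∞) := by
      intro n
      have hneg : (-Z) n = -(Z n) := rfl
      rw [hneg, eLpNorm_neg]
      have h1 : eLpNorm (Z n) 1 P = ENNReal.ofReal (∫ ω, ‖Z n ω‖ ∂P) := by
        rw [eLpNorm_one_eq_lintegral_enorm,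
          ← ofReal_integral_norm_eq_lintegral_enorm (hZint n)]
      rw [h1]
      have h2 : ∫ ω, ‖Z n ω‖ ∂P ≤ ∫ ω, Z 0 ω ∂P + 2*(a:ℝ) := by
        have h3 : ∫ ω, ‖Z n ω‖ ∂P ≤ ∫ ω, (Z n ω + 2*(a:ℝ)) ∂P := by
          refine integral_mono_ae (hZint n).norm ((hZint n).add (integrable_const _)) ?_
          exact Eventually.of_forall fun ω => by
            simp only []
            rw [Real.norm_eq_abs]; exact hZabs n ω
        rw [integral_add (hZint n) (integrable_const _), integral_const] at h3
        simp only [probReal_univ, measure_univ, ENNReal.toReal_one, smul_eq_mul, one_mul] at h3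
        linarith [hintmono n]
      calc ENNReal.ofReal (∫ ω, ‖Z n ω‖ ∂P) ≤ ENNReal.ofReal (∫ ω, Z 0 ω ∂P + 2*(a:ℝ)) :=
            ENNReal.ofReal_le_ofReal h2
        _ = (R : ℝ≥0∞) := rfl
    have hconv := hsuper.neg.exists_ae_tendsto_of_bdd hbdd
    filter_upwards [hconv] with ω hcω hGall
    obtain ⟨c, hc⟩ := hcω
    have hωG : ∀ n, ω ∈ G n := fun n k _ => hGall k
    have hZeq : ∀ n, Z n ω = W n ω - S n ω := by
      intro n
      cases n with
      | zero => rw [hZ0, hS0]; ring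
      | succ m => exact hZstop m ω (hωG m)
    refine ⟨-c, ?_⟩
    have hc' : Tendsto (fun n => Z n ω) atTop (𝓝 (-c)) := by
      have := hc.neg
      simp only [Pi.neg_apply, neg_neg] at this
      exact this
    exact hc'.congr fun n => hZeq n

  -- combine
  rw [← ae_all_iff] at hZ
  filter_upwards [hχsum, hηsum, hZ] with ω hχs hηs hZω
  have hesum : Summable fun n => e n ω :=
    Summable.of_nonneg_of_le (fun n => henn n ω) (fun n => heleη n ω) hηs
  obtain ⟨a, ha⟩ : ∃ a : ℕ, ∀ n, S (n+1) ω ≤ (a : ℝ) := by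
    refine ⟨⌈∑' n, e n ω⌉₊, fun n => ?_⟩
    exact le_trans (Summable.sum_le_tsum _ (fun k _ => henn k ω) hesum) (Nat.le_ceil _)
  obtain ⟨c, hc⟩ := hZω a ha
  -- S converges
  have hStend : Tendsto (fun n => S n ω) atTop (𝓝 (∑' n, e n ω)) :=
    hesum.hasSum.tendsto_sum_nat
  -- A converges
  have hAbd : ∀ n, A n ω ≤ Real.exp (∑' k, χ k ω) := by
    intro n
    calc A n ω ≤ ∏ k ∈ Finset.range n, Real.exp (χ k ω) :=
          Finset.prod_le_prod (fun k _ => by linarith [hχnn k ω])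
            (fun k _ => by linarith [Real.add_one_le_exp (χ k ω)])
      _ = Real.exp (∑ k ∈ Finset.range n, χ k ω) := by rw [Real.exp_sum]
      _ ≤ Real.exp (∑' k, χ k ω) := Real.exp_le_exp.2
          (Summable.sum_le_tsum _ (fun k _ => hχnn k ω) hχs)
  have hAmono : Monotone fun n => A n ω := by
    apply monotone_nat_of_le_succ
    intro n
    rw [hAsucc n ω]
    nlinarith [hApos n ω, hχnn n ω]
  have hAtend : Tendsto (fun n => A n ω) atTop (𝓝 (⨆ n, A n ω)) :=
    tendsto_atTop_ciSup hAmono ⟨Real.exp (∑' k, χ k ω), fun v ⟨n, hn⟩ => hn ▸ hAbd n⟩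
  -- conclude
  have hVeq : ∀ n, (W n ω - S n ω + S n ω) * A n ω = V n ω := by
    intro n
    rw [sub_add_cancel]
    exact div_mul_cancel₀ _ (hApos n ω).ne'
  refine ⟨(c + ∑' n, e n ω) * ⨆ n, A n ω, ?_⟩
  have : Tendsto (fun n => (W n ω - S n ω + S n ω) * A n ω) atTop
      (𝓝 ((c + ∑' n, e n ω) * ⨆ n, A n ω)) := ((hc.add hStend).mul hAtend)
  exact this.congr fun n => hVeq n
theorem stochastic_quasiFejer_strong_convergence_of_strong_cluster
    {H : Type*} [NormedAddCommGroup H] [InnerProductSpace ℝ H] [CompleteSpace H]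
    [SecondCountableTopology H] [MeasurableSpace H] [BorelSpace H]
    {Ω : Type*} [MeasurableSpace Ω] (P : Measure Ω) [IsProbabilityMeasure P]
    (F : Set H) (hFne : F.Nonempty) (hFcl : IsClosed F)
    (φ : ℝ → ℝ) (hφmono : StrictMonoOn φ (Set.Ici (0 : ℝ)))
    (hφnonneg : ∀ t, 0 ≤ t → 0 ≤ φ t) (hφtop : Tendsto φ atTop atTop)
    (x : ℕ → Ω → H) (hxm : ∀ n, Measurable (x n))
    (χ ϑ η : H → ℕ → Ω → ℝ)
    (hχnonneg : ∀ z ∈ F, ∀ n, ∀ ω, 0 ≤ χ z n ω)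
    (hϑnonneg : ∀ z ∈ F, ∀ n, ∀ ω, 0 ≤ ϑ z n ω)
    (hηnonneg : ∀ z ∈ F, ∀ n, ∀ ω, 0 ≤ η z n ω)
    (hχmeas : ∀ z ∈ F, ∀ n, Measurable[sigmaFinSeq x n] (χ z n))
    (hϑmeas : ∀ z ∈ F, ∀ n, Measurable[sigmaFinSeq x n] (ϑ z n))
    (hηmeas : ∀ z ∈ F, ∀ n, Measurable[sigmaFinSeq x n] (η z n))
    (hχsum : ∀ z ∈ F, ∀ᵐ ω ∂P, Summable fun n => χ z n ω)
    (hηsum : ∀ z ∈ F, ∀ᵐ ω ∂P, Summable fun n => η z n ω)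
    (hint : ∀ z ∈ F, ∀ n, Integrable (fun ω => φ ‖x n ω - z‖) P)
    (hineq : ∀ z ∈ F, ∀ᵐ ω ∂P, ∀ n,
      (P[fun ω' => φ ‖x (n + 1) ω' - z‖ | sigmaFinSeq x n]) ω + ϑ z n ω ≤
        (1 + χ z n ω) * φ ‖x n ω - z‖ + η z n ω)
    (hstrong : ∀ᵐ ω ∂P, ∃ p ∈ F, IsStrongClusterPt p (fun n => x n ω)) :
    ∃ xlim : Ω → H, Measurable xlim ∧ (∀ᵐ ω ∂P, xlim ω ∈ F) ∧
      ∀ᵐ ω ∂P, Tendsto (fun n => x n ω) atTop (𝓝 (xlim ω)) := by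
  classical
  -- the filtration
  have hle : ∀ n, sigmaFinSeq x n ≤ ‹MeasurableSpace Ω› := by
    intro n
    refine iSup₂_le fun i _ => ?_
    exact (hxm i).comap_le
  have hcomap_le : ∀ (n i : ℕ), i ≤ n →
      MeasurableSpace.comap (x i) ‹MeasurableSpace H› ≤ sigmaFinSeq x n := by
    intro n i hi
    exact le_iSup₂ (f := fun i (_ : i ∈ Set.Iic n) =>
      MeasurableSpace.comap (x i) ‹MeasurableSpace H›) i (Set.mem_Iic.2 hi)
  have hmono : Monotone (sigmaFinSeq x) := by
    intro i j hij
    refine iSup₂_le fun k hk => ?_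
    exact hcomap_le j k ((Set.mem_Iic.1 hk).trans hij)
  let ℱ : Filtration ℕ ‹MeasurableSpace Ω› := ⟨sigmaFinSeq x, hmono, hle⟩
  have hxn : ∀ n, Measurable[sigmaFinSeq x n] (x n) := fun n =>
    measurable_iff_comap_le.2 (hcomap_le n n le_rfl)
  -- a monotone measurable extension of φ
  set g : ℝ → ℝ := fun t => φ (max t 0) with hg
  have hgmono : Monotone g := by
    intro s t hst
    exact hφmono.monotoneOn (Set.mem_Ici.2 (le_max_right _ _))
      (Set.mem_Ici.2 (le_max_right _ _)) (max_le_max hst le_rfl)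
  have hgφ : ∀ t, 0 ≤ t → g t = φ t := fun t ht => by rw [hg]; simp [max_eq_left ht]
  have hVadp : ∀ (z : H) (n : ℕ),
      StronglyMeasurable[sigmaFinSeq x n] (fun ω => φ ‖x n ω - z‖) := by
    intro z n
    have h1 : Measurable fun v : H => g ‖v - z‖ :=
      hgmono.measurable.comp (measurable_id.sub measurable_const).norm
    have h2 : Measurable[sigmaFinSeq x n] fun ω => g ‖x n ω - z‖ := h1.comp (hxn n)
    have h3 : (fun ω => g ‖x n ω - z‖) = fun ω => φ ‖x n ω - z‖ :=
      funext fun ω => hgφ _ (norm_nonneg _)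
    rw [h3] at h2
    exact h2.stronglyMeasurable
  -- almost sure convergence of φ ‖x n - z‖ for each z ∈ F
  have hconv : ∀ z ∈ F, ∀ᵐ ω ∂P, ∃ c,
      Tendsto (fun n => φ ‖x n ω - z‖) atTop (𝓝 c) := by
    intro z hz
    refine robbins_siegmund_lite P ℱ (fun n ω => φ ‖x n ω - z‖) (χ z) (η z)
      (hVadp z) (hint z hz) (fun n ω => hφnonneg _ (norm_nonneg _))
      (hχmeas z hz) (fun n ω => hχnonneg z hz n ω)
      (hηmeas z hz) (fun n ω => hηnonneg z hz n ω)
      (hχsum z hz) (hηsum z hz) ?_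
    filter_upwards [hineq z hz] with ω hω n
    exact le_trans (le_add_of_nonneg_right (hϑnonneg z hz n ω)) (hω n)
  -- a countable dense subset of F
  obtain ⟨D, hDcount, hDdense⟩ := TopologicalSpace.exists_countable_dense (↥F)
  set Zs : Set H := Subtype.val '' D with hZs
  have hZcount : Zs.Countable := hDcount.image _
  have hZsub : Zs ⊆ F := by
    rintro _ ⟨⟨v, hv⟩, _, rfl⟩
    exact hv
  have hZapprox : ∀ p ∈ F, ∀ ε > 0, ∃ z ∈ Zs, ‖p - z‖ < ε := by
    intro p hp ε hε
    have h1 : (⟨p, hp⟩ : ↥F) ∈ closure D := hDdense _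
    rcases Metric.mem_closure_iff.1 h1 ε hε with ⟨q, hqD, hq⟩
    refine ⟨q, ⟨q, hqD, rfl⟩, ?_⟩
    rw [← dist_eq_norm]
    simpa [Subtype.dist_eq] using hq
  have hall : ∀ᵐ ω ∂P, ∀ z ∈ Zs, ∃ c, Tendsto (fun n => φ ‖x n ω - z‖) atTop (𝓝 c) :=
    (ae_ball_iff hZcount).2 fun z hz => hconv z (hZsub hz)
  -- almost sure strong convergence
  have hlim : ∀ᵐ ω ∂P, ∃ p ∈ F, Tendsto (fun n => x n ω) atTop (𝓝 p) := by
    filter_upwards [hall, hstrong] with ω hω hcl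
    obtain ⟨p, hpF, k, hkmono, hk⟩ := hcl
    refine ⟨p, hpF, ?_⟩
    rw [Metric.tendsto_atTop]
    intro ε hε
    have hδ : 0 < ε/5 := by linarith
    obtain ⟨z, hzZ, hz⟩ := hZapprox p hpF (ε/5) hδ
    obtain ⟨c, hc⟩ := hω z hzZ
    have hsub : Tendsto (fun j => φ ‖x (k j) ω - z‖) atTop (𝓝 c) :=
      hc.comp hkmono.tendsto_atTop
    have h1 : ∀ᶠ j in atTop, dist (x (k j) ω) p < ε/5 :=
      Metric.tendsto_nhds.1 hk (ε/5) hδ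
    have hev : ∀ᶠ j in atTop, φ ‖x (k j) ω - z‖ ≤ φ (2*(ε/5)) := by
      filter_upwards [h1] with j hj
      have ht : ‖x (k j) ω - z‖ < 2*(ε/5) := by
        have h2 : ‖x (k j) ω - z‖ ≤ ‖x (k j) ω - p‖ + ‖p - z‖ := by
          have := norm_sub_le_norm_sub_add_norm_sub (x (k j) ω) p z
          linarith [this]
        rw [dist_eq_norm] at hj
        linarith
      exact (hφmono (Set.mem_Ici.2 (norm_nonneg _)) (Set.mem_Ici.2 (by linarith)) ht).le
    have hcle : c ≤ φ (2*(ε/5)) := le_of_tendsto hsub hev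
    have hclt : c < φ (3*(ε/5)) := lt_of_le_of_lt hcle
      (hφmono (Set.mem_Ici.2 (by linarith)) (Set.mem_Ici.2 (by linarith)) (by linarith))
    have hev2 : ∀ᶠ n in atTop, φ ‖x n ω - z‖ < φ (3*(ε/5)) :=
      hc.eventually_lt_const hclt
    rcases eventually_atTop.1 hev2 with ⟨N, hN⟩
    refine ⟨N, fun n hn => ?_⟩
    have h4 : ‖x n ω - z‖ < 3*(ε/5) := by
      by_contra hcon
      push_neg at hcon
      have h5 : φ (3*(ε/5)) ≤ φ ‖x n ω - z‖ :=
        hφmono.monotoneOn (Set.mem_Ici.2 (by linarith)) (Set.mem_Ici.2 (norm_nonneg _)) hcon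
      linarith [hN n hn]
    have h6 : dist (x n ω) p ≤ ‖x n ω - z‖ + ‖p - z‖ := by
      rw [dist_eq_norm]
      have := norm_sub_le_norm_sub_add_norm_sub (x n ω) z p
      rw [norm_sub_rev z p] at this
      linarith
    linarith
  -- measurable limit
  obtain ⟨xlim, hxlimmeas, hxlimtend⟩ := measurable_limit_of_tendsto_metrizable_ae
    (fun n => (hxm n).aemeasurable)
    (hlim.mono fun ω hω => by obtain ⟨p, _, hp⟩ := hω; exact ⟨p, hp⟩)
  refine ⟨xlim, hxlimmeas, ?_, hxlimtend⟩
  filter_upwards [hlim, hxlimtend] with ω hω ht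
  obtain ⟨p, hpF, hp⟩ := hω
  rwa [tendsto_nhds_unique ht hp]
end

section
/- Suppose that for every z ∈ F the stochastic quasi-Fejér inequality E[φ(‖x_{n+1} − z‖) | 𝓧_n] + ϑ_n(z) ≤ (1 + χ_n(z)) φ(‖x_n − z‖) + η_n(z) holds P-a.s. for every n ∈ ℕ, that P-almost surely (x_n)_{n∈ℕ} has at least one strong sequential cluster point, and that P-almost surely every weak sequential cluster point of (x_n)_{n∈ℕ} belongs to F. Then (x_n)_{n∈ℕ} converges strongly (in norm) P-almost surely to an F-valued random variable. -/
open MeasureTheory Filter Topology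
open scoped RealInnerProductSpace

lemma tendsto_of_phi_tendsto {φ : ℝ → ℝ} (hφmono : StrictMonoOn φ (Set.Ici (0:ℝ)))
    (hφtop : Tendsto φ atTop atTop) {a : ℕ → ℝ} (ha : ∀ n, 0 ≤ a n) {L : ℝ}
    (h : Tendsto (fun n => φ (a n)) atTop (𝓝 L)) : ∃ l, Tendsto a atTop (𝓝 l) := by
  obtain ⟨M, hM⟩ := eventually_atTop.mp (hφtop.eventually_ge_atTop (L + 1))
  have hub : ∀ᶠ n in atTop, a n ≤ max M 0 := by
    filter_upwards [h.eventually_lt_const (show L < L + 1 by linarith)] with n hn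
    by_contra hcon
    push_neg at hcon
    have h1 : L + 1 ≤ φ (a n) := hM _ (le_of_lt (lt_of_le_of_lt (le_max_left M 0) hcon))
    linarith
  have hbdd_above : IsBoundedUnder (· ≤ ·) atTop a := ⟨max M 0, hub⟩
  have hbdd_below : IsBoundedUnder (· ≥ ·) atTop a := isBoundedUnder_of ⟨0, fun n => ha n⟩
  set l1 := liminf a atTop with hl1
  set l2 := limsup a atTop with hl2
  have h0l1 : 0 ≤ l1 := le_liminf_of_le hbdd_above.isCoboundedUnder_ge (Eventually.of_forall ha)
  have hle : l1 ≤ l2 := liminf_le_limsup hbdd_above hbdd_below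
  have key : l2 ≤ l1 := by
    by_contra hlt
    push_neg at hlt
    set c := l1 + (l2 - l1)/3 with hc
    set d := l1 + 2*(l2 - l1)/3 with hd
    have hl1c : l1 < c := by rw [hc]; linarith
    have hcd : c < d := by rw [hc, hd]; linarith
    have hdl2 : d < l2 := by rw [hd]; linarith
    have hc0 : (0:ℝ) ≤ c := by linarith
    have hd0 : (0:ℝ) ≤ d := by linarith
    have freq1 : ∃ᶠ n in atTop, a n < c :=
      frequently_lt_of_liminf_lt hbdd_above.isCoboundedUnder_ge hl1c
    have freq2 : ∃ᶠ n in atTop, d < a n :=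
      frequently_lt_of_lt_limsup hbdd_below.isCoboundedUnder_le hdl2
    have hLc : L ≤ φ c := by
      by_contra hcon
      push_neg at hcon
      obtain ⟨n, hn1, hn2⟩ := (freq1.and_eventually (h.eventually_const_lt hcon)).exists
      exact absurd (hφmono (ha n) hc0 hn1) (by linarith)
    have hdL : φ d ≤ L := by
      by_contra hcon
      push_neg at hcon
      obtain ⟨n, hn1, hn2⟩ := (freq2.and_eventually (h.eventually_lt_const hcon)).exists
      exact absurd (hφmono hd0 (ha n) hn1) (by linarith)
    have : φ c < φ d := hφmono hc0 hd0 hcd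
    linarith
  exact ⟨l2, tendsto_of_liminf_eq_limsup (le_antisymm hle key) rfl hbdd_above hbdd_below⟩


/-- Stopped process used in the proof of the Robbins–Siegmund lemma. -/
noncomputable def rsStopped {Ω : Type*} (Y B : ℕ → Ω → ℝ) (c : ℝ) : ℕ → Ω → ℝ
  | 0 => Y 0
  | n+1 => fun ω => rsStopped Y B c n ω + (if B (n+1) ω ≤ c then Y (n+1) ω - Y n ω else 0)

/-- The Robbins–Siegmund lemma. -/
lemma robbinsSiegmund {Ω : Type*} {m0 : MeasurableSpace Ω} {μ : Measure Ω}
    [IsProbabilityMeasure μ] (ℱ : Filtration ℕ m0)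
    (V χ η : ℕ → Ω → ℝ)
    (hVmeas : ∀ n, Measurable[ℱ n] (V n))
    (hVint : ∀ n, Integrable (V n) μ)
    (hVnonneg : ∀ n ω, 0 ≤ V n ω)
    (hχmeas : ∀ n, Measurable[ℱ n] (χ n))
    (hηmeas : ∀ n, Measurable[ℱ n] (η n))
    (hχnonneg : ∀ n ω, 0 ≤ χ n ω)
    (hηnonneg : ∀ n ω, 0 ≤ η n ω)
    (hχsum : ∀ᵐ ω ∂μ, Summable fun n => χ n ω)
    (hηsum : ∀ᵐ ω ∂μ, Summable fun n => η n ω)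
    (hineq : ∀ᵐ ω ∂μ, ∀ n, (μ[V (n+1) | ℱ n]) ω ≤ (1 + χ n ω) * V n ω + η n ω) :
    ∀ᵐ ω ∂μ, ∃ L, Tendsto (fun n => V n ω) atTop (𝓝 L) := by
  classical
  -- the compounded factors
  set A : ℕ → Ω → ℝ := fun n ω => ∏ k ∈ Finset.range n, (1 + χ k ω) with hA
  have hAsucc : ∀ n ω, A (n+1) ω = A n ω * (1 + χ n ω) := by
    intro n ω
    show (∏ k ∈ Finset.range (n+1), (1 + χ k ω)) = (∏ k ∈ Finset.range n, (1 + χ k ω)) * _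
    exact Finset.prod_range_succ _ _
  have hA1 : ∀ n ω, 1 ≤ A n ω := by
    intro n ω
    induction n with
    | zero => show (1:ℝ) ≤ ∏ k ∈ Finset.range 0, (1 + χ k ω); simp
    | succ n ih => rw [hAsucc]; nlinarith [hχnonneg n ω]
  have hApos : ∀ n ω, 0 < A n ω := fun n ω => lt_of_lt_of_le one_pos (hA1 n ω)
  have hAmono : ∀ n ω, A n ω ≤ A (n+1) ω := by
    intro n ω
    rw [hAsucc]
    nlinarith [hApos n ω, hχnonneg n ω]
  have hA0 : ∀ ω, A 0 ω = 1 := by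
    intro ω
    show (∏ k ∈ Finset.range 0, (1 + χ k ω)) = 1
    simp
  have hAmeas : ∀ n m, n ≤ m + 1 → Measurable[ℱ m] (A n) := by
    intro n m hnm
    apply Finset.measurable_prod
    intro k hk
    have hk' : k ≤ m := by
      have := Finset.mem_range.mp hk; omega
    exact (measurable_const.add ((hχmeas k).mono (ℱ.mono hk') le_rfl))
  -- normalized quantities
  set ηt : ℕ → Ω → ℝ := fun n ω => η n ω / A (n+1) ω with hηt
  set Vt : ℕ → Ω → ℝ := fun n ω => V n ω / A n ω with hVt
  set B : ℕ → Ω → ℝ := fun n ω => ∑ k ∈ Finset.range n, ηt k ω with hB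
  set Y : ℕ → Ω → ℝ := fun n ω => Vt n ω - B n ω with hY
  have hηtnonneg : ∀ n ω, 0 ≤ ηt n ω := fun n ω =>
    div_nonneg (hηnonneg n ω) (hApos _ ω).le
  have hηtle : ∀ n ω, ηt n ω ≤ η n ω := fun n ω =>
    div_le_self (hηnonneg n ω) (hA1 _ ω)
  have hVtnonneg : ∀ n ω, 0 ≤ Vt n ω := fun n ω =>
    div_nonneg (hVnonneg n ω) (hApos _ ω).le
  have hVtle : ∀ n ω, Vt n ω ≤ V n ω := fun n ω =>
    div_le_self (hVnonneg n ω) (hA1 _ ω)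
  have hηtmeas : ∀ n m, n ≤ m → Measurable[ℱ m] (ηt n) := by
    intro n m hnm
    exact ((hηmeas n).mono (ℱ.mono hnm) le_rfl).div ((hAmeas (n+1) m (by omega)).mono le_rfl le_rfl)
  have hVtmeas : ∀ n, Measurable[ℱ n] (Vt n) := by
    intro n
    exact (hVmeas n).div (hAmeas n n (by omega))
  have hVtint : ∀ n, Integrable (Vt n) μ := by
    intro n
    refine Integrable.mono' (hVint n) ?_ ?_
    · exact (((hVtmeas n).mono (ℱ.le n) le_rfl)).aestronglyMeasurable
    · refine Eventually.of_forall fun ω => ?_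
      rw [Real.norm_eq_abs, abs_of_nonneg (hVtnonneg n ω)]
      exact hVtle n ω
  have hB0 : ∀ ω, B 0 ω = 0 := by
    intro ω
    show (∑ k ∈ Finset.range 0, ηt k ω) = 0
    simp
  have hBsucc : ∀ n ω, B (n+1) ω = B n ω + ηt n ω := by
    intro n ω
    show (∑ k ∈ Finset.range (n+1), ηt k ω) = (∑ k ∈ Finset.range n, ηt k ω) + ηt n ω
    exact Finset.sum_range_succ _ _
  have hBnonneg : ∀ n ω, 0 ≤ B n ω := fun n ω =>
    Finset.sum_nonneg fun k _ => hηtnonneg k ω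
  have hBmono : ∀ n ω, B n ω ≤ B (n+1) ω := by
    intro n ω; rw [hBsucc]; linarith [hηtnonneg n ω]
  have hBmeas : ∀ n m, n ≤ m + 1 → Measurable[ℱ m] (B n) := by
    intro n m hnm
    apply Finset.measurable_sum
    intro k hk
    exact hηtmeas k m (by have := Finset.mem_range.mp hk; omega)
  have hYmeas : ∀ n, Measurable[ℱ n] (Y n) := by
    intro n
    exact (hVtmeas n).sub (hBmeas n n (by omega))
  -- Z n = Y n while B (n+1) ≤ c (for any level c)
  have hZeq : ∀ (c : ℝ) (n : ℕ) (ω : Ω), B (n+1) ω ≤ c → rsStopped Y B c n ω = Y n ω := by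
    intro c n
    induction n with
    | zero => intro ω _; rfl
    | succ n ih =>
      intro ω hω
      have hω' : B (n+1) ω ≤ c := le_trans (hBmono (n+1) ω) hω
      show rsStopped Y B c n ω + (if B (n+1) ω ≤ c then Y (n+1) ω - Y n ω else 0) = Y (n+1) ω
      rw [if_pos hω', ih ω hω']
      ring
  -- the stopped process for level c converges a.s.
  have key : ∀ c : ℕ, ∀ᵐ ω ∂μ, ∃ L, Tendsto (fun n => rsStopped Y B (c:ℝ) n ω) atTop (𝓝 L) := by
    intro c
    set Z : ℕ → Ω → ℝ := rsStopped Y B (c:ℝ) with hZdef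
    have hZ0 : Z 0 = Y 0 := rfl
    have hZsucc : ∀ n ω, Z (n+1) ω = Z n ω +
        (if B (n+1) ω ≤ (c:ℝ) then Y (n+1) ω - Y n ω else 0) :=
      fun n ω => rfl
    have hZmeas : ∀ n, Measurable[ℱ n] (Z n) := by
      intro n
      induction n with
      | zero => exact hYmeas 0
      | succ n ih =>
        have h1 : Measurable[ℱ (n+1)] (Z n) := ih.mono (ℱ.mono (Nat.le_succ n)) le_rfl
        have hset : MeasurableSet[ℱ (n+1)] {ω | B (n+1) ω ≤ (c:ℝ)} :=
          measurableSet_le ((hBmeas (n+1) (n+1) (by omega))) measurable_const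
        exact h1.add (Measurable.ite hset
          (((hYmeas (n+1))).sub ((hYmeas n).mono (ℱ.mono (Nat.le_succ n)) le_rfl))
          measurable_const)
    have hZlb : ∀ n ω, -(c:ℝ) ≤ Z n ω := by
      intro n
      induction n with
      | zero =>
        intro ω
        have h0 : Z 0 ω = Vt 0 ω - B 0 ω := rfl
        rw [h0, hB0]
        have hc0 : (0:ℝ) ≤ (c:ℝ) := Nat.cast_nonneg c
        linarith [hVtnonneg 0 ω]
      | succ n ih =>
        intro ω
        rw [hZsucc]
        by_cases hω : B (n+1) ω ≤ (c:ℝ)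
        · have hzy : Z n ω = Y n ω := hZeq (c:ℝ) n ω hω
          rw [if_pos hω, hzy]
          have h1 := hVtnonneg (n+1) ω
          simp only [hY]
          linarith
        · rw [if_neg hω]
          simpa using ih ω
    have hincr_bound : ∀ n ω,
        |(if B (n+1) ω ≤ (c:ℝ) then Y (n+1) ω - Y n ω else 0)| ≤ V (n+1) ω + V n ω + c := by
      intro n ω
      by_cases hω : B (n+1) ω ≤ (c:ℝ)
      · rw [if_pos hω]
        have e1 : Y (n+1) ω - Y n ω = Vt (n+1) ω - Vt n ω - (B (n+1) ω - B n ω) := by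
          simp only [hY]; ring
        rw [e1]
        have h1 := hVtnonneg (n+1) ω
        have h2 := hVtnonneg n ω
        have h3 := hVtle (n+1) ω
        have h4 := hVtle n ω
        have h5 := hBnonneg n ω
        have h6 := hBmono n ω
        have h7 := hBnonneg (n+1) ω
        rw [abs_le]
        constructor <;> nlinarith [hVnonneg (n+1) ω, hVnonneg n ω]
      · rw [if_neg hω]
        simp only [abs_zero]
        have hc0 : (0:ℝ) ≤ (c:ℝ) := Nat.cast_nonneg c
        nlinarith [hVnonneg (n+1) ω, hVnonneg n ω]
    have hZint : ∀ n, Integrable (Z n) μ := by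
      intro n
      induction n with
      | zero =>
        refine Integrable.mono' (hVint 0) ?_ ?_
        · exact ((hZmeas 0).mono (ℱ.le 0) le_rfl).aestronglyMeasurable
        · refine Eventually.of_forall fun ω => ?_
          have h0 : Z 0 ω = Vt 0 ω - B 0 ω := rfl
          rw [Real.norm_eq_abs, h0, hB0, sub_zero, abs_of_nonneg (hVtnonneg 0 ω)]
          exact hVtle 0 ω
      | succ n ih =>
        have hincr_int : Integrable
            (fun ω => (if B (n+1) ω ≤ (c:ℝ) then Y (n+1) ω - Y n ω else 0)) μ := by
          refine Integrable.mono' (((hVint (n+1)).add (hVint n)).add (integrable_const (c:ℝ)))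
            ?_ (Eventually.of_forall fun ω => ?_)
          · have hm : Measurable[ℱ (n+1)]
                (fun ω => (if B (n+1) ω ≤ (c:ℝ) then Y (n+1) ω - Y n ω else 0)) := by
              have hset : MeasurableSet[ℱ (n+1)] {ω | B (n+1) ω ≤ (c:ℝ)} :=
                measurableSet_le (hBmeas (n+1) (n+1) (by omega)) measurable_const
              exact Measurable.ite hset
                ((hYmeas (n+1)).sub ((hYmeas n).mono (ℱ.mono (Nat.le_succ n)) le_rfl))
                measurable_const
            exact ((hm.mono (ℱ.le (n+1)) le_rfl)).aestronglyMeasurable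
          · rw [Real.norm_eq_abs]
            exact hincr_bound n ω
        have hZr : Z (n+1) = fun ω => Z n ω +
            (if B (n+1) ω ≤ (c:ℝ) then Y (n+1) ω - Y n ω else 0) := rfl
        rw [hZr]
        exact ih.add hincr_int
    -- the supermartingale step
    have hstep : ∀ n, μ[Z (n+1) | ℱ n] ≤ᵐ[μ] Z n := by
      intro n
      set E : Set Ω := {ω | B (n+1) ω ≤ (c:ℝ)} with hEdef
      have hEmeas : MeasurableSet[ℱ n] E :=
        measurableSet_le (hBmeas (n+1) n le_rfl) measurable_const
      set f : Ω → ℝ := E.indicator (fun ω => (A (n+1) ω)⁻¹) with hfdef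
      set g : Ω → ℝ := E.indicator (fun ω => Vt n ω + ηt n ω) with hgdef
      have hfmeas : Measurable[ℱ n] f :=
        ((hAmeas (n+1) n le_rfl).inv).indicator hEmeas
      have hfnonneg : ∀ ω, 0 ≤ f ω := fun ω =>
        Set.indicator_nonneg (fun ω _ => inv_nonneg.mpr (hApos (n+1) ω).le) ω
      have hfle1 : ∀ ω, f ω ≤ 1 := by
        intro ω
        by_cases hω : ω ∈ E
        · rw [hfdef, Set.indicator_of_mem hω]
          exact inv_le_one_of_one_le₀ (hA1 (n+1) ω)
        · rw [hfdef, Set.indicator_of_notMem hω]; norm_num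
      have hgmeas : Measurable[ℱ n] g :=
        ((hVtmeas n).add (hηtmeas n n le_rfl)).indicator hEmeas
      have hgbound : ∀ ω, |g ω| ≤ V n ω + c := by
        intro ω
        by_cases hω : ω ∈ E
        · rw [hgdef, Set.indicator_of_mem hω]
          have h1 : ηt n ω ≤ (c:ℝ) := by
            have := hBsucc n ω
            have h2 := hBnonneg n ω
            have h3 : B (n+1) ω ≤ (c:ℝ) := hω
            linarith
          rw [abs_of_nonneg (by linarith [hVtnonneg n ω, hηtnonneg n ω])]
          linarith [hVtle n ω, hηtnonneg n ω, hVtnonneg n ω]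
        · rw [hgdef, Set.indicator_of_notMem hω, abs_zero]
          have hc0 : (0:ℝ) ≤ (c:ℝ) := Nat.cast_nonneg c
          linarith [hVnonneg n ω]
      have hincr_eq : ∀ ω,
          (if B (n+1) ω ≤ (c:ℝ) then Y (n+1) ω - Y n ω else 0) = f ω * V (n+1) ω - g ω := by
        intro ω
        by_cases hω : ω ∈ E
        · rw [if_pos (show B (n+1) ω ≤ (c:ℝ) from hω), hfdef, hgdef,
            Set.indicator_of_mem hω, Set.indicator_of_mem hω]
          have e1 : Y (n+1) ω - Y n ω = Vt (n+1) ω - Vt n ω - ηt n ω := by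
            simp only [hY]
            rw [hBsucc]
            ring
          rw [e1]
          have e2 : (A (n+1) ω)⁻¹ * V (n+1) ω = Vt (n+1) ω := by
            simp only [hVt]
            rw [inv_mul_eq_div]
          rw [e2]
          ring
        · rw [if_neg (show ¬ B (n+1) ω ≤ (c:ℝ) from hω), hfdef, hgdef,
            Set.indicator_of_notMem hω, Set.indicator_of_notMem hω]
          ring
      have hfV_int : Integrable (f * V (n+1)) μ := by
        refine Integrable.mono' (hVint (n+1)).abs ?_ (Eventually.of_forall fun ω => ?_)
        · exact ((hfmeas.mono (ℱ.le n) le_rfl).mul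
            ((hVmeas (n+1)).mono (ℱ.le (n+1)) le_rfl)).aestronglyMeasurable
        · simp only [Pi.mul_apply, Real.norm_eq_abs, abs_mul]
          have := abs_of_nonneg (hfnonneg ω)
          calc |f ω| * |V (n+1) ω| ≤ 1 * |V (n+1) ω| := by
                apply mul_le_mul_of_nonneg_right _ (abs_nonneg _)
                rw [this]; exact hfle1 ω
            _ = |V (n+1) ω| := one_mul _
      have hg_int : Integrable g μ := by
        refine Integrable.mono' ((hVint n).add (integrable_const (c:ℝ))) ?_
          (Eventually.of_forall fun ω => ?_)
        · exact (hgmeas.mono (ℱ.le n) le_rfl).aestronglyMeasurable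
        · rw [Real.norm_eq_abs]
          exact hgbound ω
      have hce_mul : μ[f * V (n+1) | ℱ n] =ᵐ[μ] f * μ[V (n+1) | ℱ n] :=
        condExp_mul_of_stronglyMeasurable_left hfmeas.stronglyMeasurable hfV_int (hVint (n+1))
      have hce_g : μ[g | ℱ n] = g :=
        condExp_of_stronglyMeasurable (ℱ.le n) hgmeas.stronglyMeasurable hg_int
      have hce_Z : μ[Z n | ℱ n] = Z n :=
        condExp_of_stronglyMeasurable (ℱ.le n) (hZmeas n).stronglyMeasurable (hZint n)
      have hZdecomp : Z (n+1) = Z n + (f * V (n+1) - g) := by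
        funext ω
        rw [hZsucc, hincr_eq ω]
        rfl
      have hce1 : μ[Z (n+1) | ℱ n] =ᵐ[μ] Z n + (f * μ[V (n+1) | ℱ n] - g) := by
        rw [hZdecomp]
        refine (condExp_add (hZint n) (hfV_int.sub hg_int) _).trans ?_
        rw [hce_Z]
        refine EventuallyEq.add (EventuallyEq.refl _ _) ?_
        refine (condExp_sub hfV_int hg_int _).trans ?_
        rw [hce_g]
        exact EventuallyEq.sub hce_mul (EventuallyEq.refl _ _)
      refine hce1.trans_le ?_
      filter_upwards [hineq] with ω hω
      simp only [Pi.add_apply, Pi.sub_apply, Pi.mul_apply]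
      by_cases hmem : ω ∈ E
      · have hf1 : f ω = (A (n+1) ω)⁻¹ := by rw [hfdef, Set.indicator_of_mem hmem]
        have hg1 : g ω = Vt n ω + ηt n ω := by rw [hgdef, Set.indicator_of_mem hmem]
        rw [hf1, hg1]
        have h1 : (A (n+1) ω)⁻¹ * (μ[V (n+1) | ℱ n]) ω ≤
            (A (n+1) ω)⁻¹ * ((1 + χ n ω) * V n ω + η n ω) :=
          mul_le_mul_of_nonneg_left (hω n) (inv_nonneg.mpr (hApos (n+1) ω).le)
        have h2 : (A (n+1) ω)⁻¹ * ((1 + χ n ω) * V n ω + η n ω) = Vt n ω + ηt n ω := by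
          simp only [hVt, hηt]
          rw [hAsucc]
          have ha := (hApos n ω).ne'
          have hb : (1 + χ n ω) ≠ 0 := by nlinarith [hχnonneg n ω]
          field_simp
        linarith
      · have hf1 : f ω = 0 := by rw [hfdef, Set.indicator_of_notMem hmem]
        have hg1 : g ω = 0 := by rw [hgdef, Set.indicator_of_notMem hmem]
        rw [hf1, hg1]
        simp
    have hZsuper : Supermartingale Z ℱ μ :=
      supermartingale_nat (fun n => (hZmeas n).stronglyMeasurable) hZint hstep
    -- L¹ boundedness
    have hmean : ∀ n, ∫ ω, Z n ω ∂μ ≤ ∫ ω, V 0 ω ∂μ := by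
      intro n
      have h1 : μ[Z n | ℱ 0] ≤ᵐ[μ] Z 0 := hZsuper.2.1 0 n (Nat.zero_le n)
      have h2 : ∫ ω, (μ[Z n | ℱ 0]) ω ∂μ = ∫ ω, Z n ω ∂μ := integral_condExp (ℱ.le 0)
      have h3 := integral_mono_ae integrable_condExp (hZint 0) h1
      have h4 : ∫ ω, Z 0 ω ∂μ ≤ ∫ ω, V 0 ω ∂μ := by
        refine integral_mono (hZint 0) (hVint 0) fun ω => ?_
        have h0 : Z 0 ω = Vt 0 ω - B 0 ω := rfl
        rw [h0, hB0, sub_zero]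
        exact hVtle 0 ω
      linarith
    set R : NNReal := (∫ ω, V 0 ω ∂μ + 2*c).toNNReal with hRdef
    have hbdd : ∀ n, eLpNorm (Z n) 1 μ ≤ (R : ENNReal) := by
      intro n
      have hc0 : (0:ℝ) ≤ (c:ℝ) := Nat.cast_nonneg c
      have habs : ∀ ω, ‖Z n ω‖ ≤ Z n ω + 2*c := by
        intro ω
        rw [Real.norm_eq_abs]
        rcases abs_cases (Z n ω) with ⟨h, _⟩ | ⟨h, _⟩ <;> [linarith; linarith [hZlb n ω]]
      have hnn : 0 ≤ᵐ[μ] fun ω => Z n ω + 2*c := by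
        refine Eventually.of_forall fun ω => ?_
        have := hZlb n ω
        simp only [Pi.zero_apply]
        linarith
      calc eLpNorm (Z n) 1 μ = ∫⁻ ω, ENNReal.ofReal ‖Z n ω‖ ∂μ := by
            rw [eLpNorm_one_eq_lintegral_enorm]
            refine lintegral_congr fun ω => ?_
            rw [ofReal_norm]
        _ ≤ ∫⁻ ω, ENNReal.ofReal (Z n ω + 2*c) ∂μ :=
            lintegral_mono fun ω => ENNReal.ofReal_le_ofReal (habs ω)
        _ = ENNReal.ofReal (∫ ω, (Z n ω + 2*c) ∂μ) :=
            (ofReal_integral_eq_lintegral_ofReal ((hZint n).add (integrable_const _)) hnn).symm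
        _ ≤ ENNReal.ofReal (∫ ω, V 0 ω ∂μ + 2*c) := by
            apply ENNReal.ofReal_le_ofReal
            rw [integral_add (hZint n) (integrable_const _), integral_const, probReal_univ]
            simp only [ENNReal.toReal_one, one_smul, smul_eq_mul]
            linarith [hmean n]
        _ = (R : ENNReal) := by rw [hRdef, ENNReal.ofReal]
    have hneg : Submartingale (-Z) ℱ μ := hZsuper.neg
    have hbdd' : ∀ n, eLpNorm ((-Z) n) 1 μ ≤ (R : ENNReal) := by
      intro n
      have : (-Z) n = -(Z n) := rfl
      rw [this, eLpNorm_neg]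
      exact hbdd n
    filter_upwards [hneg.exists_ae_tendsto_of_bdd hbdd'] with ω ⟨L, hL⟩
    refine ⟨-L, ?_⟩
    have := hL.neg
    exact this.congr fun n => by simp
  -- conclusion
  filter_upwards [hχsum, hηsum, ae_all_iff.2 key] with ω hχs hηs hZc
  have hηts : Summable (fun n => ηt n ω) :=
    Summable.of_nonneg_of_le (fun n => hηtnonneg n ω) (fun n => hηtle n ω) hηs
  set S := ∑' n, ηt n ω with hSdef
  have hBle : ∀ n, B n ω ≤ S := by
    intro n
    exact hηts.sum_le_tsum (Finset.range n) (fun k _ => hηtnonneg k ω)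
  obtain ⟨c, hc⟩ := exists_nat_ge S
  obtain ⟨L, hL⟩ := hZc c
  have hYconv : Tendsto (fun n => Y n ω) atTop (𝓝 L) :=
    hL.congr fun n => hZeq (c:ℝ) n ω (le_trans (hBle (n+1)) hc)
  have hBconv : Tendsto (fun n => B n ω) atTop (𝓝 S) := hηts.hasSum.tendsto_sum_nat
  have hVtconv : Tendsto (fun n => Vt n ω) atTop (𝓝 (L + S)) :=
    (hYconv.add hBconv).congr fun n => by simp only [hY]; ring
  have hAmono' : Monotone (fun n => A n ω) := monotone_nat_of_le_succ (fun n => hAmono n ω)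
  have hAbdd : BddAbove (Set.range fun n => A n ω) := by
    refine ⟨Real.exp (∑' k, χ k ω), ?_⟩
    rintro _ ⟨n, rfl⟩
    have h1 : A n ω ≤ Real.exp (∑ k ∈ Finset.range n, χ k ω) := by
      rw [Real.exp_sum]
      refine Finset.prod_le_prod (fun k _ => by linarith [hχnonneg k ω]) fun k _ => ?_
      linarith [Real.add_one_le_exp (χ k ω)]
    refine h1.trans (Real.exp_le_exp.mpr ?_)
    exact hχs.sum_le_tsum (Finset.range n) (fun k _ => hχnonneg k ω)
  have hAconv : Tendsto (fun n => A n ω) atTop (𝓝 (⨆ n, A n ω)) :=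
    tendsto_atTop_ciSup hAmono' hAbdd
  refine ⟨(L + S) * (⨆ n, A n ω), ?_⟩
  refine (hVtconv.mul hAconv).congr fun n => ?_
  show Vt n ω * A n ω = V n ω
  simp only [hVt]
  exact div_mul_cancel₀ _ (hApos n ω).ne'

theorem stochastic_quasiFejer_strong_convergence_of_weak_and_strong
    {H : Type*} [NormedAddCommGroup H] [InnerProductSpace ℝ H] [CompleteSpace H]
    [SecondCountableTopology H] [MeasurableSpace H] [BorelSpace H]
    {Ω : Type*} [MeasurableSpace Ω] (P : Measure Ω) [IsProbabilityMeasure P]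
    (F : Set H) (hFne : F.Nonempty) (hFcl : IsClosed F)
    (φ : ℝ → ℝ) (hφmono : StrictMonoOn φ (Set.Ici (0 : ℝ)))
    (hφnonneg : ∀ t, 0 ≤ t → 0 ≤ φ t) (hφtop : Tendsto φ atTop atTop)
    (x : ℕ → Ω → H) (hxm : ∀ n, Measurable (x n))
    (χ ϑ η : H → ℕ → Ω → ℝ)
    (hχnonneg : ∀ z ∈ F, ∀ n, ∀ ω, 0 ≤ χ z n ω)
    (hϑnonneg : ∀ z ∈ F, ∀ n, ∀ ω, 0 ≤ ϑ z n ω)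
    (hηnonneg : ∀ z ∈ F, ∀ n, ∀ ω, 0 ≤ η z n ω)
    (hχmeas : ∀ z ∈ F, ∀ n, Measurable[sigmaFinSeq x n] (χ z n))
    (hϑmeas : ∀ z ∈ F, ∀ n, Measurable[sigmaFinSeq x n] (ϑ z n))
    (hηmeas : ∀ z ∈ F, ∀ n, Measurable[sigmaFinSeq x n] (η z n))
    (hχsum : ∀ z ∈ F, ∀ᵐ ω ∂P, Summable fun n => χ z n ω)
    (hηsum : ∀ z ∈ F, ∀ᵐ ω ∂P, Summable fun n => η z n ω)
    (hint : ∀ z ∈ F, ∀ n, Integrable (fun ω => φ ‖x n ω - z‖) P)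
    (hineq : ∀ z ∈ F, ∀ᵐ ω ∂P, ∀ n,
      (P[fun ω' => φ ‖x (n + 1) ω' - z‖ | sigmaFinSeq x n]) ω + ϑ z n ω ≤
        (1 + χ z n ω) * φ ‖x n ω - z‖ + η z n ω)
    (hstrong : ∀ᵐ ω ∂P, ∃ p : H, IsStrongClusterPt p (fun n => x n ω))
    (hweak : ∀ᵐ ω ∂P, ∀ p : H, IsWeakClusterPt p (fun n => x n ω) → p ∈ F) :
    ∃ xlim : Ω → H, Measurable xlim ∧ (∀ᵐ ω ∂P, xlim ω ∈ F) ∧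
      ∀ᵐ ω ∂P, Tendsto (fun n => x n ω) atTop (𝓝 (xlim ω)) := by
  classical
  -- the filtration generated by the process
  have hle : ∀ n, sigmaFinSeq x n ≤ ‹MeasurableSpace Ω› := fun n =>
    iSup₂_le fun i _ => (hxm i).comap_le
  set ℱ : Filtration ℕ ‹MeasurableSpace Ω› :=
    ⟨fun n => sigmaFinSeq x n, fun i j hij =>
      biSup_mono fun k (hk : k ∈ Set.Iic i) => le_trans hk hij, hle⟩ with hℱ
  have hxFn : ∀ n, Measurable[sigmaFinSeq x n] (x n) := fun n =>
    measurable_iff_comap_le.mpr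
      (le_iSup₂ (f := fun i (_ : i ∈ Set.Iic n) => MeasurableSpace.comap (x i) ‹_›) n
        Set.self_mem_Iic)
  -- a monotone extension of φ
  set ψ : ℝ → ℝ := fun t => φ (max t 0) with hψ
  have hψmono : Monotone ψ := fun s t hst =>
    hφmono.monotoneOn (le_max_right s 0) (le_max_right t 0) (max_le_max hst le_rfl)
  have hψmeas : Measurable ψ := hψmono.measurable
  have hψeq : ∀ v : H, ψ ‖v‖ = φ ‖v‖ := fun v => by
    rw [hψ]; simp only [max_eq_left (norm_nonneg v)]
  -- a countable dense subset of F
  obtain ⟨D0, hD0c, hD0d⟩ := TopologicalSpace.exists_countable_dense (↥F)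
  set D : Set H := Subtype.val '' D0 with hD
  have hDc : D.Countable := (hD0c.image _)
  have hDF : D ⊆ F := by rintro _ ⟨d, _, rfl⟩; exact d.2
  have hDdense : ∀ z ∈ F, ∀ ε > (0:ℝ), ∃ d ∈ D, ‖z - d‖ < ε := by
    intro z hz ε hε
    obtain ⟨d, hdD0, hd⟩ := hD0d.exists_dist_lt (⟨z, hz⟩ : F) hε
    refine ⟨d.val, ⟨d, hdD0, rfl⟩, ?_⟩
    rw [← dist_eq_norm]
    rwa [Subtype.dist_eq] at hd
  -- Robbins–Siegmund for each z in D
  have hRS : ∀ z ∈ D, ∀ᵐ ω ∂P, ∃ L, Tendsto (fun n => φ ‖x n ω - z‖) atTop (𝓝 L) := by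
    intro z hzD
    have hzF := hDF hzD
    have hVm : ∀ n, Measurable[ℱ n] (fun ω => φ ‖x n ω - z‖) := by
      intro n
      have h1 : Measurable[ℱ n] (fun ω => ‖x n ω - z‖) :=
        ((measurable_id.sub measurable_const).norm).comp (hxFn n)
      have h2 : Measurable[ℱ n] (fun ω => ψ ‖x n ω - z‖) := hψmeas.comp h1
      have h3 : (fun ω => φ ‖x n ω - z‖) = (fun ω => ψ ‖x n ω - z‖) := by
        funext ω; rw [hψeq]
      rw [h3]; exact h2
    exact robbinsSiegmund ℱ (fun n ω => φ ‖x n ω - z‖) (χ z) (η z)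
      hVm (hint z hzF) (fun n ω => hφnonneg _ (norm_nonneg _))
      (hχmeas z hzF) (hηmeas z hzF) (fun n ω => hχnonneg z hzF n ω)
      (fun n ω => hηnonneg z hzF n ω) (hχsum z hzF) (hηsum z hzF)
      ((hineq z hzF).mono fun ω hω n => by
        have h := hω n
        have h2 := hϑnonneg z hzF n ω
        linarith)
  have hconv := (ae_ball_iff hDc).mpr hRS
  -- a.s. the sequence converges to a point of F
  have hmain : ∀ᵐ ω ∂P, ∃ p ∈ F, Tendsto (fun n => x n ω) atTop (𝓝 p) := by
    filter_upwards [hconv, hstrong, hweak] with ω hconvω hstrongω hweakω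
    obtain ⟨p, k, hk, hkp⟩ := hstrongω
    have hpF : p ∈ F := hweakω p ⟨k, hk, fun y => hkp.inner tendsto_const_nhds⟩
    refine ⟨p, hpF, ?_⟩
    have hdist : ∀ z ∈ D, Tendsto (fun n => ‖x n ω - z‖) atTop (𝓝 ‖p - z‖) := by
      intro z hz
      obtain ⟨L, hL⟩ := hconvω z hz
      obtain ⟨l, hl⟩ := tendsto_of_phi_tendsto hφmono hφtop (fun n => norm_nonneg _) hL
      have h1 : Tendsto (fun j => ‖x (k j) ω - z‖) atTop (𝓝 ‖p - z‖) :=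
        ((hkp.sub_const z).norm)
      have h2 : Tendsto (fun j => ‖x (k j) ω - z‖) atTop (𝓝 l) :=
        hl.comp hk.tendsto_atTop
      rwa [tendsto_nhds_unique h2 h1] at hl
    refine Metric.tendsto_atTop.mpr fun ε hε => ?_
    obtain ⟨d, hdD, hd⟩ := hDdense p hpF (ε/3) (by linarith)
    have h3 := hdist d hdD
    have h4 : ‖p - d‖ < 2*ε/3 := by linarith
    obtain ⟨N, hN⟩ := eventually_atTop.mp (h3.eventually_lt_const h4)
    refine ⟨N, fun n hn => ?_⟩
    have h5 := hN n hn
    rw [dist_eq_norm]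
    have h6 : ‖x n ω - p‖ ≤ ‖x n ω - d‖ + ‖d - p‖ := by
      calc ‖x n ω - p‖ = ‖(x n ω - d) + (d - p)‖ := by rw [sub_add_sub_cancel]
        _ ≤ ‖x n ω - d‖ + ‖d - p‖ := norm_add_le _ _
    have h7 : ‖d - p‖ = ‖p - d‖ := norm_sub_rev _ _
    calc ‖x n ω - p‖ ≤ ‖x n ω - d‖ + ‖d - p‖ := h6
      _ < 2*ε/3 + ε/3 := by rw [h7]; exact add_lt_add h5 hd
      _ = ε := by ring
  -- extract a measurable limit
  obtain ⟨xlim, hxlimm, hxlimt⟩ := measurable_limit_of_tendsto_metrizable_ae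
    (fun n => (hxm n).aemeasurable)
    (hmain.mono fun ω ⟨p, _, h⟩ => ⟨p, h⟩)
  refine ⟨xlim, hxlimm, ?_, hxlimt⟩
  filter_upwards [hmain, hxlimt] with ω hω ht
  obtain ⟨p, hpF, hp⟩ := hω
  rwa [tendsto_nhds_unique ht hp]
end
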